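/- arXiv:math/0404054 — 6 statements merged into one kernel-verified Lean document; each statement's English description precedes it below -/
import Mathlib

section
/- Let (X_n) be a transient Markov chain on a countable state space Y with initial state ρ, Green function G(x,y) = Σ_n P_x[X_n = y], and Martin kernel K(x,y) = G(x,y)/G(ρ,y). For any subset Λ ⊆ Y, the probability that the chain ever visits Λ is at most Cap_K(Λ), the capacity of Λ with respect to the kernel K. -/
open MeasureTheory ENNReal
open scoped Classical

section Aux
variable {Y : Type*} [Countable Y] [MeasurableSpace Y] [MeasurableSingletonClass Y]
variable {Y : Type*} [Countable Y] [MeasurableSpace Y] [MeasurableSingletonClass Y]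

lemma measAll (s : Set Y) : MeasurableSet s := s.to_countable.measurableSet

lemma measCoordSet (m : ℕ) (s : Set Y) : MeasurableSet {ω : ℕ → Y | ω m ∈ s} :=
  (measurable_pi_apply m) (measAll s)

lemma measCoord (m : ℕ) (z : Y) : MeasurableSet {ω : ℕ → Y | ω m = z} :=
  measCoordSet m {z}

lemma partition_coord (P : Measure (ℕ → Y)) (T : Set (ℕ → Y)) (hT : MeasurableSet T) (m : ℕ) :
    P T = ∑' z : Y, P (T ∩ {ω | ω m = z}) := by
  have h1 : T = ⋃ z : Y, T ∩ {ω | ω m = z} := by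
    ext ω
    simp only [Set.mem_iUnion, Set.mem_inter_iff, Set.mem_setOf_eq]
    exact ⟨fun h => ⟨ω m, h, rfl⟩, fun ⟨z, h, _⟩ => h⟩
  have hd : Pairwise (Function.onFun Disjoint fun z : Y => T ∩ {ω | ω m = z}) := by
    intro a b hab
    simp only [Function.onFun]
    apply Set.disjoint_left.mpr
    rintro ω ⟨-, h1⟩ ⟨-, h2⟩
    exact hab (h1.symm.trans h2)
  conv_lhs => rw [h1]
  exact measure_iUnion hd fun z => hT.inter (measCoord m z)

def cylf (n : ℕ) (v : Fin (n+1) → Y) : Set (ℕ → Y) :=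
  {ω | ∀ (i : ℕ) (h : i ≤ n), ω i = v ⟨i, Nat.lt_succ_of_le h⟩}

lemma measCylf (n : ℕ) (v : Fin (n+1) → Y) : MeasurableSet (cylf n v) := by
  have h : cylf n v = ⋂ (i : ℕ) (h : i ≤ n), {ω : ℕ → Y | ω i = v ⟨i, Nat.lt_succ_of_le h⟩} := by
    ext ω; simp [cylf, Set.mem_iInter]
  rw [h]
  exact MeasurableSet.iInter fun i => MeasurableSet.iInter fun h => measCoord i _

lemma partition_cylf (P : Measure (ℕ → Y)) (T : Set (ℕ → Y)) (hT : MeasurableSet T) (n : ℕ) :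
    P T = ∑' v : Fin (n+1) → Y, P (T ∩ cylf n v) := by
  have h1 : T = ⋃ v : Fin (n+1) → Y, T ∩ cylf n v := by
    ext ω
    simp only [Set.mem_iUnion, Set.mem_inter_iff]
    constructor
    · intro h
      exact ⟨fun i => ω i, h, fun i hi => rfl⟩
    · rintro ⟨v, h, -⟩; exact h
  have hd : Pairwise (Function.onFun Disjoint fun v : Fin (n+1) → Y => T ∩ cylf n v) := by
    intro a b hab
    simp only [Function.onFun]
    apply Set.disjoint_left.mpr
    rintro ω ⟨-, h1⟩ ⟨-, h2⟩
    apply hab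
    funext i
    have h3 := (h1 i.1 (Nat.lt_succ_iff.mp i.2)).symm.trans (h2 i.1 (Nat.lt_succ_iff.mp i.2))
    simpa using h3
  conv_lhs => rw [h1]
  exact measure_iUnion hd fun v => hT.inter (measCylf n v)

def Det (n : ℕ) (S : Set (ℕ → Y)) : Prop :=
  ∀ ω ω' : ℕ → Y, (∀ i ≤ n, ω i = ω' i) → ω ∈ S → ω' ∈ S


lemma one_step (P : Y → Measure (ℕ → Y)) (p : Y → Y → ℝ≥0∞)
    (hcyl : ∀ (x : Y) (f : ℕ → Y) (n : ℕ),
      P x {ω | ∀ i ≤ n, ω i = f i} =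
        (if f 0 = x then 1 else 0) * ∏ i ∈ Finset.range n, p (f i) (f (i + 1)))
    (x z z' : Y) (n : ℕ) (S : Set (ℕ → Y)) (hS : MeasurableSet S)
    (hdet : Det n S) (hsub : S ⊆ {ω | ω n = z}) :
    P x (S ∩ {ω | ω (n+1) = z'}) = P x S * p z z' := by
  rw [partition_cylf (P x) _ (hS.inter (measCoord (n+1) z')) n,
      partition_cylf (P x) S hS n, ← ENNReal.tsum_mul_right]
  congr 1
  funext v
  have hassoc : (S ∩ {ω | ω (n+1) = z'}) ∩ cylf n v
      = (S ∩ cylf n v) ∩ {ω | ω (n+1) = z'} := by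
    ext ω; simp only [Set.mem_inter_iff, Set.mem_setOf_eq]; tauto
  rw [hassoc]
  by_cases hne : (S ∩ cylf n v).Nonempty
  · obtain ⟨ω0, hω0S, hω0c⟩ := hne
    have hscyl : S ∩ cylf n v = cylf n v := by
      apply Set.eq_of_subset_of_subset Set.inter_subset_right
      intro ω hω
      exact ⟨hdet ω0 ω (fun i hi => (hω0c i hi).trans (hω i hi).symm) hω0S, hω⟩
    have hvz : v ⟨n, Nat.lt_succ_self n⟩ = z := by
      have h1 := hsub hω0S
      have h2 := hω0c n le_rfl
      rw [← h2]; exact h1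
    set f : ℕ → Y := fun i => if h : i ≤ n then v ⟨i, Nat.lt_succ_of_le h⟩ else z' with hf
    have hfc : ∀ i (h : i ≤ n), f i = v ⟨i, Nat.lt_succ_of_le h⟩ := by
      intro i h; simp [hf, h]
    have hfn1 : f (n+1) = z' := by simp [hf]
    have hcyl1 : cylf n v = {ω | ∀ i ≤ n, ω i = f i} := by
      ext ω
      constructor
      · intro h i hi; rw [hfc i hi]; exact h i hi
      · intro h i hi; rw [← hfc i hi]; exact h i hi
    have hcyl2 : cylf n v ∩ {ω | ω (n+1) = z'} = {ω | ∀ i ≤ n + 1, ω i = f i} := by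
      ext ω
      simp only [Set.mem_inter_iff, Set.mem_setOf_eq]
      constructor
      · rintro ⟨h1, h2⟩ i hi
        rcases Nat.lt_succ_iff_lt_or_eq.mp (Nat.lt_succ_of_le hi) with h | h
        · have hi' : i ≤ n := Nat.lt_succ_iff.mp h
          rw [hfc i hi']; exact h1 i hi'
        · subst h; rw [hfn1]; exact h2
      · intro h
        constructor
        · intro i hi; rw [← hfc i hi]; exact h i (le_trans hi (Nat.le_succ n))
        · rw [← hfn1]; exact h (n+1) le_rfl
    rw [hscyl, hcyl2, hcyl1, hcyl x f (n+1), hcyl x f n, Finset.prod_range_succ, ← mul_assoc]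
    congr 1
    rw [hfc n le_rfl, hvz, hfn1]
  · rw [Set.not_nonempty_iff_eq_empty] at hne
    rw [hne]
    simp

lemma markov (P : Y → Measure (ℕ → Y)) (p : Y → Y → ℝ≥0∞)
    (hcyl : ∀ (x : Y) (f : ℕ → Y) (n : ℕ),
      P x {ω | ∀ i ≤ n, ω i = f i} =
        (if f 0 = x then 1 else 0) * ∏ i ∈ Finset.range n, p (f i) (f (i + 1)))
    (y : Y) :
    ∀ (k n : ℕ) (x z : Y) (S : Set (ℕ → Y)), MeasurableSet S → Det n S →
      S ⊆ {ω | ω n = z} →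
      P x (S ∩ {ω | ω (n + k) = y}) = P x S * P z {ω | ω k = y} := by
  intro k
  induction k with
  | zero =>
    intro n x z S hS hdet hsub
    have h0 : ∀ w : Y, P w {ω | ω 0 = y} = if y = w then 1 else 0 := by
      intro w
      have hset : {ω : ℕ → Y | ω 0 = y} = {ω : ℕ → Y | ∀ i ≤ 0, ω i = (fun _ => y) i} := by
        ext ω
        simp only [Set.mem_setOf_eq]
        exact ⟨fun h i hi => by rw [Nat.le_zero.mp hi]; exact h, fun h => h 0 le_rfl⟩
      rw [hset, hcyl w (fun _ => y) 0]
      simp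
    by_cases hzy : z = y
    · subst hzy
      have h1 : S ∩ {ω | ω (n+0) = z} = S := by
        apply Set.inter_eq_self_of_subset_left
        intro ω hω
        simpa using hsub hω
      rw [h1, h0 z, if_pos rfl, mul_one]
    · have h1 : S ∩ {ω | ω (n+0) = y} = ∅ := by
        ext ω
        simp only [Set.mem_inter_iff, Set.mem_setOf_eq, Set.mem_empty_iff_false,
          iff_false, not_and]
        intro hin h0'
        exact hzy ((hsub hin).symm.trans (by simpa using h0'))
      rw [h1, h0 z, if_neg (fun h => hzy h.symm), mul_zero, measure_empty]
  | succ k ih =>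
    intro n x z S hS hdet hsub
    have hnk : n + (k+1) = (n+1) + k := by omega
    have hmeasnk : MeasurableSet (S ∩ {ω : ℕ → Y | ω ((n+1) + k) = y}) :=
      hS.inter (measCoord _ y)
    have key1 : P x (S ∩ {ω | ω (n + (k+1)) = y})
        = ∑' z', P x ((S ∩ {ω | ω (n+1) = z'}) ∩ {ω | ω ((n+1) + k) = y}) := by
      rw [hnk, partition_coord (P x) _ hmeasnk (n+1)]
      congr 1
      funext z'
      congr 1
      ext ω
      simp only [Set.mem_inter_iff, Set.mem_setOf_eq]
      tauto
    have hdet' : ∀ z' : Y, Det (n+1) (S ∩ {ω : ℕ → Y | ω (n+1) = z'}) := by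
      intro z' ω ω' hag ⟨h1, h2⟩
      refine ⟨hdet ω ω' (fun i hi => hag i (le_trans hi (Nat.le_succ n))) h1, ?_⟩
      show ω' (n+1) = z'
      rw [← hag (n+1) le_rfl]; exact h2
    have key2 : ∀ z' : Y,
        P x ((S ∩ {ω | ω (n+1) = z'}) ∩ {ω | ω ((n+1) + k) = y})
          = (P x S * p z z') * P z' {ω | ω k = y} := by
      intro z'
      rw [ih (n+1) x z' (S ∩ {ω | ω (n+1) = z'}) (hS.inter (measCoord (n+1) z'))
        (hdet' z') Set.inter_subset_right,
        one_step P p hcyl x z z' n S hS hdet hsub]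
    have hPz1 : ∀ z' : Y, P z {ω | ω 1 = z'} = p z z' := by
      intro z'
      rw [partition_coord (P z) _ (measCoord 1 z') 0]
      have hterm : ∀ a : Y, P z ({ω : ℕ → Y | ω 1 = z'} ∩ {ω | ω 0 = a})
          = if a = z then p a z' else 0 := by
        intro a
        set f : ℕ → Y := fun i => if i = 0 then a else z' with hf
        have hset : {ω : ℕ → Y | ω 1 = z'} ∩ {ω | ω 0 = a}
            = {ω : ℕ → Y | ∀ i ≤ 1, ω i = f i} := by
          ext ω
          simp only [Set.mem_inter_iff, Set.mem_setOf_eq]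
          constructor
          · rintro ⟨h1, h2⟩ i hi
            interval_cases i
            · simpa [hf] using h2
            · simpa [hf] using h1
          · intro h
            exact ⟨by simpa [hf] using h 1 le_rfl, by simpa [hf] using h 0 (by norm_num)⟩
        rw [hset, hcyl z f 1, Finset.prod_range_one]
        simp [hf]
      calc ∑' a, P z ({ω : ℕ → Y | ω 1 = z'} ∩ {ω | ω 0 = a})
          = ∑' a, if a = z then p a z' else 0 := by
            congr 1; funext a; exact hterm a
        _ = p z z' := by rw [tsum_eq_single z (fun b hb => if_neg hb)]; simp
    have hcha : P z {ω | ω (k+1) = y} = ∑' z', p z z' * P z' {ω | ω k = y} := by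
      have h0 : P z {ω | ω (k+1) = y}
          = ∑' z', P z (({ω : ℕ → Y | ω 1 = z'}) ∩ {ω | ω (1 + k) = y}) := by
        have hk1 : (k+1 : ℕ) = 1 + k := by omega
        rw [hk1, partition_coord (P z) _ (measCoord (1+k) y) 1]
        congr 1
        funext z'
        congr 1
        ext ω
        simp only [Set.mem_inter_iff, Set.mem_setOf_eq]
        tauto
      rw [h0]
      congr 1
      funext z'
      have hdet1 : Det 1 {ω : ℕ → Y | ω 1 = z'} := by
        intro ω ω' hag h1
        show ω' 1 = z'
        rw [← hag 1 le_rfl]; exact h1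
      rw [ih 1 z z' {ω | ω 1 = z'} (measCoord 1 z') hdet1 (fun ω h => h), hPz1 z']
    rw [key1, hcha]
    calc ∑' z', P x ((S ∩ {ω | ω (n+1) = z'}) ∩ {ω | ω ((n+1) + k) = y})
        = ∑' z', P x S * (p z z' * P z' {ω | ω k = y}) := by
          congr 1; funext z'; rw [key2 z', mul_assoc]
      _ = P x S * ∑' z', p z z' * P z' {ω | ω k = y} := ENNReal.tsum_mul_left

end Aux

/-- Capacity of a set `Λ` in a countable space with respect to kernel `K`:
the reciprocal of the infimum of `K`-energies over probability measures on `Λ`. -/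
noncomputable def capK {Y : Type*} (K : Y → Y → ℝ≥0∞) (Λ : Set Y) : ℝ≥0∞ :=
  (⨅ μ : {μ : Y → ℝ≥0∞ // (∑' y, μ y) = 1 ∧ ∀ y ∉ Λ, μ y = 0},
    ∑' x, ∑' y, K x y * μ.1 x * μ.1 y)⁻¹

/-- Upper bound: the probability that a transient Markov chain started at `ρ`
ever visits `Λ` is at most the Martin capacity of `Λ`. -/
theorem stmt0
    (Y : Type*) [Countable Y] [MeasurableSpace Y] [MeasurableSingletonClass Y]
    (p : Y → Y → ℝ≥0∞) (hp : ∀ x, ∑' y, p x y = 1)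
    (P : Y → Measure (ℕ → Y)) (hprob : ∀ x, IsProbabilityMeasure (P x))
    (hcyl : ∀ (x : Y) (f : ℕ → Y) (n : ℕ),
      P x {ω | ∀ i ≤ n, ω i = f i} =
        (if f 0 = x then 1 else 0) * ∏ i ∈ Finset.range n, p (f i) (f (i + 1)))
    (ρ : Y)
    (G : Y → Y → ℝ≥0∞) (hGdef : ∀ x y, G x y = ∑' n : ℕ, P x {ω | ω n = y})
    (hGfin : ∀ x y, G x y < ∞)
    (K : Y → Y → ℝ≥0∞) (hK : ∀ x y, K x y = G x y / G ρ y)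
    (Λ : Set Y) :
    P ρ {ω | ∃ n, ω n ∈ Λ} ≤ capK K Λ := by
  classical
  set E : ℕ × Y → Set (ℕ → Y) :=
    fun q => {ω | ω q.1 = q.2 ∧ q.2 ∈ Λ ∧ ∀ m < q.1, ω m ∉ Λ} with hE
  have hEmeas : ∀ q, MeasurableSet (E q) := by
    rintro ⟨n, x⟩
    have h : E (n, x) = {ω : ℕ → Y | ω n = x}
        ∩ ({ω : ℕ → Y | x ∈ Λ} ∩ ⋂ (m : ℕ) (_ : m < n), {ω : ℕ → Y | ω m ∈ Λᶜ}) := by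
      ext ω
      simp only [hE, Set.mem_inter_iff, Set.mem_setOf_eq, Set.mem_iInter, Set.mem_compl_iff]
    rw [h]
    exact (measCoord n x).inter ((MeasurableSet.const _).inter
      (MeasurableSet.iInter fun m => MeasurableSet.iInter fun _ => measCoordSet m Λᶜ))
  have hEdisj : Pairwise (Function.onFun Disjoint E) := by
    rintro ⟨n, x⟩ ⟨m, x'⟩ hne
    apply Set.disjoint_left.mpr
    rintro ω ⟨h1, h2, h3⟩ ⟨h1', h2', h3'⟩
    rcases Nat.lt_trichotomy n m with h | h | h
    · exact h3' n h (h1 ▸ h2)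
    · apply hne
      subst h
      have : x = x' := h1.symm.trans h1'
      rw [this]
    · exact h3 m h (h1' ▸ h2')
  have hEdet : ∀ q : ℕ × Y, Det q.1 (E q) := by
    rintro ⟨n, x⟩ ω ω' hag ⟨h1, h2, h3⟩
    refine ⟨by rw [← hag n le_rfl]; exact h1, h2, fun m hm => ?_⟩
    rw [← hag m (le_of_lt hm)]
    exact h3 m hm
  have hEsub : ∀ q : ℕ × Y, E q ⊆ {ω | ω q.1 = q.2} := fun q ω h => h.1
  set ν : Y → ℝ≥0∞ := fun x => ∑' n, P ρ (E (n, x)) with hν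
  set T : ℝ≥0∞ := ∑' x, ν x with hT
  have hhit : P ρ {ω | ∃ n, ω n ∈ Λ} = T := by
    have hU : {ω : ℕ → Y | ∃ n, ω n ∈ Λ} = ⋃ q : ℕ × Y, E q := by
      ext ω
      simp only [Set.mem_iUnion, Set.mem_setOf_eq, hE]
      constructor
      · intro h
        exact ⟨(Nat.find h, ω (Nat.find h)), rfl, Nat.find_spec h, fun m hm => Nat.find_min h hm⟩
      · rintro ⟨⟨n, x⟩, h1, h2, -⟩
        exact ⟨n, h1 ▸ h2⟩
    rw [hU, measure_iUnion hEdisj hEmeas, hT]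
    simp only [hν]
    rw [ENNReal.tsum_comm (f := fun x n => P ρ (E (n, x)))]
    exact ENNReal.tsum_prod (f := fun n x => P ρ (E (n, x)))
  have KB : ∀ y, (∑' x, ν x * G x y) ≤ G ρ y := by
    intro y
    have hstep : ∀ x, ν x * G x y
        = ∑' n, ∑' k, P ρ (E (n, x) ∩ {ω | ω (n + k) = y}) := by
      intro x
      rw [hGdef x y]
      simp only [hν]
      calc (∑' n, P ρ (E (n, x))) * (∑' k, P x {ω | ω k = y})
          = ∑' n, P ρ (E (n, x)) * ∑' k, P x {ω | ω k = y} := (ENNReal.tsum_mul_right).symm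
        _ = ∑' n, ∑' k, P ρ (E (n, x)) * P x {ω | ω k = y} := by
            congr 1; funext n; exact (ENNReal.tsum_mul_left).symm
        _ = ∑' n, ∑' k, P ρ (E (n, x) ∩ {ω | ω (n + k) = y}) := by
            congr 1; funext n; congr 1; funext k
            exact (markov P p hcyl y k n ρ x (E (n, x)) (hEmeas (n, x))
              (hEdet (n, x)) (hEsub (n, x))).symm
    calc (∑' x, ν x * G x y)
        = ∑' (t : Y × ℕ × ℕ), P ρ (E (t.2.1, t.1) ∩ {ω | ω (t.2.1 + t.2.2) = y}) := by
          have h1 : ∀ x, ν x * G x y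
              = ∑' (s : ℕ × ℕ), P ρ (E (s.1, x) ∩ {ω | ω (s.1 + s.2) = y}) := by
            intro x
            rw [hstep x]
            exact (ENNReal.tsum_prod (f := fun n k => P ρ (E (n, x) ∩ {ω | ω (n + k) = y}))).symm
          calc (∑' x, ν x * G x y)
              = ∑' x, ∑' (s : ℕ × ℕ), P ρ (E (s.1, x) ∩ {ω | ω (s.1 + s.2) = y}) := by
                congr 1; funext x; exact h1 x
            _ = ∑' (t : Y × ℕ × ℕ), P ρ (E (t.2.1, t.1) ∩ {ω | ω (t.2.1 + t.2.2) = y}) :=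
                (ENNReal.tsum_prod (f := fun (x : Y) (s : ℕ × ℕ) =>
                  P ρ (E (s.1, x) ∩ {ω | ω (s.1 + s.2) = y}))).symm
      _ ≤ ∑' (s : ℕ × ℕ × Y), P ρ (E (s.2.1, s.2.2) ∩ {ω | ω s.1 = y}) := by
          have hinj : Function.Injective
              (fun t : Y × ℕ × ℕ => ((t.2.1 + t.2.2, t.2.1, t.1) : ℕ × ℕ × Y)) := by
            rintro ⟨x, n, k⟩ ⟨x', n', k'⟩ h
            simp only [Prod.mk.injEq] at h
            obtain ⟨h1, h2, h3⟩ := h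
            subst h2; subst h3
            have hkk : k = k' := by omega
            rw [hkk]
          exact ENNReal.tsum_comp_le_tsum_of_injective hinj
            (fun s => P ρ (E (s.2.1, s.2.2) ∩ {ω | ω s.1 = y}))
      _ = ∑' (N : ℕ), ∑' (q : ℕ × Y), P ρ (E q ∩ {ω | ω N = y}) :=
          ENNReal.tsum_prod (f := fun N q => P ρ (E q ∩ {ω | ω N = y}))
      _ ≤ G ρ y := by
          rw [hGdef ρ y]
          apply ENNReal.tsum_le_tsum
          intro N
          have hd : Pairwise (Function.onFun Disjoint fun q : ℕ × Y => E q ∩ {ω | ω N = y}) :=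
            fun a b hab => (hEdisj hab).mono Set.inter_subset_left Set.inter_subset_left
          rw [← measure_iUnion hd fun q => (hEmeas q).inter (measCoord N y)]
          exact measure_mono (Set.iUnion_subset fun q => Set.inter_subset_right)
  rw [hhit]
  by_cases hT0 : T = 0
  · rw [hT0]; exact zero_le
  have hTtop : T ≠ ∞ := by rw [← hhit]; exact measure_ne_top _ _
  set μ : Y → ℝ≥0∞ := fun x => ν x * T⁻¹ with hμ
  have hμsum : (∑' x, μ x) = 1 := by
    simp only [hμ]
    rw [ENNReal.tsum_mul_right, ← hT]
    exact ENNReal.mul_inv_cancel hT0 hTtop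
  have hμsupp : ∀ x ∉ Λ, μ x = 0 := by
    intro x hx
    have hν0 : ν x = 0 := by
      have hE0 : ∀ n, E (n, x) = (∅ : Set (ℕ → Y)) := by
        intro n; ext ω
        simp only [hE, Set.mem_setOf_eq, Set.mem_empty_iff_false, iff_false, not_and]
        intro _ hmem
        exact absurd hmem hx
      simp [hν, hE0]
    simp [hμ, hν0]
  have hmul_le_one : ∀ a : ℝ≥0∞, a * a⁻¹ ≤ 1 := by
    intro a
    rcases eq_or_ne a 0 with h | h
    · simp [h]
    rcases eq_or_ne a ∞ with h' | h'
    · simp [h']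
    · rw [ENNReal.mul_inv_cancel h h']
  have hen : (∑' x, ∑' y', K x y' * μ x * μ y') ≤ T⁻¹ := by
    rw [ENNReal.tsum_comm]
    have hinner : ∀ y', (∑' x, K x y' * μ x * μ y') ≤ T⁻¹ * μ y' := by
      intro y'
      have hterm : ∀ x, K x y' * μ x * μ y'
          = (ν x * G x y') * ((G ρ y')⁻¹ * (T⁻¹ * μ y')) := by
        intro x
        rw [hK x y']
        simp only [hμ]
        rw [ENNReal.div_eq_inv_mul]
        ring
      calc (∑' x, K x y' * μ x * μ y')
          = (∑' x, ν x * G x y') * ((G ρ y')⁻¹ * (T⁻¹ * μ y')) := by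
            rw [← ENNReal.tsum_mul_right]; congr 1; funext x; exact hterm x
        _ ≤ G ρ y' * ((G ρ y')⁻¹ * (T⁻¹ * μ y')) := mul_le_mul_left (KB y') _
        _ = (G ρ y' * (G ρ y')⁻¹) * (T⁻¹ * μ y') := by ring
        _ ≤ 1 * (T⁻¹ * μ y') := mul_le_mul_left (hmul_le_one _) _
        _ = T⁻¹ * μ y' := one_mul _
    calc (∑' y', ∑' x, K x y' * μ x * μ y')
        ≤ ∑' y', T⁻¹ * μ y' := ENNReal.tsum_le_tsum hinner
      _ = T⁻¹ * ∑' y', μ y' := ENNReal.tsum_mul_left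
      _ = T⁻¹ := by rw [hμsum, mul_one]
  have hinf : (⨅ μ' : {μ' : Y → ℝ≥0∞ // (∑' y', μ' y') = 1 ∧ ∀ y' ∉ Λ, μ' y' = 0},
      ∑' x, ∑' y', K x y' * μ'.1 x * μ'.1 y') ≤ T⁻¹ :=
    le_trans (iInf_le _ ⟨μ, hμsum, hμsupp⟩) hen
  calc T = (T⁻¹)⁻¹ := (inv_inv T).symm
    _ ≤ capK K Λ := by
        unfold capK
        exact ENNReal.inv_le_inv' hinf
end

section
/- Let (X_n) be a transient Markov chain on a countable state space Y with initial state ρ, Green function G, and Martin kernel K(x,y) = G(x,y)/G(ρ,y). For any subset Λ ⊆ Y, the probability that the chain ever visits Λ is at least (1/2)·Cap_K(Λ). -/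
open MeasureTheory ENNReal
open scoped Classical

namespace MartinCapAux

variable {Y : Type*} [Countable Y] [MeasurableSpace Y] [MeasurableSingletonClass Y]

/-- weight of a cylinder -/
noncomputable def W (p : Y → Y → ℝ≥0∞) (x : Y) (n : ℕ) (v : ℕ → Y) : ℝ≥0∞ :=
  (if v 0 = x then 1 else 0) * ∏ i ∈ Finset.range n, p (v i) (v (i + 1))

def trunc (n : ℕ) (v : ℕ → Y) : ℕ → Y := fun i => v (min i n)

lemma cyl_meas (n : ℕ) (f : ℕ → Y) : MeasurableSet {ω : ℕ → Y | ∀ i ≤ n, ω i = f i} := by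
  have h : {ω : ℕ → Y | ∀ i ≤ n, ω i = f i}
      = ⋂ i, ⋂ _ : i ≤ n, (fun ω : ℕ → Y => ω i) ⁻¹' {f i} := by
    ext ω; simp
  rw [h]
  exact MeasurableSet.iInter fun i => MeasurableSet.iInter fun _ =>
    (measurable_pi_apply i) (measurableSet_singleton (f i))

lemma countable_rep (n : ℕ) (Q : (ℕ → Y) → Prop) :
    Countable {v : ℕ → Y // trunc n v = v ∧ Q v} := by
  have hinj : Function.Injective
      (fun v : {v : ℕ → Y // trunc n v = v ∧ Q v} => (fun i : Fin (n+1) => v.1 i)) := by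
    rintro ⟨v, hv, _⟩ ⟨w, hw, _⟩ h
    refine Subtype.ext (funext fun i => ?_)
    show v i = w i
    have h1 : v (min i n) = v i := congrFun hv i
    have h2 : w (min i n) = w i := congrFun hw i
    have h3 : v (min i n) = w (min i n) := by
      have := congrFun h (⟨min i n, by omega⟩ : Fin (n+1))
      simpa using this
    rw [← h1, h3, h2]
  exact hinj.countable

lemma decomp (p : Y → Y → ℝ≥0∞) (P : Y → Measure (ℕ → Y))
    (hcyl : ∀ (x : Y) (f : ℕ → Y) (n : ℕ),
      P x {ω | ∀ i ≤ n, ω i = f i} =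
        (if f 0 = x then 1 else 0) * ∏ i ∈ Finset.range n, p (f i) (f (i + 1)))
    (x : Y) (n : ℕ) (Q : (ℕ → Y) → Prop) (hQ : ∀ ω, Q ω ↔ Q (trunc n ω)) :
    P x {ω | Q ω} = ∑' v : {v : ℕ → Y // trunc n v = v ∧ Q v}, W p x n v.1 := by
  haveI := countable_rep (Y := Y) n Q
  have hU : {ω : ℕ → Y | Q ω} = ⋃ v : {v : ℕ → Y // trunc n v = v ∧ Q v},
      {ω | ∀ i ≤ n, ω i = v.1 i} := by
    ext ω
    constructor
    · intro hω
      refine Set.mem_iUnion.2 ⟨⟨trunc n ω, ?_, (hQ ω).1 hω⟩, ?_⟩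
      · funext i
        show ω (min (min i n) n) = ω (min i n)
        congr 1; omega
      · intro i hi
        show ω i = ω (min i n)
        congr 1; omega
    · intro hω
      obtain ⟨v, hmem⟩ := Set.mem_iUnion.1 hω
      have hvt : trunc n ω = v.1 := by
        funext i
        show ω (min i n) = v.1 i
        rw [hmem (min i n) (by omega)]
        exact congrFun v.2.1 i
      exact (hQ ω).2 (by rw [hvt]; exact v.2.2)
  have hdisj : Pairwise (Function.onFun Disjoint
      (fun v : {v : ℕ → Y // trunc n v = v ∧ Q v} => {ω : ℕ → Y | ∀ i ≤ n, ω i = v.1 i})) := by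
    rintro ⟨v, hv, hQv⟩ ⟨w, hw, hQw⟩ hne
    simp only [Function.onFun, Set.disjoint_left]
    intro ω h1 h2
    apply hne
    refine Subtype.ext (funext fun i => ?_)
    show v i = w i
    calc v i = v (min i n) := (congrFun hv i).symm
      _ = ω (min i n) := (h1 (min i n) (min_le_right i n)).symm
      _ = w (min i n) := h2 (min i n) (min_le_right i n)
      _ = w i := congrFun hw i
  rw [hU, measure_iUnion hdisj (fun v => cyl_meas n v.1)]
  exact tsum_congr fun v => hcyl x v.1 n

lemma meas_eval (n : ℕ) (y : Y) : MeasurableSet {ω : ℕ → Y | ω n = y} := by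
  have h : {ω : ℕ → Y | ω n = y} = (fun ω : ℕ → Y => ω n) ⁻¹' {y} := by ext ω; simp
  rw [h]
  exact measurable_pi_apply n (measurableSet_singleton y)

def glue (m : ℕ) (g h : ℕ → Y) : ℕ → Y := fun i => if i ≤ m then g i else h (i - m)

lemma glue_le {m : ℕ} {g h : ℕ → Y} {i : ℕ} (hi : i ≤ m) : glue m g h i = g i := if_pos hi

lemma glue_add {m : ℕ} {g h : ℕ → Y} (hgm : g m = h 0) (j : ℕ) : glue m g h (m + j) = h j := by
  rcases Nat.eq_zero_or_pos j with rfl | hj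
  · simpa [glue] using hgm
  · have : ¬ (m + j ≤ m) := by omega
    simp only [glue, this, if_false]
    congr 1; omega

def splitEquiv (m k : ℕ) (x y : Y) :
    ({g : ℕ → Y // trunc m g = g ∧ g m = x} × {h : ℕ → Y // trunc k h = h ∧ h 0 = x ∧ h k = y}) ≃
    {v : ℕ → Y // trunc (m+k) v = v ∧ v m = x ∧ v (m+k) = y} where
  toFun gh := by
    obtain ⟨⟨g, hg, hgm⟩, ⟨h, hh, hh0, hhk⟩⟩ := gh
    refine ⟨glue m g h, ?_, ?_, ?_⟩
    · funext i
      show glue m g h (min i (m+k)) = glue m g h i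
      by_cases hi : i ≤ m + k
      · rw [min_eq_left hi]
      · rw [min_eq_right (by omega : m + k ≤ i)]
        have e1 : glue m g h (m + k) = h k := glue_add (by rw [hgm, hh0]) k
        have e2 : glue m g h i = h (i - m) := by
          have : ¬ (i ≤ m) := by omega
          simp only [glue, this, if_false]
        have e3 : h (i - m) = h k := by
          calc h (i - m) = h (min (i - m) k) := (congrFun hh (i - m)).symm
            _ = h k := by congr 1; omega
        rw [e1, e2, e3]
    · rw [glue_le (le_refl m)]; exact hgm
    · rw [glue_add (by rw [hgm, hh0]) k]; exact hhk
  invFun v := by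
    obtain ⟨v, hv, hvm, hvmk⟩ := v
    refine ⟨⟨trunc m v, ?_, ?_⟩, ⟨fun j => v (m + min j k), ?_, ?_, ?_⟩⟩
    · funext i
      show v (min (min i m) m) = v (min i m)
      congr 1; omega
    · show v (min m m) = x
      rw [min_self]; exact hvm
    · funext j
      show v (m + min (min j k) k) = v (m + min j k)
      congr 2; omega
    · show v (m + min 0 k) = x
      simpa using hvm
    · show v (m + min k k) = y
      rw [min_self]; exact hvmk
  left_inv := by
    rintro ⟨⟨g, hg, hgm⟩, ⟨h, hh, hh0, hhk⟩⟩
    have hglue0 : g m = h 0 := by rw [hgm, hh0]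
    refine Prod.ext (Subtype.ext ?_) (Subtype.ext ?_)
    · show trunc m (glue m g h) = g
      funext i
      show glue m g h (min i m) = g i
      rw [glue_le (min_le_right i m)]
      exact congrFun hg i
    · show (fun j => glue m g h (m + min j k)) = h
      funext j
      show glue m g h (m + min j k) = h j
      rw [glue_add hglue0 (min j k)]
      exact congrFun hh j
  right_inv := by
    rintro ⟨v, hv, hvm, hvmk⟩
    refine Subtype.ext ?_
    show glue m (trunc m v) (fun j => v (m + min j k)) = v
    funext i
    by_cases hi : i ≤ m
    · rw [glue_le hi]
      show v (min i m) = v i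
      congr 1; omega
    · have : ¬ (i ≤ m) := hi
      simp only [glue, this, if_false]
      show v (m + min (i - m) k) = v i
      by_cases hik : i ≤ m + k
      · congr 1; omega
      · calc v (m + min (i - m) k) = v (min i (m+k)) := by congr 1; omega
          _ = v i := congrFun hv i

lemma weight_glue (p : Y → Y → ℝ≥0∞) (ρ x : Y) (m k : ℕ) (g h : ℕ → Y)
    (hgm : g m = x) (hh0 : h 0 = x) :
    W p ρ (m+k) (glue m g h) = W p ρ m g * W p x k h := by
  have hglue0 : g m = h 0 := by rw [hgm, hh0]
  have e0 : glue m g h 0 = g 0 := glue_le (Nat.zero_le m)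
  have eA : ∏ i ∈ Finset.range m, p (glue m g h i) (glue m g h (i+1))
      = ∏ i ∈ Finset.range m, p (g i) (g (i+1)) := by
    refine Finset.prod_congr rfl fun i hi => ?_
    have hi' : i < m := Finset.mem_range.1 hi
    rw [glue_le (by omega), glue_le (by omega)]
  have eB : ∏ i ∈ Finset.range k, p (glue m g h (m + i)) (glue m g h (m + i + 1))
      = ∏ i ∈ Finset.range k, p (h i) (h (i+1)) := by
    refine Finset.prod_congr rfl fun i hi => ?_
    rw [glue_add hglue0 i, show m + i + 1 = m + (i+1) by omega, glue_add hglue0 (i+1)]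
  unfold W
  rw [Finset.prod_range_add, e0, eA, eB, if_pos hh0]
  ring

lemma hit_self (p : Y → Y → ℝ≥0∞) (P : Y → Measure (ℕ → Y))
    (hcyl : ∀ (x : Y) (f : ℕ → Y) (n : ℕ),
      P x {ω | ∀ i ≤ n, ω i = f i} =
        (if f 0 = x then 1 else 0) * ∏ i ∈ Finset.range n, p (f i) (f (i + 1)))
    (x : Y) : P x {ω : ℕ → Y | ω 0 = x} = 1 := by
  have h : {ω : ℕ → Y | ω 0 = x} = {ω : ℕ → Y | ∀ i ≤ 0, ω i = (fun _ => x) i} := by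
    ext ω; simp [Nat.le_zero]
  rw [h, hcyl]
  simp

lemma cond_start (p : Y → Y → ℝ≥0∞) (P : Y → Measure (ℕ → Y))
    (hprob : ∀ x, IsProbabilityMeasure (P x))
    (hcyl : ∀ (x : Y) (f : ℕ → Y) (n : ℕ),
      P x {ω | ∀ i ≤ n, ω i = f i} =
        (if f 0 = x then 1 else 0) * ∏ i ∈ Finset.range n, p (f i) (f (i + 1)))
    (x y : Y) (k : ℕ) :
    P x {ω : ℕ → Y | ω k = y} = P x {ω : ℕ → Y | ω 0 = x ∧ ω k = y} := by
  have hmeas0 : MeasurableSet {ω : ℕ → Y | ω 0 = x} := meas_eval 0 x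
  have hcompl : P x {ω : ℕ → Y | ω 0 = x}ᶜ = 0 := by
    haveI := hprob x
    rw [measure_compl hmeas0 (measure_ne_top _ _), hit_self p P hcyl x, measure_univ]
    simp
  refine le_antisymm ?_ (measure_mono fun ω hω => hω.2)
  calc P x {ω : ℕ → Y | ω k = y}
      ≤ P x ({ω : ℕ → Y | ω 0 = x ∧ ω k = y} ∪ {ω : ℕ → Y | ω 0 = x}ᶜ) := by
        refine measure_mono fun ω hω => ?_
        by_cases h0 : ω 0 = x
        · exact Or.inl ⟨h0, hω⟩
        · exact Or.inr h0
    _ ≤ P x {ω : ℕ → Y | ω 0 = x ∧ ω k = y} + P x {ω : ℕ → Y | ω 0 = x}ᶜ :=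
        measure_union_le _ _
    _ = P x {ω : ℕ → Y | ω 0 = x ∧ ω k = y} := by rw [hcompl, add_zero]

lemma markov (p : Y → Y → ℝ≥0∞) (P : Y → Measure (ℕ → Y))
    (hprob : ∀ x, IsProbabilityMeasure (P x))
    (hcyl : ∀ (x : Y) (f : ℕ → Y) (n : ℕ),
      P x {ω | ∀ i ≤ n, ω i = f i} =
        (if f 0 = x then 1 else 0) * ∏ i ∈ Finset.range n, p (f i) (f (i + 1)))
    (ρ x y : Y) (m k : ℕ) :
    P ρ {ω : ℕ → Y | ω m = x ∧ ω (m+k) = y}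
      = P ρ {ω : ℕ → Y | ω m = x} * P x {ω : ℕ → Y | ω k = y} := by
  rw [cond_start p P hprob hcyl x y k]
  rw [decomp p P hcyl ρ (m+k) (fun ω => ω m = x ∧ ω (m+k) = y) (fun ω => by
    have e1 : trunc (m+k) ω m = ω m := congrArg ω (by omega)
    have e2 : trunc (m+k) ω (m+k) = ω (m+k) := congrArg ω (by omega)
    show _ ↔ trunc (m+k) ω m = x ∧ trunc (m+k) ω (m+k) = y
    rw [e1, e2])]
  rw [decomp p P hcyl ρ m (fun ω => ω m = x) (fun ω => by
    have e1 : trunc m ω m = ω m := congrArg ω (by omega)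
    show _ ↔ trunc m ω m = x
    rw [e1])]
  rw [decomp p P hcyl x k (fun ω => ω 0 = x ∧ ω k = y) (fun ω => by
    have e1 : trunc k ω 0 = ω 0 := congrArg ω (by omega)
    have e2 : trunc k ω k = ω k := congrArg ω (by omega)
    show _ ↔ trunc k ω 0 = x ∧ trunc k ω k = y
    rw [e1, e2])]
  rw [← Equiv.tsum_eq (splitEquiv m k x y) (fun v => W p ρ (m+k) v.1)]
  have hterm : ∀ gh : ({g : ℕ → Y // trunc m g = g ∧ g m = x} ×
      {h : ℕ → Y // trunc k h = h ∧ h 0 = x ∧ h k = y}),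
      W p ρ (m+k) ((splitEquiv m k x y) gh).1 = W p ρ m gh.1.1 * W p x k gh.2.1 := by
    rintro ⟨⟨g, hg, hgm⟩, ⟨h, hh, hh0, hhk⟩⟩
    exact weight_glue p ρ x m k g h hgm hh0
  rw [tsum_congr hterm, ENNReal.tsum_prod', ← ENNReal.tsum_mul_right]
  refine tsum_congr fun g => ?_
  rw [← ENNReal.tsum_mul_left]

def leEquiv : (ℕ × ℕ) ≃ ↥{q : ℕ × ℕ | q.1 ≤ q.2} where
  toFun mk := ⟨(mk.1, mk.1 + mk.2), Nat.le_add_right _ _⟩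
  invFun q := (q.1.1, q.1.2 - q.1.1)
  left_inv mk := by
    obtain ⟨a, b⟩ := mk
    simp
  right_inv q := by
    obtain ⟨⟨a, b⟩, h⟩ := q
    refine Subtype.ext ?_
    have hb : a + (b - a) = b := by
      simp only [Set.mem_setOf_eq] at h; omega
    simp [hb]

def geEquiv : (ℕ × ℕ) ≃ ↥{q : ℕ × ℕ | q.2 ≤ q.1} where
  toFun mk := ⟨(mk.1 + mk.2, mk.1), Nat.le_add_right _ _⟩
  invFun q := (q.1.2, q.1.1 - q.1.2)
  left_inv mk := by
    obtain ⟨a, b⟩ := mk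
    simp
  right_inv q := by
    obtain ⟨⟨a, b⟩, h⟩ := q
    refine Subtype.ext ?_
    have ha : b + (a - b) = a := by
      simp only [Set.mem_setOf_eq] at h; omega
    simp [ha]

lemma pair_split (F : ℕ × ℕ → ℝ≥0∞) :
    ∑' q : ℕ × ℕ, F q ≤ (∑' mk : ℕ × ℕ, F (mk.1, mk.1 + mk.2))
      + ∑' nk : ℕ × ℕ, F (nk.1 + nk.2, nk.1) := by
  have e1 : (∑' mk : ℕ × ℕ, F (mk.1, mk.1 + mk.2))
      = ∑' q : ↥{q : ℕ × ℕ | q.1 ≤ q.2}, F q.1 :=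
    Equiv.tsum_eq leEquiv (fun q : ↥{q : ℕ × ℕ | q.1 ≤ q.2} => F q.1)
  have e2 : (∑' nk : ℕ × ℕ, F (nk.1 + nk.2, nk.1))
      = ∑' q : ↥{q : ℕ × ℕ | q.2 ≤ q.1}, F q.1 :=
    Equiv.tsum_eq geEquiv (fun q : ↥{q : ℕ × ℕ | q.2 ≤ q.1} => F q.1)
  rw [e1, e2, tsum_subtype, tsum_subtype, ← ENNReal.tsum_add]
  refine ENNReal.tsum_le_tsum fun q => ?_
  by_cases h : q.1 ≤ q.2
  · rw [Set.indicator_of_mem (show q ∈ {q : ℕ × ℕ | q.1 ≤ q.2} from h) F]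
    exact le_add_right le_rfl
  · rw [Set.indicator_of_mem (show q ∈ {q : ℕ × ℕ | q.2 ≤ q.1} from le_of_not_ge h) F]
    exact le_add_left le_rfl

lemma inv_mul_le_one' (a : ℝ≥0∞) : a⁻¹ * a ≤ 1 := by
  rcases eq_or_ne a 0 with rfl | h0
  · simp
  rcases eq_or_ne a ⊤ with rfl | ht
  · simp
  rw [ENNReal.inv_mul_cancel h0 ht]

end MartinCapAux

open MartinCapAux

/-- Lower bound: the probability that a transient Markov chain started at `ρ`
ever visits `Λ` is at least half the Martin capacity of `Λ`. -/
theorem stmt1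
    (Y : Type*) [Countable Y] [MeasurableSpace Y] [MeasurableSingletonClass Y]
    (p : Y → Y → ℝ≥0∞) (hp : ∀ x, ∑' y, p x y = 1)
    (P : Y → Measure (ℕ → Y)) (hprob : ∀ x, IsProbabilityMeasure (P x))
    (hcyl : ∀ (x : Y) (f : ℕ → Y) (n : ℕ),
      P x {ω | ∀ i ≤ n, ω i = f i} =
        (if f 0 = x then 1 else 0) * ∏ i ∈ Finset.range n, p (f i) (f (i + 1)))
    (ρ : Y)
    (G : Y → Y → ℝ≥0∞) (hGdef : ∀ x y, G x y = ∑' n : ℕ, P x {ω | ω n = y})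
    (hGfin : ∀ x y, G x y < ∞)
    (K : Y → Y → ℝ≥0∞) (hK : ∀ x y, K x y = G x y / G ρ y)
    (Λ : Set Y) :
    2⁻¹ * capK K Λ ≤ P ρ {ω | ∃ n, ω n ∈ Λ} := by
  classical
  simp only [capK, ENNReal.inv_iInf, ENNReal.mul_iSup]
  refine iSup_le fun μ => ?_
  set I : ℝ≥0∞ := ∑' x, ∑' y, K x y * μ.1 x * μ.1 y with hIdef
  -- G x x ≥ 1
  have hGone : ∀ x, (1:ℝ≥0∞) ≤ G x x := by
    intro x
    rw [hGdef]
    calc (1:ℝ≥0∞) = P x {ω : ℕ → Y | ω 0 = x} := (hit_self p P hcyl x).symm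
      _ ≤ ∑' n : ℕ, P x {ω : ℕ → Y | ω n = x} := ENNReal.le_tsum 0
  by_cases hItop : I = ⊤
  · rw [hItop]
    simp
  by_cases hzero : ∃ x, μ.1 x ≠ 0 ∧ G ρ x = 0
  · exfalso
    apply hItop
    obtain ⟨x0, hμ0, hG0⟩ := hzero
    have hGx0 : G x0 x0 ≠ 0 := by
      intro h
      have h1 := hGone x0
      rw [h] at h1
      simpa using h1
    have hKtop : K x0 x0 = ⊤ := by
      rw [hK, hG0, ENNReal.div_zero hGx0]
    have hterm : K x0 x0 * μ.1 x0 * μ.1 x0 = ⊤ := by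
      rw [hKtop, ENNReal.top_mul hμ0, ENNReal.top_mul hμ0]
    refine top_le_iff.1 ?_
    calc (⊤:ℝ≥0∞) = K x0 x0 * μ.1 x0 * μ.1 x0 := hterm.symm
      _ ≤ ∑' y, K x0 y * μ.1 x0 * μ.1 y := ENNReal.le_tsum x0
      _ ≤ I := ENNReal.le_tsum x0
  push_neg at hzero
  -- the random variable Z and its ingredients
  set L : Y → (ℕ → Y) → ℝ≥0∞ :=
    fun y ω => ∑' n : ℕ, Set.indicator {ω' : ℕ → Y | ω' n = y} 1 ω with hLdef
  have hLmeas : ∀ y, Measurable (L y) := fun y =>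
    Measurable.ennreal_tsum fun n => measurable_const.indicator (meas_eval n y)
  set c : Y → ℝ≥0∞ := fun y => μ.1 y * (G ρ y)⁻¹ with hcdef
  set Z : (ℕ → Y) → ℝ≥0∞ := fun ω => ∑' y, c y * L y ω with hZdef
  have hZmeas : Measurable Z :=
    Measurable.ennreal_tsum fun y => (hLmeas y).const_mul (c y)
  -- first moment
  have hEL : ∀ x y, ∫⁻ ω, L y ω ∂(P x) = G x y := by
    intro x y
    have h1 : ∫⁻ ω, L y ω ∂(P x)
        = ∑' n : ℕ, ∫⁻ ω, Set.indicator {ω' : ℕ → Y | ω' n = y} 1 ω ∂(P x) :=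
      lintegral_tsum fun n => (measurable_const.indicator (meas_eval n y)).aemeasurable
    rw [h1, hGdef]
    exact tsum_congr fun n => lintegral_indicator_one (meas_eval n y)
  have hEZ : ∫⁻ ω, Z ω ∂(P ρ) = 1 := by
    rw [hZdef, lintegral_tsum fun y => ((hLmeas y).const_mul (c y)).aemeasurable]
    have h1 : ∀ y, ∫⁻ ω, c y * L y ω ∂(P ρ) = c y * G ρ y := fun y => by
      rw [lintegral_const_mul _ (hLmeas y), hEL]
    rw [tsum_congr h1]
    have h2 : ∀ y, c y * G ρ y = μ.1 y := by
      intro y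
      by_cases h0 : μ.1 y = 0
      · simp [hcdef, h0]
      · rw [hcdef]
        simp only []
        rw [mul_assoc, ENNReal.inv_mul_cancel (hzero y h0) (hGfin ρ y).ne, mul_one]
    rw [tsum_congr h2, μ.2.1]
  -- second moment ingredients
  have hELL : ∀ x y, ∫⁻ ω, L x ω * L y ω ∂(P ρ) ≤ G ρ x * G x y + G ρ y * G y x := by
    intro x y
    have hprod : ∀ ω, L x ω * L y ω
        = ∑' q : ℕ × ℕ, Set.indicator {ω' : ℕ → Y | ω' q.1 = x ∧ ω' q.2 = y} 1 ω := by
      intro ω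
      rw [hLdef]
      simp only []
      rw [ENNReal.tsum_prod', ← ENNReal.tsum_mul_right]
      refine tsum_congr fun m => ?_
      rw [← ENNReal.tsum_mul_left]
      refine tsum_congr fun n => ?_
      by_cases h1 : ω m = x <;> by_cases h2 : ω n = y <;>
        simp [Set.indicator_apply, Set.mem_setOf_eq, h1, h2]
    calc ∫⁻ ω, L x ω * L y ω ∂(P ρ)
        = ∑' q : ℕ × ℕ, P ρ {ω : ℕ → Y | ω q.1 = x ∧ ω q.2 = y} := by
          have h1 : ∫⁻ ω, L x ω * L y ω ∂(P ρ)
              = ∫⁻ ω, ∑' q : ℕ × ℕ,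
                  Set.indicator {ω' : ℕ → Y | ω' q.1 = x ∧ ω' q.2 = y} 1 ω ∂(P ρ) :=
            lintegral_congr hprod
          have h2 : ∫⁻ ω, ∑' q : ℕ × ℕ,
                Set.indicator {ω' : ℕ → Y | ω' q.1 = x ∧ ω' q.2 = y} 1 ω ∂(P ρ)
              = ∑' q : ℕ × ℕ, ∫⁻ ω,
                  Set.indicator {ω' : ℕ → Y | ω' q.1 = x ∧ ω' q.2 = y} 1 ω ∂(P ρ) :=
            lintegral_tsum fun q => (measurable_const.indicator
              ((meas_eval q.1 x).inter (meas_eval q.2 y))).aemeasurable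
          rw [h1, h2]
          exact tsum_congr fun q =>
            lintegral_indicator_one ((meas_eval q.1 x).inter (meas_eval q.2 y))
      _ ≤ (∑' mk : ℕ × ℕ, P ρ {ω : ℕ → Y | ω mk.1 = x ∧ ω (mk.1 + mk.2) = y})
          + ∑' nk : ℕ × ℕ, P ρ {ω : ℕ → Y | ω (nk.1 + nk.2) = x ∧ ω nk.1 = y} :=
          pair_split (fun q => P ρ {ω : ℕ → Y | ω q.1 = x ∧ ω q.2 = y})
      _ = G ρ x * G x y + G ρ y * G y x := by
          congr 1
          · calc ∑' mk : ℕ × ℕ, P ρ {ω : ℕ → Y | ω mk.1 = x ∧ ω (mk.1 + mk.2) = y}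
                = ∑' m, ∑' k, P ρ {ω : ℕ → Y | ω m = x ∧ ω (m+k) = y} := ENNReal.tsum_prod'
              _ = ∑' m, ∑' k, P ρ {ω : ℕ → Y | ω m = x} * P x {ω : ℕ → Y | ω k = y} :=
                  tsum_congr fun m => tsum_congr fun k => markov p P hprob hcyl ρ x y m k
              _ = ∑' m, P ρ {ω : ℕ → Y | ω m = x} * ∑' k, P x {ω : ℕ → Y | ω k = y} :=
                  tsum_congr fun m => ENNReal.tsum_mul_left
              _ = (∑' m, P ρ {ω : ℕ → Y | ω m = x}) * ∑' k, P x {ω : ℕ → Y | ω k = y} :=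
                  ENNReal.tsum_mul_right
              _ = G ρ x * G x y := by rw [hGdef ρ x, hGdef x y]
          · have hset : ∀ n k : ℕ, {ω : ℕ → Y | ω (n+k) = x ∧ ω n = y}
                = {ω : ℕ → Y | ω n = y ∧ ω (n+k) = x} := by
              intro n k; ext ω; exact and_comm
            calc ∑' nk : ℕ × ℕ, P ρ {ω : ℕ → Y | ω (nk.1 + nk.2) = x ∧ ω nk.1 = y}
                = ∑' n, ∑' k, P ρ {ω : ℕ → Y | ω (n+k) = x ∧ ω n = y} := ENNReal.tsum_prod'
              _ = ∑' n, ∑' k, P ρ {ω : ℕ → Y | ω n = y} * P y {ω : ℕ → Y | ω k = x} := by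
                  refine tsum_congr fun n => tsum_congr fun k => ?_
                  rw [hset n k]
                  exact markov p P hprob hcyl ρ y x n k
              _ = ∑' n, P ρ {ω : ℕ → Y | ω n = y} * ∑' k, P y {ω : ℕ → Y | ω k = x} :=
                  tsum_congr fun n => ENNReal.tsum_mul_left
              _ = (∑' n, P ρ {ω : ℕ → Y | ω n = y}) * ∑' k, P y {ω : ℕ → Y | ω k = x} :=
                  ENNReal.tsum_mul_right
              _ = G ρ y * G y x := by rw [hGdef ρ y, hGdef y x]
  -- second moment
  have hEZ2 : ∫⁻ ω, Z ω * Z ω ∂(P ρ) ≤ 2 * I := by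
    have hZZ : ∀ ω, Z ω * Z ω = ∑' a : Y, ∑' b : Y, (c a * c b) * (L a ω * L b ω) := by
      intro ω
      rw [hZdef]
      simp only []
      rw [← ENNReal.tsum_mul_right]
      refine tsum_congr fun a => ?_
      rw [← ENNReal.tsum_mul_left]
      refine tsum_congr fun b => ?_
      ring
    have hmeasab : ∀ a b : Y, Measurable fun ω => (c a * c b) * (L a ω * L b ω) :=
      fun a b => ((hLmeas a).mul (hLmeas b)).const_mul _
    calc ∫⁻ ω, Z ω * Z ω ∂(P ρ)
        = ∑' a : Y, ∑' b : Y, (c a * c b) * ∫⁻ ω, L a ω * L b ω ∂(P ρ) := by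
          simp_rw [hZZ]
          rw [lintegral_tsum fun a =>
            (Measurable.ennreal_tsum fun b => hmeasab a b).aemeasurable]
          refine tsum_congr fun a => ?_
          rw [lintegral_tsum fun b => (hmeasab a b).aemeasurable]
          refine tsum_congr fun b => ?_
          rw [lintegral_const_mul _ (f := fun ω => L a ω * L b ω) ((hLmeas a).mul (hLmeas b))]
      _ ≤ ∑' a : Y, ∑' b : Y, (c a * c b) * (G ρ a * G a b + G ρ b * G b a) :=
          ENNReal.tsum_le_tsum fun a => ENNReal.tsum_le_tsum fun b =>
            mul_le_mul_right (hELL a b) _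
      _ ≤ ∑' a : Y, ∑' b : Y,
            (K a b * μ.1 a * μ.1 b + K b a * μ.1 b * μ.1 a) := by
          refine ENNReal.tsum_le_tsum fun a => ENNReal.tsum_le_tsum fun b => ?_
          rw [mul_add]
          refine add_le_add ?_ ?_
          · have he : c a * c b * (G ρ a * G a b)
                = ((G ρ a)⁻¹ * G ρ a) * (G a b * (G ρ b)⁻¹ * μ.1 a * μ.1 b) := by
              rw [hcdef]; ring
            rw [he, hK, div_eq_mul_inv]
            calc ((G ρ a)⁻¹ * G ρ a) * (G a b * (G ρ b)⁻¹ * μ.1 a * μ.1 b)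
                ≤ 1 * (G a b * (G ρ b)⁻¹ * μ.1 a * μ.1 b) :=
                  mul_le_mul_left (inv_mul_le_one' _) _
              _ = G a b * (G ρ b)⁻¹ * μ.1 a * μ.1 b := one_mul _
          · have he : c a * c b * (G ρ b * G b a)
                = ((G ρ b)⁻¹ * G ρ b) * (G b a * (G ρ a)⁻¹ * μ.1 b * μ.1 a) := by
              rw [hcdef]; ring
            rw [he, hK, div_eq_mul_inv]
            calc ((G ρ b)⁻¹ * G ρ b) * (G b a * (G ρ a)⁻¹ * μ.1 b * μ.1 a)
                ≤ 1 * (G b a * (G ρ a)⁻¹ * μ.1 b * μ.1 a) :=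
                  mul_le_mul_left (inv_mul_le_one' _) _
              _ = G b a * (G ρ a)⁻¹ * μ.1 b * μ.1 a := one_mul _
      _ = 2 * I := by
          rw [tsum_congr (fun a => ENNReal.tsum_add), ENNReal.tsum_add]
          have hswap : (∑' a : Y, ∑' b : Y, K b a * μ.1 b * μ.1 a) = I := by
            rw [ENNReal.tsum_comm]
          rw [hswap, hIdef, two_mul]
  -- the hitting event
  set A : Set (ℕ → Y) := {ω | Z ω ≠ 0} with hAdef
  have hAmeas : MeasurableSet A := (hZmeas (measurableSet_singleton 0)).compl
  have hAsub : A ⊆ {ω | ∃ n, ω n ∈ Λ} := by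
    intro ω hω
    have hex : ∃ y, c y * L y ω ≠ 0 := by
      by_contra h
      push_neg at h
      exact hω (ENNReal.tsum_eq_zero.mpr h)
    obtain ⟨y, hy⟩ := hex
    have hμy : μ.1 y ≠ 0 := by
      intro h
      exact hy (by simp [hcdef, h])
    have hyΛ : y ∈ Λ := by
      by_contra h
      exact hμy (μ.2.2 y h)
    have hLy : L y ω ≠ 0 := by
      intro h
      exact hy (by rw [h, mul_zero])
    have hexn : ∃ n, Set.indicator {ω' : ℕ → Y | ω' n = y} (1 : (ℕ → Y) → ℝ≥0∞) ω ≠ 0 := by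
      by_contra h
      push_neg at h
      exact hLy (ENNReal.tsum_eq_zero.mpr h)
    obtain ⟨n, hn⟩ := hexn
    have hωn : ω n = y := by
      by_contra h
      exact hn (Set.indicator_of_notMem h 1)
    exact ⟨n, hωn ▸ hyΛ⟩
  -- Cauchy–Schwarz
  have hconj : Real.HolderConjugate 2 2 := Real.HolderConjugate.two_two
  have hholder := ENNReal.lintegral_mul_le_Lp_mul_Lq (P ρ) hconj (f := Z)
    (g := A.indicator (1 : (ℕ → Y) → ℝ≥0∞)) hZmeas.aemeasurable
    (measurable_const.indicator hAmeas).aemeasurable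
  have hfg : ∀ ω, (Z * A.indicator (1 : (ℕ → Y) → ℝ≥0∞)) ω = Z ω := by
    intro ω
    by_cases h : Z ω = 0
    · simp [h]
    · have hmem : ω ∈ A := h
      simp [Set.indicator_of_mem hmem]
  have hind : ∫⁻ ω, (A.indicator (1 : (ℕ → Y) → ℝ≥0∞) ω) ^ (2:ℝ) ∂(P ρ) = P ρ A := by
    have h1 : ∀ ω, (A.indicator (1 : (ℕ → Y) → ℝ≥0∞) ω) ^ (2:ℝ)
        = A.indicator (1 : (ℕ → Y) → ℝ≥0∞) ω := by
      intro ω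
      by_cases h : ω ∈ A
      · rw [Set.indicator_of_mem h]
        simp
      · rw [Set.indicator_of_notMem h]
        rw [ENNReal.zero_rpow_of_pos (by norm_num)]
    simp_rw [h1]
    exact lintegral_indicator_one hAmeas
  have hZsq : ∫⁻ ω, Z ω ^ (2:ℝ) ∂(P ρ) = ∫⁻ ω, Z ω * Z ω ∂(P ρ) := by
    refine lintegral_congr fun ω => ?_
    rw [show (2:ℝ) = ((2:ℕ):ℝ) by norm_num, ENNReal.rpow_natCast, pow_two]
  have h1le : (1:ℝ≥0∞) ≤ (2 * I * P ρ A) ^ (1/(2:ℝ)) := by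
    calc (1:ℝ≥0∞) = ∫⁻ ω, Z ω ∂(P ρ) := hEZ.symm
      _ = ∫⁻ ω, (Z * A.indicator (1 : (ℕ → Y) → ℝ≥0∞)) ω ∂(P ρ) :=
          lintegral_congr fun ω => (hfg ω).symm
      _ ≤ (∫⁻ ω, Z ω ^ (2:ℝ) ∂(P ρ)) ^ (1/(2:ℝ))
          * (∫⁻ ω, (A.indicator (1 : (ℕ → Y) → ℝ≥0∞) ω) ^ (2:ℝ) ∂(P ρ)) ^ (1/(2:ℝ)) := hholder
      _ = (∫⁻ ω, Z ω * Z ω ∂(P ρ)) ^ (1/(2:ℝ)) * (P ρ A) ^ (1/(2:ℝ)) := by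
          rw [hZsq, hind]
      _ ≤ (2 * I) ^ (1/(2:ℝ)) * (P ρ A) ^ (1/(2:ℝ)) :=
          mul_le_mul_left (ENNReal.rpow_le_rpow hEZ2 (by norm_num)) _
      _ = (2 * I * P ρ A) ^ (1/(2:ℝ)) :=
          (ENNReal.mul_rpow_of_nonneg _ _ (by norm_num)).symm
  have hPA : (1:ℝ≥0∞) ≤ 2 * I * P ρ A := by
    calc (1:ℝ≥0∞) = (1:ℝ≥0∞) ^ (2:ℝ) := (ENNReal.one_rpow _).symm
      _ ≤ ((2 * I * P ρ A) ^ (1/(2:ℝ))) ^ (2:ℝ) := ENNReal.rpow_le_rpow h1le (by norm_num)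
      _ = (2 * I * P ρ A) ^ ((1/(2:ℝ)) * 2) := by rw [← ENNReal.rpow_mul]
      _ = 2 * I * P ρ A := by norm_num
  -- I is positive
  have hI0 : I ≠ 0 := by
    obtain ⟨x0, hx0⟩ : ∃ x, μ.1 x ≠ 0 := by
      by_contra h
      push_neg at h
      have h0 : (∑' y, μ.1 y) = 0 := by simp [h]
      rw [μ.2.1] at h0
      exact one_ne_zero h0
    have hKx : K x0 x0 ≠ 0 := by
      rw [hK]
      refine ENNReal.div_ne_zero.2 ⟨?_, (hGfin ρ x0).ne⟩
      intro h
      have h1 := hGone x0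
      rw [h] at h1
      simpa using h1
    have hle : K x0 x0 * μ.1 x0 * μ.1 x0 ≤ I :=
      le_trans (ENNReal.le_tsum x0) (ENNReal.le_tsum x0)
    intro h
    rw [h] at hle
    exact (mul_ne_zero (mul_ne_zero hKx hx0) hx0)
      (le_antisymm hle zero_le)
  -- conclude
  have h2I0 : (2 * I : ℝ≥0∞) ≠ 0 := mul_ne_zero (by norm_num) hI0
  have h2It : (2 * I : ℝ≥0∞) ≠ ⊤ := ENNReal.mul_ne_top (by norm_num) hItop
  have hfinal : 2⁻¹ * I⁻¹ ≤ P ρ A := by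
    calc 2⁻¹ * I⁻¹ = (2 * I)⁻¹ :=
        (ENNReal.mul_inv (Or.inl (by norm_num)) (Or.inl (by norm_num))).symm
      _ = (2 * I)⁻¹ * 1 := (mul_one _).symm
      _ ≤ (2 * I)⁻¹ * (2 * I * P ρ A) := mul_le_mul_right hPA _
      _ = ((2 * I)⁻¹ * (2 * I)) * P ρ A := (mul_assoc _ _ _).symm
      _ = P ρ A := by rw [ENNReal.inv_mul_cancel h2I0 h2It, one_mul]
  exact le_trans hfinal (measure_mono hAsub)
end

section
/- Let (X_n) be a Markov chain started at ρ with Green function G and Martin kernel K(x,y) = G(x,y)/G(ρ,y), and let μ be a probability measure on Λ with positive finite G(ρ,·) on Λ. Define Z = ∫_Λ G(ρ,y)^{-1} Σ_{n≥0} 1{X_n = y} dμ(y). Then E_ρ[Z²] ≤ 2·I_K(μ), where I_K(μ) = ∫∫ K(x,y) dμ(x)dμ(y). -/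
open MeasureTheory ENNReal
open scoped Classical

namespace Stmt5Aux

variable {Y : Type*} [Countable Y] [MeasurableSpace Y] [MeasurableSingletonClass Y]

/-- extend a finite path to an infinite one -/
def ext (n : ℕ) (v : Fin (n+1) → Y) : ℕ → Y := fun i => v ⟨min i n, by omega⟩

lemma ext_le {n : ℕ} (v : Fin (n+1) → Y) {i : ℕ} (h : i ≤ n) :
    ext n v i = v ⟨i, by omega⟩ := by
  simp [ext, Nat.min_eq_left h]

def cyl (n : ℕ) (v : Fin (n+1) → Y) : Set (ℕ → Y) := {ω | ∀ i ≤ n, ω i = ext n v i}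

lemma measurable_coord (n : ℕ) (y : Y) : MeasurableSet {ω : ℕ → Y | ω n = y} := by
  have : {ω : ℕ → Y | ω n = y} = (fun ω : ℕ → Y => ω n) ⁻¹' {y} := rfl
  rw [this]
  exact measurable_pi_apply n (measurableSet_singleton y)

lemma cyl_measurable (n : ℕ) (v : Fin (n+1) → Y) : MeasurableSet (cyl n v) := by
  have : cyl n v = ⋂ i, ⋂ (_ : i ≤ n), {ω : ℕ → Y | ω i = ext n v i} := by
    ext ω; simp [cyl]
  rw [this]
  exact MeasurableSet.iInter fun i => MeasurableSet.iInter fun _ => measurable_coord _ _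

lemma decomp (P : Measure (ℕ → Y)) (n : ℕ) (S : Set (ℕ → Y)) (hS : MeasurableSet S)
    (hdet : ∀ ω ω' : ℕ → Y, (∀ i ≤ n, ω i = ω' i) → (ω ∈ S ↔ ω' ∈ S)) :
    P S = ∑' v : Fin (n+1) → Y, if ext n v ∈ S then P (cyl n v) else 0 := by
  have hmem : ∀ (ω : ℕ → Y), ω ∈ cyl n (fun i => ω i.1) := by
    intro ω i hi
    rw [ext_le _ hi]
  have hcover : S = ⋃ v : Fin (n+1) → Y, S ∩ cyl n v := by
    ext ω
    constructor
    · intro h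
      exact Set.mem_iUnion.2 ⟨fun i => ω i.1, h, hmem ω⟩
    · rintro ⟨_, ⟨v, rfl⟩, hω, _⟩
      exact hω
  have hdisj : Pairwise (Function.onFun Disjoint fun v : Fin (n+1) → Y => S ∩ cyl n v) := by
    intro v w hvw
    refine Set.disjoint_left.2 fun ω hv hw => hvw ?_
    funext i
    have h1 := hv.2 i.1 (Nat.lt_succ_iff.mp i.2)
    have h2 := hw.2 i.1 (Nat.lt_succ_iff.mp i.2)
    rw [ext_le _ (Nat.lt_succ_iff.mp i.2)] at h1 h2
    simpa using h1.symm.trans h2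
  calc P S = P (⋃ v : Fin (n+1) → Y, S ∩ cyl n v) := by rw [← hcover]
    _ = ∑' v : Fin (n+1) → Y, P (S ∩ cyl n v) :=
        measure_iUnion hdisj fun v => hS.inter (cyl_measurable n v)
    _ = ∑' v : Fin (n+1) → Y, if ext n v ∈ S then P (cyl n v) else 0 := by
        refine tsum_congr fun v => ?_
        by_cases h : ext n v ∈ S
    -- continue
        · rw [if_pos h]
          congr 1
          ext ω
          simp only [Set.mem_inter_iff, and_iff_right_iff_imp]
          intro hω
          exact (hdet ω (ext n v) hω).2 h
        · rw [if_neg h]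
          have he : S ∩ cyl n v = ∅ := by
            ext ω
            simp only [Set.mem_inter_iff, Set.mem_empty_iff_false, iff_false]
            rintro ⟨hωS, hωc⟩
            exact h ((hdet ω (ext n v) hωc).1 hωS)
          rw [he, measure_empty]


lemma P_cyl (p : Y → Y → ℝ≥0∞) (P : Y → Measure (ℕ → Y))
    (hcyl : ∀ (x : Y) (f : ℕ → Y) (n : ℕ), P x {ω | ∀ i ≤ n, ω i = f i} =
        (if f 0 = x then 1 else 0) * ∏ i ∈ Finset.range n, p (f i) (f (i + 1)))
    (x : Y) (n : ℕ) (v : Fin (n+1) → Y) :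
    P x (cyl n v) =
      (if v 0 = x then 1 else 0) * ∏ i ∈ Finset.range n, p (ext n v i) (ext n v (i+1)) := by
  have h := hcyl x (ext n v) n
  have h0 : ext n v 0 = v 0 := by
    rw [ext_le v (Nat.zero_le n)]
    congr 1
  rw [show cyl n v = {ω | ∀ i ≤ n, ω i = ext n v i} from rfl, h, h0]


lemma snoc_ext_le {n : ℕ} (u : Fin (n+1) → Y) (c : Y) {i : ℕ} (h : i ≤ n) :
    ext (n+1) (Fin.snoc u c) i = ext n u i := by
  rw [ext_le _ (by omega : i ≤ n+1), ext_le u h]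
  have : (⟨i, by omega⟩ : Fin (n+2)) = Fin.castSucc ⟨i, by omega⟩ := rfl
  rw [this, Fin.snoc_castSucc]

lemma snoc_ext_last {n : ℕ} (u : Fin (n+1) → Y) (c : Y) :
    ext (n+1) (Fin.snoc u c) (n+1) = c := by
  rw [ext_le _ (le_refl (n+1))]
  have : (⟨n+1, by omega⟩ : Fin (n+2)) = Fin.last (n+1) := rfl
  rw [this, Fin.snoc_last]

lemma ext_last {n : ℕ} (u : Fin (n+1) → Y) : ext n u n = u (Fin.last n) := by
  rw [ext_le u (le_refl n)]; rfl

def snocE (Y : Type*) (n : ℕ) : ((Fin (n+1) → Y) × Y) ≃ (Fin (n+1+1) → Y) where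
  toFun := fun uc => Fin.snoc uc.1 uc.2
  invFun := fun v => (fun i => v i.castSucc, v (Fin.last (n+1)))
  left_inv := fun uc => by simp [Fin.snoc_castSucc, Fin.snoc_last]
  right_inv := fun v => Fin.snoc_init_self v

lemma snocE_apply (Y : Type*) (n : ℕ) (u : Fin (n+1) → Y) (c : Y) :
    snocE Y n (u, c) = Fin.snoc u c := rfl

lemma onestep (p : Y → Y → ℝ≥0∞) (P : Y → Measure (ℕ → Y))
    (hcyl : ∀ (x : Y) (f : ℕ → Y) (n : ℕ), P x {ω | ∀ i ≤ n, ω i = f i} =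
        (if f 0 = x then 1 else 0) * ∏ i ∈ Finset.range n, p (f i) (f (i + 1)))
    (x b : Y) (n : ℕ) (S : Set (ℕ → Y)) (hS : MeasurableSet S)
    (hdet : ∀ ω ω' : ℕ → Y, (∀ i ≤ n, ω i = ω' i) → (ω ∈ S ↔ ω' ∈ S)) :
    P x (S ∩ {ω | ω (n+1) = b}) = ∑' c, P x (S ∩ {ω | ω n = c}) * p c b := by
  set W : (Fin (n+1) → Y) → ℝ≥0∞ := fun u =>
    (if u 0 = x then 1 else 0) * ∏ i ∈ Finset.range n, p (ext n u i) (ext n u (i+1)) with hW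
  -- RHS computation
  have hRHS : ∀ c, P x (S ∩ {ω | ω n = c}) =
      ∑' u : Fin (n+1) → Y, if ext n u ∈ S ∧ u (Fin.last n) = c then W u else 0 := by
    intro c
    have hdet' : ∀ ω ω' : ℕ → Y, (∀ i ≤ n, ω i = ω' i) →
        (ω ∈ S ∩ {ω | ω n = c} ↔ ω' ∈ S ∩ {ω | ω n = c}) := by
      intro ω ω' hag
      have := hdet ω ω' hag
      simp only [Set.mem_inter_iff, Set.mem_setOf_eq, this, hag n (le_refl n)]
    rw [decomp (P x) n _ (hS.inter (measurable_coord n c)) hdet']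
    refine tsum_congr fun u => ?_
    have hm : ext n u ∈ S ∩ {ω | ω n = c} ↔ (ext n u ∈ S ∧ u (Fin.last n) = c) := by
      simp only [Set.mem_inter_iff, Set.mem_setOf_eq, ext_last]
    rw [P_cyl p P hcyl x n u]
    by_cases h : ext n u ∈ S ∧ u (Fin.last n) = c
    · rw [if_pos (hm.2 h), if_pos h]
    · rw [if_neg (fun hh => h (hm.1 hh)), if_neg h]
  have hcommon : (∑' c, P x (S ∩ {ω | ω n = c}) * p c b) =
      ∑' u : Fin (n+1) → Y, if ext n u ∈ S then W u * p (u (Fin.last n)) b else 0 := by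
    simp_rw [hRHS, ENNReal.tsum_mul_right.symm]
    rw [ENNReal.tsum_comm]
    refine tsum_congr fun u => ?_
    by_cases h : ext n u ∈ S
    · rw [if_pos h]
      have : ∀ c : Y, (if ext n u ∈ S ∧ u (Fin.last n) = c then W u else 0) * p c b =
          if c = u (Fin.last n) then W u * p (u (Fin.last n)) b else 0 := by
        intro c
        by_cases hc : c = u (Fin.last n)
        · subst hc; rw [if_pos rfl, if_pos ⟨h, rfl⟩]
        · rw [if_neg hc, if_neg (fun hh => hc hh.2.symm), zero_mul]
      simp_rw [this]
      exact tsum_ite_eq (u (Fin.last n)) (fun _ => W u * p (u (Fin.last n)) b)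
    · have : ∀ c : Y, (if ext n u ∈ S ∧ u (Fin.last n) = c then W u else 0) * p c b = 0 := by
        intro c
        rw [if_neg (fun hh => h hh.1), zero_mul]
      simp_rw [this]
      rw [if_neg h, tsum_zero]
  rw [hcommon]
  -- LHS computation
  have hdet2 : ∀ ω ω' : ℕ → Y, (∀ i ≤ n+1, ω i = ω' i) →
      (ω ∈ S ∩ {ω | ω (n+1) = b} ↔ ω' ∈ S ∩ {ω | ω (n+1) = b}) := by
    intro ω ω' hag
    have h1 := hdet ω ω' (fun i hi => hag i (by omega))
    simp only [Set.mem_inter_iff, Set.mem_setOf_eq, h1, hag (n+1) (le_refl (n+1))]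
  rw [decomp (P x) (n+1) _ (hS.inter (measurable_coord (n+1) b)) hdet2]
  let e := snocE Y n
  rw [← e.tsum_eq]
  have hstep : (∑' (c : (Fin (n+1) → Y) × Y),
      @ite _ (ext (n+1) (e c) ∈ S ∩ {ω | ω (n+1) = b}) (Classical.propDecidable _)
        (P x (cyl (n+1) (e c))) 0) =
      ∑' (u : Fin (n+1) → Y), ∑' (d : Y),
      (@ite _ (ext (n+1) (e (u,d)) ∈ S ∩ {ω | ω (n+1) = b}) (Classical.propDecidable _)
        (P x (cyl (n+1) (e (u,d)))) 0) := by
    rw [← ENNReal.tsum_prod]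
  refine hstep.trans ?_
  refine tsum_congr fun u => ?_
  have key : ∀ c : Y,
      (@ite _ (ext (n+1) (e (u, c)) ∈ S ∩ {ω | ω (n+1) = b}) (Classical.propDecidable _)
        (P x (cyl (n+1) (e (u, c)))) 0)
      = if c = b then (if ext n u ∈ S then W u * p (u (Fin.last n)) b else 0) else 0 := by
    intro c
    have he : e (u, c) = Fin.snoc u c := rfl
    rw [he]
    have hmS : ext (n+1) (Fin.snoc u c) ∈ S ↔ ext n u ∈ S := by
      refine hdet _ _ fun i hi => ?_
      rw [snoc_ext_le u c hi]
    have hmb : ext (n+1) (Fin.snoc u c) ∈ {ω : ℕ → Y | ω (n+1) = b} ↔ c = b := by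
      simp only [Set.mem_setOf_eq, snoc_ext_last]
    have hPc : P x (cyl (n+1) (Fin.snoc u c)) = W u * p (u (Fin.last n)) c := by
      rw [P_cyl p P hcyl x (n+1) (Fin.snoc u c), hW]
      simp only
      rw [Finset.prod_range_succ]
      have hz : (Fin.snoc u c : Fin (n+1+1) → Y) 0 = u 0 := by
        have : (0 : Fin (n+2)) = Fin.castSucc 0 := rfl
        rw [this, Fin.snoc_castSucc]
      have hpr : ∀ i ∈ Finset.range n,
          p (ext (n+1) (Fin.snoc u c) i) (ext (n+1) (Fin.snoc u c) (i+1)) =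
          p (ext n u i) (ext n u (i+1)) := by
        intro i hi
        have hi' := Finset.mem_range.mp hi
        rw [snoc_ext_le u c (by omega), snoc_ext_le u c (by omega)]
      rw [Finset.prod_congr rfl hpr, snoc_ext_le u c (le_refl n), snoc_ext_last, ext_last, hz]
      ring
    by_cases hc : c = b
    · rw [if_pos hc]
      subst hc
      by_cases hs : ext n u ∈ S
      · rw [if_pos (Set.mem_inter (hmS.2 hs) (hmb.2 rfl)), if_pos hs, hPc]
      · rw [if_neg (fun hh => hs (hmS.1 hh.1)), if_neg hs]
    · rw [if_neg hc, if_neg (fun hh => hc (hmb.1 hh.2))]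
  refine (tsum_congr fun c => key c).trans ?_
  exact tsum_ite_eq b _


variable {p : Y → Y → ℝ≥0∞} {P : Y → Measure (ℕ → Y)}

lemma P_zero
    (hcyl : ∀ (x : Y) (f : ℕ → Y) (n : ℕ), P x {ω | ∀ i ≤ n, ω i = f i} =
        (if f 0 = x then 1 else 0) * ∏ i ∈ Finset.range n, p (f i) (f (i + 1)))
    (x y : Y) : P x {ω | ω 0 = y} = if y = x then 1 else 0 := by
  have h := hcyl x (fun _ => y) 0
  have hset : {ω : ℕ → Y | ∀ i ≤ 0, ω i = (fun _ => y) i} = {ω | ω 0 = y} := by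
    ext ω
    simp [Nat.le_zero]
  rw [hset] at h
  simpa using h

lemma P_succ
    (hcyl : ∀ (x : Y) (f : ℕ → Y) (n : ℕ), P x {ω | ∀ i ≤ n, ω i = f i} =
        (if f 0 = x then 1 else 0) * ∏ i ∈ Finset.range n, p (f i) (f (i + 1)))
    (x y : Y) (n : ℕ) : P x {ω | ω (n+1) = y} = ∑' c, P x {ω | ω n = c} * p c y := by
  have h := onestep p P hcyl x y n Set.univ MeasurableSet.univ (by intro ω ω' _; simp)
  simpa [Set.univ_inter] using h

lemma joint
    (hcyl : ∀ (x : Y) (f : ℕ → Y) (n : ℕ), P x {ω | ∀ i ≤ n, ω i = f i} =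
        (if f 0 = x then 1 else 0) * ∏ i ∈ Finset.range n, p (f i) (f (i + 1)))
    (m k : ℕ) (x a b : Y) :
    P x {ω | ω m = a ∧ ω (m+k) = b} = P x {ω | ω m = a} * P a {ω | ω k = b} := by
  induction k generalizing b with
  | zero =>
    rw [P_zero hcyl a b]
    by_cases hab : b = a
    · subst hab
      rw [if_pos rfl, mul_one]
      congr 1
      ext ω
      simp [and_self]
    · rw [if_neg hab, mul_zero]
      have he : {ω : ℕ → Y | ω m = a ∧ ω (m+0) = b} = ∅ := by
        ext ω
        simp only [Set.mem_setOf_eq, Set.mem_empty_iff_false, iff_false, not_and, Nat.add_zero]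
        intro h1 h2
        exact hab (h2 ▸ h1 ▸ rfl)
      rw [he, measure_empty]
  | succ k ih =>
    have hset : {ω : ℕ → Y | ω m = a ∧ ω (m+(k+1)) = b} =
        {ω : ℕ → Y | ω m = a} ∩ {ω | ω ((m+k)+1) = b} := by
      ext ω
      simp only [Set.mem_setOf_eq, Set.mem_inter_iff]
      constructor
      · rintro ⟨h1, h2⟩; exact ⟨h1, by rw [← h2]; exact congrArg ω (by omega)⟩
      · rintro ⟨h1, h2⟩; exact ⟨h1, by rw [← h2]; exact congrArg ω (by omega)⟩
    rw [hset, onestep p P hcyl x b (m+k) {ω | ω m = a} (measurable_coord m a)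
      (fun ω ω' h => by rw [Set.mem_setOf_eq, Set.mem_setOf_eq, h m (by omega)])]
    have hterm : ∀ c, P x ({ω : ℕ → Y | ω m = a} ∩ {ω | ω (m+k) = c}) * p c b =
        P x {ω | ω m = a} * (P a {ω | ω k = c} * p c b) := by
      intro c
      rw [show ({ω : ℕ → Y | ω m = a} ∩ {ω | ω (m+k) = c} : Set (ℕ → Y)) =
        {ω | ω m = a ∧ ω (m+k) = c} from rfl, ih c, mul_assoc]
    rw [tsum_congr hterm, ENNReal.tsum_mul_left, ← P_succ hcyl a b k]


def e1 : ℕ × ℕ → ℕ × ℕ := fun q => (q.1, q.1 + q.2)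
def e2 : ℕ × ℕ → ℕ × ℕ := fun q => (q.1 + q.2, q.1)

lemma e1_inj : Function.Injective e1 := by
  rintro ⟨a, b⟩ ⟨c, d⟩ h
  simp only [e1, Prod.mk.injEq] at h
  exact Prod.ext h.1 (by omega)

lemma e2_inj : Function.Injective e2 := by
  rintro ⟨a, b⟩ ⟨c, d⟩ h
  simp only [e2, Prod.mk.injEq] at h
  exact Prod.ext h.2 (by omega)

lemma e_cover (q : ℕ × ℕ) : q ∈ Set.range e1 ∪ Set.range e2 := by
  rcases le_or_gt q.1 q.2 with h | h
  · exact Or.inl ⟨(q.1, q.2 - q.1), by simp only [e1]; exact Prod.ext rfl (by omega)⟩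
  · exact Or.inr ⟨(q.2, q.1 - q.2), by simp only [e2]; exact Prod.ext (by omega) rfl⟩

lemma tsum_split (F : ℕ × ℕ → ℝ≥0∞) :
    ∑' q, F q ≤ (∑' q, F (e1 q)) + ∑' q, F (e2 q) := by
  have h1 : ∑' q, (Set.range e1).indicator F q = ∑' q, F (e1 q) := by
    rw [← e1_inj.tsum_eq (Set.support_indicator_subset)]
    exact tsum_congr fun q => Set.indicator_of_mem (Set.mem_range_self q) F
  have h2 : ∑' q, (Set.range e2).indicator F q = ∑' q, F (e2 q) := by
    rw [← e2_inj.tsum_eq (Set.support_indicator_subset)]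
    exact tsum_congr fun q => Set.indicator_of_mem (Set.mem_range_self q) F
  calc ∑' q, F q
      ≤ ∑' q, ((Set.range e1).indicator F q + (Set.range e2).indicator F q) := by
        refine Summable.tsum_le_tsum (fun q => ?_) ENNReal.summable ENNReal.summable
        rcases e_cover q with hq | hq
        · rw [Set.indicator_of_mem hq]; exact le_self_add
        · rw [Set.indicator_of_mem hq]; exact le_add_self
    _ = (∑' q, (Set.range e1).indicator F q) + ∑' q, (Set.range e2).indicator F q :=
        ENNReal.tsum_add
    _ = (∑' q, F (e1 q)) + ∑' q, F (e2 q) := by rw [h1, h2]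

lemma lint_ite {α : Type*} [MeasurableSpace α] (ν : Measure α) (S : Set α)
    (hS : MeasurableSet S) :
    ∫⁻ ω, (if ω ∈ S then (1 : ℝ≥0∞) else 0) ∂ν = ν S := by
  rw [← lintegral_indicator_one hS]
  exact lintegral_congr fun ω => by simp [Set.indicator_apply]

end Stmt5Aux

open Stmt5Aux in
/-- Second moment bound: for `Z = ∫_Λ G(ρ,y)⁻¹ Σ_n 1{X_n = y} dμ(y)`, one has
`E_ρ[Z²] ≤ 2 I_K(μ)`, where `K(x,y) = G(x,y)/G(ρ,y)` is the Martin kernel. -/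
theorem stmt5
    (Y : Type*) [Countable Y] [MeasurableSpace Y] [MeasurableSingletonClass Y]
    (p : Y → Y → ℝ≥0∞) (hp : ∀ x, ∑' y, p x y = 1)
    (P : Y → Measure (ℕ → Y)) (hprob : ∀ x, IsProbabilityMeasure (P x))
    (hcyl : ∀ (x : Y) (f : ℕ → Y) (n : ℕ),
      P x {ω | ∀ i ≤ n, ω i = f i} =
        (if f 0 = x then 1 else 0) * ∏ i ∈ Finset.range n, p (f i) (f (i + 1)))
    (ρ : Y)
    (G : Y → Y → ℝ≥0∞) (hGdef : ∀ x y, G x y = ∑' n : ℕ, P x {ω | ω n = y})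
    (K : Y → Y → ℝ≥0∞) (hK : ∀ x y, K x y = G x y / G ρ y)
    (Λ : Set Y)
    (hGpos : ∀ y ∈ Λ, 0 < G ρ y) (hGfin : ∀ y ∈ Λ, G ρ y < ∞)
    (μ : Y → ℝ≥0∞) (hμ1 : ∑' y, μ y = 1) (hμ0 : ∀ y ∉ Λ, μ y = 0)
    (Z : (ℕ → Y) → ℝ≥0∞)
    (hZ : ∀ ω, Z ω = ∑' y, μ y * (G ρ y)⁻¹ * ∑' n : ℕ, (if ω n = y then 1 else 0)) :
    ∫⁻ ω, (Z ω) ^ 2 ∂(P ρ) ≤ 2 * ∑' x, ∑' y, K x y * μ x * μ y := by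
  set a : Y → ℝ≥0∞ := fun y => μ y * (G ρ y)⁻¹ with ha
  set N : Y → (ℕ → Y) → ℝ≥0∞ := fun y ω => ∑' n : ℕ, (if ω n = y then 1 else 0) with hN
  have hNmeas : ∀ y, Measurable (N y) := by
    intro y
    refine Measurable.ennreal_tsum fun n => ?_
    exact Measurable.ite (measurable_coord n y) measurable_const measurable_const
  -- expand the square
  have hsq : ∀ ω, Z ω ^ 2 = ∑' x, ∑' y, (a x * a y) * (N x ω * N y ω) := by
    intro ω
    rw [hZ ω, pow_two]
    calc (∑' y, a y * N y ω) * (∑' y, a y * N y ω)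
        = ∑' x, (a x * N x ω) * ∑' y, a y * N y ω := ENNReal.tsum_mul_right.symm
      _ = ∑' x, ∑' y, (a x * N x ω) * (a y * N y ω) :=
          tsum_congr fun x => ENNReal.tsum_mul_left.symm
      _ = ∑' x, ∑' y, (a x * a y) * (N x ω * N y ω) :=
          tsum_congr fun x => tsum_congr fun y => mul_mul_mul_comm _ _ _ _
  -- second moment of counts
  have hmeas2 : ∀ (x y : Y) (q : ℕ × ℕ),
      MeasurableSet {ω : ℕ → Y | ω q.1 = x ∧ ω q.2 = y} := by
    intro x y q
    have : {ω : ℕ → Y | ω q.1 = x ∧ ω q.2 = y} =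
        {ω : ℕ → Y | ω q.1 = x} ∩ {ω | ω q.2 = y} := rfl
    rw [this]
    exact (measurable_coord q.1 x).inter (measurable_coord q.2 y)
  have hNN : ∀ x y, ∫⁻ ω, N x ω * N y ω ∂(P ρ) ≤ G ρ x * G x y + G ρ y * G y x := by
    intro x y
    set f : ℕ × ℕ → (ℕ → Y) → ℝ≥0∞ := fun q ω =>
      if (ω q.1 = x ∧ ω q.2 = y) then 1 else 0 with hf
    have hfmeas : ∀ q, Measurable (f q) := fun q =>
      Measurable.ite (hmeas2 x y q) measurable_const measurable_const
    have hprodpt : ∀ ω, N x ω * N y ω = ∑' q : ℕ × ℕ, f q ω := by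
      intro ω
      rw [hN]
      simp only
      calc (∑' m, if ω m = x then (1:ℝ≥0∞) else 0) * (∑' n, if ω n = y then (1:ℝ≥0∞) else 0)
          = ∑' m, ((if ω m = x then (1:ℝ≥0∞) else 0) * ∑' n, if ω n = y then (1:ℝ≥0∞) else 0) :=
            ENNReal.tsum_mul_right.symm
        _ = ∑' m, ∑' n, (if ω m = x then (1:ℝ≥0∞) else 0) * (if ω n = y then (1:ℝ≥0∞) else 0) :=
            tsum_congr fun m => ENNReal.tsum_mul_left.symm
        _ = ∑' m, ∑' n, f (m, n) ω := by
            refine tsum_congr fun m => tsum_congr fun n => ?_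
            rw [hf]
            by_cases h1 : ω m = x <;> by_cases h2 : ω n = y <;>
              simp [h1, h2]
        _ = ∑' q : ℕ × ℕ, f q ω := (ENNReal.tsum_prod' (f := fun q => f q ω)).symm
    have hbound : ∀ ω, N x ω * N y ω ≤ (∑' q : ℕ × ℕ, f (e1 q) ω) + ∑' q : ℕ × ℕ, f (e2 q) ω := by
      intro ω
      rw [hprodpt ω]
      exact tsum_split (fun q => f q ω)
    have hA : ∫⁻ ω, ∑' q : ℕ × ℕ, f (e1 q) ω ∂(P ρ) = G ρ x * G x y := by
      rw [lintegral_tsum fun q => ((hfmeas (e1 q))).aemeasurable]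
      have hterm : ∀ q : ℕ × ℕ, ∫⁻ ω, f (e1 q) ω ∂(P ρ) =
          P ρ {ω | ω q.1 = x ∧ ω (q.1 + q.2) = y} := by
        intro q
        have hco : ∀ ω : ℕ → Y, f (e1 q) ω =
            (@ite _ (ω ∈ {ω : ℕ → Y | ω q.1 = x ∧ ω (q.1 + q.2) = y})
              (Classical.propDecidable _) (1:ℝ≥0∞) 0) := by
          intro ω
          rw [hf]
          by_cases h1 : ω q.1 = x <;> by_cases h2 : ω (q.1 + q.2) = y <;>
            simp [e1, Set.mem_setOf_eq, h1, h2]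
        rw [lintegral_congr hco]
        exact lint_ite (P ρ) {ω | ω q.1 = x ∧ ω (q.1 + q.2) = y} (hmeas2 x y (q.1, q.1 + q.2))
      rw [tsum_congr hterm]
      calc ∑' q : ℕ × ℕ, P ρ {ω | ω q.1 = x ∧ ω (q.1 + q.2) = y}
          = ∑' m, ∑' k, P ρ {ω | ω m = x ∧ ω (m + k) = y} := ENNReal.tsum_prod'
        _ = ∑' m, ∑' k, P ρ {ω | ω m = x} * P x {ω | ω k = y} :=
            tsum_congr fun m => tsum_congr fun k => joint hcyl m k ρ x y
        _ = ∑' m, P ρ {ω | ω m = x} * ∑' k, P x {ω | ω k = y} :=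
            tsum_congr fun m => ENNReal.tsum_mul_left
        _ = (∑' m, P ρ {ω | ω m = x}) * ∑' k, P x {ω | ω k = y} := ENNReal.tsum_mul_right
        _ = G ρ x * G x y := by rw [hGdef, hGdef]
    have hB : ∫⁻ ω, ∑' q : ℕ × ℕ, f (e2 q) ω ∂(P ρ) = G ρ y * G y x := by
      rw [lintegral_tsum fun q => ((hfmeas (e2 q))).aemeasurable]
      have hterm : ∀ q : ℕ × ℕ, ∫⁻ ω, f (e2 q) ω ∂(P ρ) =
          P ρ {ω | ω q.1 = y ∧ ω (q.1 + q.2) = x} := by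
        intro q
        have hco : ∀ ω : ℕ → Y, f (e2 q) ω =
            (@ite _ (ω ∈ {ω : ℕ → Y | ω q.1 = y ∧ ω (q.1 + q.2) = x})
              (Classical.propDecidable _) (1:ℝ≥0∞) 0) := by
          intro ω
          rw [hf]
          by_cases h1 : ω (q.1 + q.2) = x <;> by_cases h2 : ω q.1 = y <;>
            simp [e2, Set.mem_setOf_eq, h1, h2]
        rw [lintegral_congr hco]
        exact lint_ite (P ρ) {ω | ω q.1 = y ∧ ω (q.1 + q.2) = x} (hmeas2 y x (q.1, q.1 + q.2))
      rw [tsum_congr hterm]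
      calc ∑' q : ℕ × ℕ, P ρ {ω | ω q.1 = y ∧ ω (q.1 + q.2) = x}
          = ∑' m, ∑' k, P ρ {ω | ω m = y ∧ ω (m + k) = x} := ENNReal.tsum_prod'
        _ = ∑' m, ∑' k, P ρ {ω | ω m = y} * P y {ω | ω k = x} :=
            tsum_congr fun m => tsum_congr fun k => joint hcyl m k ρ y x
        _ = ∑' m, P ρ {ω | ω m = y} * ∑' k, P y {ω | ω k = x} :=
            tsum_congr fun m => ENNReal.tsum_mul_left
        _ = (∑' m, P ρ {ω | ω m = y}) * ∑' k, P y {ω | ω k = x} := ENNReal.tsum_mul_right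
        _ = G ρ y * G y x := by rw [hGdef, hGdef]
    calc ∫⁻ ω, N x ω * N y ω ∂(P ρ)
        ≤ ∫⁻ ω, ((∑' q : ℕ × ℕ, f (e1 q) ω) + ∑' q : ℕ × ℕ, f (e2 q) ω) ∂(P ρ) :=
          lintegral_mono hbound
      _ = (∫⁻ ω, ∑' q : ℕ × ℕ, f (e1 q) ω ∂(P ρ)) +
            ∫⁻ ω, ∑' q : ℕ × ℕ, f (e2 q) ω ∂(P ρ) :=
          lintegral_add_left (Measurable.ennreal_tsum fun q => hfmeas (e1 q)) _
      _ = G ρ x * G x y + G ρ y * G y x := by rw [hA, hB]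
  -- assemble
  have hF2meas : ∀ x y : Y, Measurable fun ω => (a x * a y) * (N x ω * N y ω) :=
    fun x y => ((hNmeas x).mul (hNmeas y)).const_mul _
  have key : ∫⁻ ω, (Z ω) ^ 2 ∂(P ρ) ≤
      ∑' x, ∑' y, (a x * a y) * (G ρ x * G x y + G ρ y * G y x) := by
    calc ∫⁻ ω, (Z ω) ^ 2 ∂(P ρ)
        = ∫⁻ ω, ∑' x, ∑' y, (a x * a y) * (N x ω * N y ω) ∂(P ρ) := lintegral_congr hsq
      _ = ∑' x, ∫⁻ ω, ∑' y, (a x * a y) * (N x ω * N y ω) ∂(P ρ) :=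
          lintegral_tsum fun x =>
            (Measurable.ennreal_tsum fun y => hF2meas x y).aemeasurable
      _ = ∑' x, ∑' y, ∫⁻ ω, (a x * a y) * (N x ω * N y ω) ∂(P ρ) :=
          tsum_congr fun x => lintegral_tsum fun y => (hF2meas x y).aemeasurable
      _ = ∑' x, ∑' y, (a x * a y) * ∫⁻ ω, N x ω * N y ω ∂(P ρ) :=
          tsum_congr fun x => tsum_congr fun y =>
            lintegral_const_mul _ ((hNmeas x).mul (hNmeas y))
      _ ≤ ∑' x, ∑' y, (a x * a y) * (G ρ x * G x y + G ρ y * G y x) :=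
          Summable.tsum_le_tsum (fun x => Summable.tsum_le_tsum
            (fun y => mul_le_mul_right (hNN x y) _) ENNReal.summable ENNReal.summable)
            ENNReal.summable ENNReal.summable
  refine key.trans ?_
  have hsplit : ∑' x, ∑' y, (a x * a y) * (G ρ x * G x y + G ρ y * G y x) =
      (∑' x, ∑' y, (a x * a y) * (G ρ x * G x y)) +
        ∑' x, ∑' y, (a x * a y) * (G ρ y * G y x) := by
    rw [← ENNReal.tsum_add]
    refine tsum_congr fun x => ?_
    rw [← ENNReal.tsum_add]
    exact tsum_congr fun y => mul_add _ _ _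
  have hswap : (∑' x, ∑' y, (a x * a y) * (G ρ y * G y x)) =
      ∑' x, ∑' y, (a x * a y) * (G ρ x * G x y) := by
    rw [ENNReal.tsum_comm]
    exact tsum_congr fun x => tsum_congr fun y => by ring
  have hterm : ∀ x y : Y, (a x * a y) * (G ρ x * G x y) ≤ K x y * μ x * μ y := by
    intro x y
    have h1 : (a x * a y) * (G ρ x * G x y) =
        ((G ρ x)⁻¹ * G ρ x) * (μ x * (μ y * ((G ρ y)⁻¹ * G x y))) := by
      rw [ha]; ring
    have h2 : K x y * μ x * μ y = μ x * (μ y * ((G ρ y)⁻¹ * G x y)) := by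
      rw [hK, div_eq_mul_inv]; ring
    rw [h1, h2]
    calc ((G ρ x)⁻¹ * G ρ x) * (μ x * (μ y * ((G ρ y)⁻¹ * G x y)))
        ≤ 1 * (μ x * (μ y * ((G ρ y)⁻¹ * G x y))) :=
          mul_le_mul_left (ENNReal.inv_mul_le_one _) _
      _ = μ x * (μ y * ((G ρ y)⁻¹ * G x y)) := one_mul _
  calc (∑' x, ∑' y, (a x * a y) * (G ρ x * G x y + G ρ y * G y x))
      = 2 * ∑' x, ∑' y, (a x * a y) * (G ρ x * G x y) := by
        rw [hsplit, hswap, two_mul]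
    _ ≤ 2 * ∑' x, ∑' y, K x y * μ x * μ y := by
        refine mul_le_mul_right ?_ 2
        exact Summable.tsum_le_tsum (fun x => Summable.tsum_le_tsum (fun y => hterm x y)
          ENNReal.summable ENNReal.summable) ENNReal.summable ENNReal.summable
end

section
/- Let μ be a probability measure on a countable group Y whose support generates Y, and let (S_n) be the associated random walk (S_n S_{n-1}^{-1} ~ μ, S_0 = identity). If every bounded μ-harmonic function on Y is constant, then for every subset Λ ⊆ Y, the probability P[S_n ∈ Λ infinitely often] is either 0 or 1. -/
open MeasureTheory ENNReal
open scoped Classical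

namespace Stmt9Aux

lemma infinite_iff {p : ℕ → Prop} : {n | p n}.Infinite ↔ ∀ N, ∃ n, N ≤ n ∧ p n := by
  rw [← Nat.frequently_atTop_iff_infinite, Filter.frequently_atTop]

variable {Y : Type*}

def walk [Group Y] (u : ℕ → Y) : ℕ → Y
  | 0 => 1
  | n + 1 => u n * walk u n

def cylSet (m : ℕ) (y : ℕ → Y) : Set (ℕ → Y) := {u | ∀ i < m, u i = y i}

def Cyls (Y : Type*) : Set (Set (ℕ → Y)) := {s | ∃ m y, s = cylSet m y}

section Meas
variable [Countable Y] [MeasurableSpace Y] [MeasurableSingletonClass Y]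

lemma allMeasurable (s : Set Y) : MeasurableSet s := s.to_countable.measurableSet

lemma cylSet_measurable (m : ℕ) (y : ℕ → Y) : MeasurableSet (cylSet m y) := by
  have h : cylSet m y = ⋂ i ∈ Set.Iio m, (fun u : ℕ → Y => u i) ⁻¹' {y i} := by
    ext u; simp [cylSet]
  rw [h]
  exact MeasurableSet.biInter (Set.to_countable _) fun i _ =>
    (measurable_pi_apply i) (measurableSet_singleton _)

lemma isPiSystem_Cyls : IsPiSystem (Cyls Y) := by
  rintro _ ⟨m, y, rfl⟩ _ ⟨r, z, rfl⟩ hne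
  obtain ⟨u0, hu01, hu02⟩ := hne
  refine ⟨max m r, fun i => if i < m then y i else z i, ?_⟩
  ext u
  constructor
  · rintro ⟨h1, h2⟩ i hi
    by_cases him : i < m
    · simp [him, h1 i him]
    · have hir : i < r := by omega
      simp [him, h2 i hir]
  · intro h
    constructor
    · intro i hi
      have h' := h i (by omega)
      simpa [hi] using h'
    · intro i hi
      have h' := h i (by omega)
      by_cases him : i < m
      · simp only [him, if_true] at h'
        rw [h', ← hu01 i him, hu02 i hi]
      · simp only [him, if_false] at h'
        exact h'

lemma eval_singleton_mem_gen [Inhabited Y] (i : ℕ) (a : Y) :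
    MeasurableSet[MeasurableSpace.generateFrom (Cyls Y)] ((fun u : ℕ → Y => u i) ⁻¹' {a}) := by
  have h : (fun u : ℕ → Y => u i) ⁻¹' {a} =
      ⋃ v : {v : Fin (i + 1) → Y // v ⟨i, Nat.lt_succ_self i⟩ = a},
        cylSet (i + 1)
          (fun j => if h : j < i + 1 then (v : Fin (i + 1) → Y) ⟨j, h⟩ else default) := by
    ext u
    simp only [Set.mem_preimage, Set.mem_singleton_iff, Set.mem_iUnion]
    constructor
    · intro hu
      refine ⟨⟨fun j => u j, hu⟩, fun j hj => ?_⟩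
      simp [hj]
    · rintro ⟨⟨v, hv⟩, hu⟩
      have h2 := hu i (Nat.lt_succ_self i)
      simpa [hv] using h2
  rw [h]
  exact MeasurableSet.iUnion fun v =>
    MeasurableSpace.measurableSet_generateFrom ⟨_, _, rfl⟩

lemma pi_eq_generateFrom [Inhabited Y] :
    (inferInstance : MeasurableSpace (ℕ → Y)) = MeasurableSpace.generateFrom (Cyls Y) := by
  refine le_antisymm ?_ (MeasurableSpace.generateFrom_le ?_)
  · rw [show (inferInstance : MeasurableSpace (ℕ → Y)) =
        ⨆ i : ℕ, MeasurableSpace.comap (fun u : ℕ → Y => u i) inferInstance from rfl]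
    refine iSup_le fun i => ?_
    intro s hs
    obtain ⟨t, -, rfl⟩ := hs
    have h : (fun u : ℕ → Y => u i) ⁻¹' t = ⋃ a : t, (fun u : ℕ → Y => u i) ⁻¹' {(a : Y)} := by
      ext u
      simp only [Set.mem_preimage, Set.mem_iUnion, Set.mem_singleton_iff]
      exact ⟨fun hu => ⟨⟨u i, hu⟩, rfl⟩, fun ⟨a, ha⟩ => ha ▸ a.2⟩
    rw [h]
    exact MeasurableSet.iUnion fun a => eval_singleton_mem_gen i (a : Y)
  · rintro t ⟨m, y, rfl⟩
    exact cylSet_measurable m y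

lemma walk_measurable [Group Y] (k : ℕ) : Measurable (fun u : ℕ → Y => walk u k) := by
  haveI : MeasurableMul₂ Y := ⟨measurable_of_countable _⟩
  induction k with
  | zero => exact measurable_const
  | succ n ih =>
    simp only [walk]
    exact (measurable_pi_apply n).mul ih

def ILam [Group Y] (Λ : Set Y) (z : Y) : Set (ℕ → Y) :=
  {u | {k | walk u k * z ∈ Λ}.Infinite}

lemma ILam_measurable [Group Y] (Λ : Set Y) (z : Y) : MeasurableSet (ILam Λ z) := by
  haveI : MeasurableMul₂ Y := ⟨measurable_of_countable _⟩
  have h : ILam Λ z = ⋂ N : ℕ, ⋃ n : ℕ, ⋃ _ : N ≤ n, {u : ℕ → Y | walk u n * z ∈ Λ} := by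
    ext u
    simp only [ILam, Set.mem_setOf_eq, infinite_iff, Set.mem_iInter, Set.mem_iUnion, exists_prop]
  rw [h]
  exact MeasurableSet.iInter fun N => MeasurableSet.iUnion fun n => MeasurableSet.iUnion fun _ =>
    ((walk_measurable n).mul measurable_const) (allMeasurable Λ)

end Meas
end Stmt9Aux
namespace Stmt9Aux

def Phi {Y Ω : Type*} (ξ : ℕ → Ω → Y) (m : ℕ) (ω : Ω) : ℕ → Y := fun k => ξ (m + k) ω

def cylE {Y Ω : Type*} (ξ : ℕ → Ω → Y) (m : ℕ) (y : ℕ → Y) : Set Ω := {ω | ∀ i < m, ξ i ω = y i}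

def EvS {Y Ω : Type*} [Group Y] (S : ℕ → Ω → Y) (Λ : Set Y) (z : Y) : Set Ω :=
  {ω | {n | S n ω * z ∈ Λ}.Infinite}

end Stmt9Aux

open Stmt9Aux in
/-- If every bounded `μ`-harmonic function on a countable group `Y` (with `μ`
whose support generates `Y`) is constant, then for every `Λ ⊆ Y` the event that
the random walk visits `Λ` infinitely often has probability `0` or `1`. -/
theorem stmt9
    (Y : Type*) [Countable Y] [Group Y] [MeasurableSpace Y] [MeasurableSingletonClass Y]
    (μ : Y → ℝ≥0∞) (hμ1 : ∑' y, μ y = 1)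
    (hgen : Subgroup.closure {y : Y | μ y ≠ 0} = ⊤)
    (Ω : Type*) [MeasurableSpace Ω] (P : Measure Ω) [IsProbabilityMeasure P]
    (ξ : ℕ → Ω → Y) (hmeas : ∀ n, Measurable (ξ n))
    (hlaw : ∀ n y, P {ω | ξ n ω = y} = μ y)
    (hindep : ProbabilityTheory.iIndepFun ξ P)
    (S : ℕ → Ω → Y) (hS0 : ∀ ω, S 0 ω = 1)
    (hSrec : ∀ n ω, S (n + 1) ω = ξ n ω * S n ω)
    (hLiouville : ∀ h : Y → ℝ, (∃ C, ∀ x, |h x| ≤ C) →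
      (∀ x, h x = ∑' y, (μ y).toReal * h (y * x)) → ∀ x x', h x = h x') :
    ∀ Λ : Set Y, P {ω | {n : ℕ | S n ω ∈ Λ}.Infinite} = 0 ∨
      P {ω | {n : ℕ | S n ω ∈ Λ}.Infinite} = 1 := by
  intro Λ
  classical
  haveI : Inhabited Y := ⟨1⟩
  -- basic measurability
  have hΦ : ∀ m, Measurable (Phi ξ m) := fun m => measurable_pi_lambda _ fun k => hmeas _
  have hSwalk : ∀ n ω, S n ω = walk (Phi ξ 0 ω) n := by
    intro n ω
    induction n with
    | zero => rw [hS0]; rfl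
    | succ n ih =>
      rw [hSrec, ih]
      show _ = Phi ξ 0 ω n * walk (Phi ξ 0 ω) n
      rw [show Phi ξ 0 ω n = ξ (0 + n) ω from rfl, Nat.zero_add]
  have hEvpre : ∀ z, EvS S Λ z = Phi ξ 0 ⁻¹' ILam Λ z := by
    intro z
    ext ω
    show {n | S n ω * z ∈ Λ}.Infinite ↔ {k | walk (Phi ξ 0 ω) k * z ∈ Λ}.Infinite
    have h : {n | S n ω * z ∈ Λ} = {k | walk (Phi ξ 0 ω) k * z ∈ Λ} := by
      ext n; rw [Set.mem_setOf_eq, Set.mem_setOf_eq, hSwalk]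
    rw [h]
  have hEvMeas : ∀ z, MeasurableSet (EvS S Λ z) := fun z =>
    (hEvpre z) ▸ (hΦ 0) (ILam_measurable Λ z)
  -- cylinder events in Ω
  have hcylInter : ∀ m (y : ℕ → Y),
      cylE ξ m y = ⋂ i ∈ Finset.range m, ξ i ⁻¹' {y i} := by
    intro m y
    ext ω
    simp [cylE]
  have hfin : ∀ (T : Finset ℕ) (w : ℕ → Y),
      P (⋂ i ∈ T, ξ i ⁻¹' {w i}) = ∏ i ∈ T, μ (w i) := by
    intro T w
    rw [hindep.measure_inter_preimage_eq_mul T (sets := fun i => {w i})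
      (fun i _ => measurableSet_singleton _)]
    refine Finset.prod_congr rfl fun i _ => ?_
    have h : ξ i ⁻¹' {w i} = {ω | ξ i ω = w i} := by ext ω; simp
    rw [h, hlaw]
  have hcylP : ∀ m (y : ℕ → Y), P (cylE ξ m y) = ∏ i ∈ Finset.range m, μ (y i) := by
    intro m y; rw [hcylInter, hfin]
  have hcylMeas : ∀ m (y : ℕ → Y), MeasurableSet (cylE ξ m y) := by
    intro m y
    rw [hcylInter]
    exact MeasurableSet.biInter (Finset.range m).countable_toSet fun i _ =>
      (hmeas i) (measurableSet_singleton _)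
  have hΦ0cyl : ∀ r (z : ℕ → Y), Phi ξ 0 ⁻¹' cylSet r z = cylE ξ r z := by
    intro r z
    ext ω
    show (∀ i < r, Phi ξ 0 ω i = z i) ↔ _
    simp only [Phi, Nat.zero_add]
    rfl
  haveI hQprob : IsProbabilityMeasure (P.map (Phi ξ 0)) :=
    Measure.isProbabilityMeasure_map (hΦ 0).aemeasurable
  have hQcyl : ∀ r (z : ℕ → Y),
      (P.map (Phi ξ 0)) (cylSet r z) = ∏ i ∈ Finset.range r, μ (z i) := by
    intro r z
    rw [Measure.map_apply (hΦ 0) (cylSet_measurable r z), hΦ0cyl, hcylP]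
  -- Master lemma
  have ML : ∀ m (y : ℕ → Y) (s : Set (ℕ → Y)), MeasurableSet s →
      P (cylE ξ m y ∩ Phi ξ m ⁻¹' s) = P (cylE ξ m y) * P.map (Phi ξ 0) s := by
    intro m y s hs
    haveI : IsFiniteMeasure ((P.restrict (cylE ξ m y)).map (Phi ξ m)) :=
      Measure.isFiniteMeasure_map _ _
    have hmeq : (P.restrict (cylE ξ m y)).map (Phi ξ m) = P (cylE ξ m y) • P.map (Phi ξ 0) := by
      refine ext_of_generate_finite (Cyls Y) pi_eq_generateFrom isPiSystem_Cyls ?_ ?_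
      · rintro t ⟨r, z, rfl⟩
        rw [Measure.map_apply (hΦ m) (cylSet_measurable r z),
          Measure.restrict_apply ((hΦ m) (cylSet_measurable r z)),
          Measure.smul_apply, smul_eq_mul, hQcyl]
        have hset : Phi ξ m ⁻¹' cylSet r z ∩ cylE ξ m y =
            ⋂ j ∈ (Finset.range m ∪ (Finset.range r).image (fun i => m + i)),
              ξ j ⁻¹' {(fun j => if j < m then y j else z (j - m)) j} := by
          ext ω
          simp only [Set.mem_inter_iff, Set.mem_preimage, Set.mem_iInter, Finset.mem_union,
            Finset.mem_range, Finset.mem_image, Set.mem_singleton_iff]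
          constructor
          · rintro ⟨h1, h2⟩ j hj
            rcases hj with hj | ⟨i, hi, rfl⟩
            · simp only [hj, if_true]
              exact h2 j hj
            · have hnm : ¬ (m + i < m) := by omega
              simp only [hnm, if_false, Nat.add_sub_cancel_left]
              exact h1 i hi
          · intro h
            constructor
            · intro i hi
              have h' := h (m + i) (Or.inr ⟨i, hi, rfl⟩)
              have hnm : ¬ (m + i < m) := by omega
              exact (by simpa only [hnm, if_false, Nat.add_sub_cancel_left] using h' : ξ (m + i) ω = z i)
            · intro i hi
              have h' := h i (Or.inl hi)
              simpa only [hi, if_true] using h'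
        rw [hset, hfin, Finset.prod_union, Finset.prod_image (fun a _ b _ h => by omega), hcylP]
        · congr 1
          · refine Finset.prod_congr rfl fun j hj => ?_
            rw [if_pos (Finset.mem_range.mp hj)]
          · refine Finset.prod_congr rfl fun i _ => ?_
            have hnm : ¬ (m + i < m) := by omega
            rw [if_neg hnm, Nat.add_sub_cancel_left]
        · refine Finset.disjoint_left.mpr fun j hj hj' => ?_
          obtain ⟨i, hi, rfl⟩ := Finset.mem_image.mp hj'
          exact absurd (Finset.mem_range.mp hj) (by omega)
      · rw [Measure.map_apply (hΦ m) MeasurableSet.univ, Set.preimage_univ,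
          Measure.restrict_apply MeasurableSet.univ, Set.univ_inter,
          Measure.smul_apply, smul_eq_mul, measure_univ, mul_one]
    calc P (cylE ξ m y ∩ Phi ξ m ⁻¹' s)
        = (P.restrict (cylE ξ m y)).map (Phi ξ m) s := by
          rw [Measure.map_apply (hΦ m) hs, Measure.restrict_apply ((hΦ m) hs), Set.inter_comm]
      _ = P (cylE ξ m y) * P.map (Phi ξ 0) s := by
          rw [hmeq, Measure.smul_apply, smul_eq_mul]
  have hQE : ∀ z, P.map (Phi ξ 0) (ILam Λ z) = P (EvS S Λ z) := by
    intro z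
    rw [Measure.map_apply (hΦ 0) (ILam_measurable Λ z), ← hEvpre]
  -- Engine lemma
  have Engine : ∀ m (y : ℕ → Y) (x : Y),
      P (cylE ξ m y ∩ EvS S Λ x) = P (cylE ξ m y) * P (EvS S Λ (walk y m * x)) := by
    intro m y x
    have hkey : cylE ξ m y ∩ EvS S Λ x = cylE ξ m y ∩ Phi ξ m ⁻¹' ILam Λ (walk y m * x) := by
      ext ω
      simp only [Set.mem_inter_iff, and_congr_right_iff]
      intro hω
      have hSy : ∀ i, i ≤ m → S i ω = walk y i := by
        intro i
        induction i with
        | zero => intro _; rw [hS0]; rfl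
        | succ n ih =>
          intro hn
          rw [hSrec, ih (by omega), hω n (by omega)]
          rfl
      have hShift : ∀ k, S (m + k) ω = walk (Phi ξ m ω) k * walk y m := by
        intro k
        induction k with
        | zero =>
          show S m ω = walk (Phi ξ m ω) 0 * walk y m
          rw [hSy m le_rfl]
          show walk y m = 1 * walk y m
          rw [one_mul]
        | succ k ih =>
          show S ((m + k) + 1) ω = walk (Phi ξ m ω) (k + 1) * walk y m
          rw [hSrec, ih]
          show ξ (m + k) ω * (walk (Phi ξ m ω) k * walk y m)
            = Phi ξ m ω k * walk (Phi ξ m ω) k * walk y m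
          rw [show Phi ξ m ω k = ξ (m + k) ω from rfl, mul_assoc]
      show {n | S n ω * x ∈ Λ}.Infinite ↔ {k | walk (Phi ξ m ω) k * (walk y m * x) ∈ Λ}.Infinite
      have hterm : ∀ k, walk (Phi ξ m ω) k * (walk y m * x) = S (m + k) ω * x := by
        intro k; rw [hShift, mul_assoc]
      rw [infinite_iff, infinite_iff]
      constructor
      · intro h N
        obtain ⟨n, hn1, hn2⟩ := h (N + m)
        refine ⟨n - m, by omega, ?_⟩
        rw [hterm, show m + (n - m) = n by omega]
        exact hn2
      · intro h N
        obtain ⟨k, hk1, hk2⟩ := h N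
        refine ⟨m + k, by omega, ?_⟩
        rw [← hterm]
        exact hk2
    rw [hkey, ML m y _ (ILam_measurable Λ _), hQE]
  -- finiteness facts
  have hPfin : ∀ x, P (EvS S Λ x) ≠ ⊤ := fun x => measure_ne_top P _
  have hμtop : ∀ y : Y, μ y ≠ ⊤ := fun y =>
    ne_top_of_le_ne_top one_ne_top (hμ1 ▸ ENNReal.le_tsum y)
  -- harmonicity
  have hdec : ∀ x : Y, P (EvS S Λ x) = ∑' y : Y, μ y * P (EvS S Λ (y * x)) := by
    intro x
    have hcover : EvS S Λ x = ⋃ y : Y, ({ω | ξ 0 ω = y} ∩ EvS S Λ x) := by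
      ext ω
      simp only [Set.mem_iUnion, Set.mem_inter_iff, Set.mem_setOf_eq]
      exact ⟨fun h => ⟨ξ 0 ω, rfl, h⟩, fun ⟨y, _, h⟩ => h⟩
    have hdisj : Pairwise (Function.onFun Disjoint fun y : Y => {ω | ξ 0 ω = y} ∩ EvS S Λ x) := by
      intro a b hab
      refine Set.disjoint_left.mpr ?_
      rintro ω ⟨ha, -⟩ ⟨hb, -⟩
      exact hab (ha ▸ hb ▸ rfl)
    have hmeasi : ∀ y : Y, MeasurableSet ({ω | ξ 0 ω = y} ∩ EvS S Λ x) := fun y =>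
      ((hmeas 0) (measurableSet_singleton y)).inter (hEvMeas x)
    rw [hcover, measure_iUnion hdisj hmeasi]
    refine tsum_congr fun y => ?_
    have h1 : {ω | ξ 0 ω = y} = cylE ξ 1 (fun _ => y) := by
      ext ω
      simp only [Set.mem_setOf_eq, cylE, Nat.lt_one_iff]
      exact ⟨fun h i hi => hi ▸ h, fun h => h 0 rfl⟩
    rw [h1, Engine 1 (fun _ => y) x, hcylP]
    have hw1 : walk (fun _ : ℕ => y) 1 * x = y * x := by
      show y * 1 * x = y * x
      rw [mul_one]
    rw [hw1, Finset.prod_range_one]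
  have hconst : ∀ x, P (EvS S Λ x) = P (EvS S Λ 1) := by
    intro x
    have hharm : ∀ x : Y,
        (P (EvS S Λ x)).toReal = ∑' y : Y, (μ y).toReal * (P (EvS S Λ (y * x))).toReal := by
      intro x
      rw [hdec x, ENNReal.tsum_toReal_eq (fun y => ENNReal.mul_ne_top (hμtop y) (hPfin _))]
      exact tsum_congr fun y => ENNReal.toReal_mul
    have hb : ∀ x, |(P (EvS S Λ x)).toReal| ≤ 1 := by
      intro x
      rw [abs_of_nonneg ENNReal.toReal_nonneg]
      simpa using ENNReal.toReal_mono one_ne_top (prob_le_one (μ := P) (s := EvS S Λ x))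
    have h := hLiouville (fun x => (P (EvS S Λ x)).toReal) ⟨1, hb⟩ hharm x 1
    exact (ENNReal.toReal_eq_toReal_iff' (hPfin x) (hPfin 1)).mp h
  -- fixed point equation
  have hfix : P (EvS S Λ 1) * P (EvS S Λ 1) = P (EvS S Λ 1) := by
    haveI : IsFiniteMeasure ((P.map (Phi ξ 0)).restrict (ILam Λ 1)) := inferInstance
    have hmeq2 : (P.map (Phi ξ 0)).restrict (ILam Λ 1) = P (EvS S Λ 1) • P.map (Phi ξ 0) := by
      refine ext_of_generate_finite (Cyls Y) pi_eq_generateFrom isPiSystem_Cyls ?_ ?_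
      · rintro t ⟨r, z, rfl⟩
        rw [Measure.restrict_apply (cylSet_measurable r z),
          Measure.map_apply (hΦ 0) ((cylSet_measurable r z).inter (ILam_measurable Λ 1))]
        have h : Phi ξ 0 ⁻¹' (cylSet r z ∩ ILam Λ 1) = cylE ξ r z ∩ EvS S Λ 1 := by
          rw [Set.preimage_inter, hΦ0cyl, hEvpre]
        rw [h, Engine r z 1, hconst (walk z r * 1), Measure.smul_apply, smul_eq_mul,
          Measure.map_apply (hΦ 0) (cylSet_measurable r z), hΦ0cyl, mul_comm]
      · rw [Measure.restrict_apply MeasurableSet.univ, Set.univ_inter,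
          Measure.map_apply (hΦ 0) (ILam_measurable Λ 1), ← hEvpre,
          Measure.smul_apply, smul_eq_mul, measure_univ, mul_one]
    have e1 : P (EvS S Λ 1) = (P.map (Phi ξ 0)).restrict (ILam Λ 1) (ILam Λ 1) := by
      rw [Measure.restrict_apply (ILam_measurable Λ 1), Set.inter_self,
        Measure.map_apply (hΦ 0) (ILam_measurable Λ 1), ← hEvpre]
    have e2 : (P (EvS S Λ 1) • P.map (Phi ξ 0)) (ILam Λ 1)
        = P (EvS S Λ 1) * P (EvS S Λ 1) := by
      rw [Measure.smul_apply, smul_eq_mul, Measure.map_apply (hΦ 0) (ILam_measurable Λ 1),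
        ← hEvpre]
    rw [← e2, ← hmeq2, ← e1]
  -- conclusion
  have hgoal : {ω | {n : ℕ | S n ω ∈ Λ}.Infinite} = EvS S Λ 1 := by
    ext ω
    show {n | S n ω ∈ Λ}.Infinite ↔ {n | S n ω * 1 ∈ Λ}.Infinite
    simp only [mul_one]
  rw [hgoal]
  rcases eq_or_ne (P (EvS S Λ 1)) 0 with h0 | h0
  · exact Or.inl h0
  · refine Or.inr ?_
    have hr : (P (EvS S Λ 1)).toReal * (P (EvS S Λ 1)).toReal = (P (EvS S Λ 1)).toReal := by
      rw [← ENNReal.toReal_mul, hfix]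
    have hrne : (P (EvS S Λ 1)).toReal ≠ 0 := ENNReal.toReal_ne_zero.mpr ⟨h0, hPfin 1⟩
    have hr1 : (P (EvS S Λ 1)).toReal = 1 :=
      mul_right_cancel₀ hrne (by rw [hr, one_mul])
    rw [← ENNReal.toReal_one] at hr1
    exact (ENNReal.toReal_eq_toReal_iff' (hPfin 1) ENNReal.one_ne_top).mp hr1
end

section
/- Let μ be a probability measure on a countable group Y whose support generates Y, and let (S_n) be the associated left random walk. If for every Λ ⊆ Y the probability P[S_n ∈ Λ infinitely often] is 0 or 1, then every bounded μ-harmonic function on Y is constant. -/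
open MeasureTheory ENNReal
open scoped Classical

/-- The group word `v (n-1) * ⋯ * v 0`. -/
def stmt10wd {Y : Type*} [Group Y] : (n : ℕ) → (Fin n → Y) → Y
  | 0, _ => 1
  | n + 1, v => v (Fin.last n) * stmt10wd n (Fin.init v)

theorem stmt10aux_meas {Y : Type*} [Countable Y] [MeasurableSpace Y]
    [MeasurableSingletonClass Y] {n : ℕ} (s : Set (Fin n → Y)) : MeasurableSet s := by
  have h1 : ∀ v : Fin n → Y, MeasurableSet ({v} : Set (Fin n → Y)) := by
    intro v
    have : ({v} : Set (Fin n → Y)) = ⋂ i, (fun w : Fin n → Y => w i) ⁻¹' {v i} := by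
      ext w
      simp [funext_iff, eq_comm]
    rw [this]
    exact MeasurableSet.iInter fun i => measurable_pi_apply i (measurableSet_singleton _)
  have h2 : s = ⋃ v ∈ s, {v} := by simp
  rw [h2]
  exact MeasurableSet.biUnion (Set.to_countable s) fun v _ => h1 v

theorem stmt10aux_measF {Y : Type*} [Countable Y] [MeasurableSpace Y]
    [MeasurableSingletonClass Y] {n : ℕ} {β : Type*} [MeasurableSpace β]
    (F : (Fin n → Y) → β) : Measurable F := fun _ _ => stmt10aux_meas _

/-- Conversely, if for every `Λ ⊆ Y` the probability that the random walk visits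
`Λ` infinitely often is `0` or `1`, then every bounded `μ`-harmonic function on
`Y` is constant. -/
theorem stmt10
    (Y : Type*) [Countable Y] [Group Y] [MeasurableSpace Y] [MeasurableSingletonClass Y]
    (μ : Y → ℝ≥0∞) (hμ1 : ∑' y, μ y = 1)
    (hgen : Subgroup.closure {y : Y | μ y ≠ 0} = ⊤)
    (Ω : Type*) [MeasurableSpace Ω] (P : Measure Ω) [IsProbabilityMeasure P]
    (ξ : ℕ → Ω → Y) (hmeas : ∀ n, Measurable (ξ n))
    (hlaw : ∀ n y, P {ω | ξ n ω = y} = μ y)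
    (hindep : ProbabilityTheory.iIndepFun ξ P)
    (S : ℕ → Ω → Y) (hS0 : ∀ ω, S 0 ω = 1)
    (hSrec : ∀ n ω, S (n + 1) ω = ξ n ω * S n ω)
    (hzeroone : ∀ Λ : Set Y, P {ω | {n : ℕ | S n ω ∈ Λ}.Infinite} = 0 ∨
      P {ω | {n : ℕ | S n ω ∈ Λ}.Infinite} = 1) :
    ∀ h : Y → ℝ, (∃ C, ∀ x, |h x| ≤ C) →
      (∀ x, h x = ∑' y, (μ y).toReal * h (y * x)) → ∀ x x', h x = h x' := by
  intro h hb hharm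
  obtain ⟨C, hC⟩ := hb
  have hC0 : 0 ≤ C := le_trans (abs_nonneg _) (hC 1)
  -- basic facts about μ
  have hμfin : ∀ y, μ y ≠ ∞ := by
    intro y
    intro hy
    have : μ y ≤ 1 := hμ1 ▸ ENNReal.le_tsum y
    simp [hy] at this
  -- tuples of increments
  set tup : (n : ℕ) → Ω → (Fin n → Y) := fun n ω i => ξ i ω with htup
  have htup_meas : ∀ n, Measurable (tup n) := fun n =>
    measurable_pi_lambda _ fun i => hmeas i
  have htupinit : ∀ (n : ℕ) (ω : Ω), Fin.init (tup (n + 1) ω) = tup n ω := by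
    intro n ω
    funext i
    simp [htup, Fin.init]
  have hwd : ∀ n ω, S n ω = stmt10wd n (tup n ω) := by
    intro n
    induction n with
    | zero => intro ω; simp [stmt10wd, hS0]
    | succ n ih =>
      intro ω
      rw [hSrec n ω, ih ω]
      show _ = stmt10wd (n+1) (tup (n+1) ω)
      rw [stmt10wd, htupinit]
      rfl
  have hSmeas : ∀ n, Measurable (S n) := by
    intro n
    have : Measurable fun ω => stmt10wd n (tup n ω) :=
      (stmt10aux_measF _).comp (htup_meas n)
    convert this using 1
    funext ω
    exact hwd n ω
  -- law of the tuples
  have hlaw' : ∀ (n : ℕ) (v : Fin n → Y), P (tup n ⁻¹' {v}) = ∏ i, μ (v i) := by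
    intro n v
    set w : ℕ → Y := fun i => if hi : i < n then v ⟨i, hi⟩ else 1 with hwdef
    have heq : tup n ⁻¹' {v} = ⋂ i ∈ Finset.range n, ξ i ⁻¹' {w i} := by
      ext ω
      simp only [Set.mem_preimage, Set.mem_singleton_iff, Set.mem_iInter, Finset.mem_range]
      constructor
      · intro hv i hi
        rw [hwdef]
        simp only [hi, dif_pos]
        rw [← hv]
      · intro hv
        funext i
        have := hv i i.isLt
        simpa [htup, hwdef, i.isLt] using this
    rw [heq]
    rw [hindep.meas_biInter (fun i _ => ⟨{w i}, measurableSet_singleton _, rfl⟩)]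
    have : ∀ i ∈ Finset.range n, P (ξ i ⁻¹' {w i}) = μ (w i) := by
      intro i _
      exact hlaw i (w i)
    rw [Finset.prod_congr rfl this]
    rw [← Fin.prod_univ_eq_prod_range (fun i => μ (w i)) n]
    apply Finset.prod_congr rfl
    intro i _
    congr 1
    simp [hwdef, i.isLt]
  have hsum1 : ∀ n : ℕ, ∑' v : Fin n → Y, P (tup n ⁻¹' {v}) = 1 := by
    intro n
    have hdisj : Pairwise (Function.onFun Disjoint fun v : Fin n → Y => tup n ⁻¹' {v}) := by
      intro v v' hvv'
      refine Set.disjoint_left.mpr ?_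
      intro ω hv hv'
      exact hvv' (hv.symm.trans hv')
    have hcover : (⋃ v : Fin n → Y, tup n ⁻¹' {v}) = Set.univ := by
      ext ω
      simp only [Set.mem_iUnion, Set.mem_preimage, Set.mem_singleton_iff, Set.mem_univ, iff_true]
      exact ⟨tup n ω, rfl⟩
    have := measure_iUnion (μ := P) hdisj (fun v => (htup_meas n) (stmt10aux_meas {v}))
    rw [hcover] at this
    rw [← this]
    simp
  have hwsummable : ∀ n : ℕ, Summable fun v : Fin n → Y => (P (tup n ⁻¹' {v})).toReal :=
    fun n => ENNReal.summable_toReal (by rw [hsum1 n]; exact one_ne_top)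
  have hFsummable : ∀ (n : ℕ) (F : (Fin n → Y) → ℝ) (D : ℝ), (∀ v, |F v| ≤ D) →
      Summable fun v => (P (tup n ⁻¹' {v})).toReal * F v := by
    intro n F D hF
    refine Summable.of_norm_bounded ((hwsummable n).mul_right D) ?_
    intro v
    rw [Real.norm_eq_abs, abs_mul, abs_of_nonneg ENNReal.toReal_nonneg]
    exact mul_le_mul_of_nonneg_left (hF v) ENNReal.toReal_nonneg
  have hL2 : ∀ (n : ℕ) (F : (Fin n → Y) → ℝ) (D : ℝ), (∀ v, |F v| ≤ D) →
      ∫ ω, F (tup n ω) ∂P = ∑' v, (P (tup n ⁻¹' {v})).toReal * F v := by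
    intro n F D hF
    have hFmeas : Measurable F := stmt10aux_measF F
    have hmap : IsProbabilityMeasure (P.map (tup n)) :=
      Measure.isProbabilityMeasure_map (htup_meas n).aemeasurable
    have hFint : Integrable F (P.map (tup n)) := by
      refine (integrable_const D).mono' hFmeas.aestronglyMeasurable ?_
      exact Filter.Eventually.of_forall fun v => (Real.norm_eq_abs _) ▸ hF v
    rw [← integral_map (htup_meas n).aemeasurable hFmeas.aestronglyMeasurable]
    rw [integral_countable' hFint]
    congr 1
    funext v
    rw [measureReal_def, Measure.map_apply (htup_meas n) (stmt10aux_meas {v}), smul_eq_mul]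
  -- the key one-step identity
  have hMASTER : ∀ (xx : Y) (n : ℕ) (G : (Fin n → Y) → ℝ) (D : ℝ), (∀ v, |G v| ≤ D) →
      ∫ ω, h (S (n+1) ω * xx) * G (tup n ω) ∂P = ∫ ω, h (S n ω * xx) * G (tup n ω) ∂P := by
    intro xx n G D hG
    have hD0 : 0 ≤ D := le_trans (abs_nonneg _) (hG fun _ => 1)
    set F₁ : (Fin (n+1) → Y) → ℝ := fun v => h (stmt10wd (n+1) v * xx) * G (Fin.init v) with hF₁
    set F₂ : (Fin n → Y) → ℝ := fun w => h (stmt10wd n w * xx) * G w with hF₂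
    have hF₁b : ∀ v, |F₁ v| ≤ C * D := by
      intro v
      rw [hF₁, abs_mul]
      exact mul_le_mul (hC _) (hG _) (abs_nonneg _) hC0
    have hF₂b : ∀ w, |F₂ w| ≤ C * D := by
      intro w
      rw [hF₂, abs_mul]
      exact mul_le_mul (hC _) (hG _) (abs_nonneg _) hC0
    have hlhs : ∀ ω, h (S (n+1) ω * xx) * G (tup n ω) = F₁ (tup (n+1) ω) := by
      intro ω
      simp only [hF₁]
      rw [hwd (n+1) ω, htupinit]
    have hrhs : ∀ ω, h (S n ω * xx) * G (tup n ω) = F₂ (tup n ω) := by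
      intro ω
      simp only [hF₂]
      rw [hwd n ω]
    simp only [hlhs, hrhs]
    rw [hL2 (n+1) F₁ (C*D) hF₁b, hL2 n F₂ (C*D) hF₂b]
    -- now a computation with sums
    set e : ((Fin n → Y) × Y) ≃ (Fin (n+1) → Y) :=
      { toFun := fun p => Fin.snoc p.1 p.2
        invFun := fun v => (Fin.init v, v (Fin.last n))
        left_inv := fun p => by simp
        right_inv := fun v => by simp [Fin.snoc_init_self] } with he
    set p1 : (Fin (n+1) → Y) → ℝ := fun v => (P (tup (n+1) ⁻¹' {v})).toReal * F₁ v with hp1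
    have hs1 : Summable p1 := hFsummable (n+1) F₁ (C*D) hF₁b
    have hs2 : Summable (p1 ∘ e) := (Equiv.summable_iff e).mpr hs1
    have hterm : ∀ (w : Fin n → Y) (y : Y), p1 (e (w, y)) =
        ((P (tup n ⁻¹' {w})).toReal * G w) * ((μ y).toReal * h (y * (stmt10wd n w * xx))) := by
      intro w y
      have h1 : P (tup (n+1) ⁻¹' {Fin.snoc w y}) = P (tup n ⁻¹' {w}) * μ y := by
        rw [hlaw' (n+1), hlaw' n, Fin.prod_univ_castSucc]
        simp
      have h2 : stmt10wd (n+1) (Fin.snoc w y) = y * stmt10wd n w := by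
        rw [stmt10wd]
        simp
      have h3 : F₁ (Fin.snoc w y) = h (y * (stmt10wd n w * xx)) * G w := by
        simp only [hF₁]
        rw [h2, Fin.init_snoc, mul_assoc]
      show p1 (Fin.snoc w y) = _
      simp only [hp1]
      rw [h1, h3, ENNReal.toReal_mul]
      ring
    calc ∑' v, p1 v = ∑' (p : (Fin n → Y) × Y), p1 (e p) := (Equiv.tsum_eq e p1).symm
      _ = ∑' (w : Fin n → Y), ∑' (y : Y), p1 (e (w, y)) := Summable.tsum_prod' hs2 hs2.prod_factor
      _ = ∑' (w : Fin n → Y), (P (tup n ⁻¹' {w})).toReal * F₂ w := by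
          apply tsum_congr
          intro w
          calc ∑' (y : Y), p1 (e (w, y))
              = ∑' (y : Y), ((P (tup n ⁻¹' {w})).toReal * G w) *
                ((μ y).toReal * h (y * (stmt10wd n w * xx))) := tsum_congr fun y => hterm w y
            _ = ((P (tup n ⁻¹' {w})).toReal * G w) *
                ∑' (y : Y), (μ y).toReal * h (y * (stmt10wd n w * xx)) := tsum_mul_left
            _ = ((P (tup n ⁻¹' {w})).toReal * G w) * h (stmt10wd n w * xx) := by
                rw [← hharm (stmt10wd n w * xx)]
            _ = (P (tup n ⁻¹' {w})).toReal * F₂ w := by rw [hF₂]; ring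
  -- the heart: h (y x) = h x for y in the support of μ
  have key : ∀ (x yy : Y), μ yy ≠ 0 → h (yy * x) = h x := by
    intro x
    set M : ℕ → Ω → ℝ := fun n ω => h (S n ω * x) with hM
    have hMmeas : ∀ n, Measurable (M n) := by
      intro n
      have hY : Measurable fun z : Y => h (z * x) := fun s _ => (Set.to_countable _).measurableSet
      exact hY.comp (hSmeas n)
    have hMb : ∀ n ω, |M n ω| ≤ C := fun n ω => hC _
    have hMint : ∀ n, Integrable (M n) P := by
      intro n
      refine (integrable_const C).mono' (hMmeas n).aestronglyMeasurable ?_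
      exact Filter.Eventually.of_forall fun ω => (Real.norm_eq_abs _) ▸ hMb n ω
    have hEM : ∀ n, ∫ ω, M n ω ∂P = h x := by
      intro n
      induction n with
      | zero =>
        have : ∀ ω, M 0 ω = h x := by
          intro ω
          simp only [hM]
          rw [hS0 ω, one_mul]
        simp only [this]
        simp [integral_const]
      | succ n ih =>
        have := hMASTER x n (fun _ => (1:ℝ)) 1 (by norm_num)
        simp only [mul_one] at this
        rw [← ih]
        exact this
    -- the filtration generated by the increments
    set ℱ : Filtration ℕ (inferInstance : MeasurableSpace Ω) :=
      { seq := fun n => MeasurableSpace.comap (tup n) inferInstance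
        mono' := by
          intro n m hnm
          intro s hs
          rw [MeasurableSpace.measurableSet_comap] at hs ⊢
          obtain ⟨B, hB, rfl⟩ := hs
          refine ⟨(fun v : Fin m → Y => (fun i : Fin n => v (Fin.castLE hnm i))) ⁻¹' B,
            stmt10aux_meas _, ?_⟩
          rw [← Set.preimage_comp]
          rfl
        le' := fun n => (htup_meas n).comap_le } with hℱ
    have hℱn : ∀ n, ℱ n = MeasurableSpace.comap (tup n) inferInstance := fun n => rfl
    have hadp : StronglyAdapted ℱ M := by
      intro n
      have htupm : @Measurable Ω _ (ℱ n) _ (tup n) := by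
        rw [hℱn]
        exact Measurable.of_comap_le le_rfl
      have : M n = fun ω => h (stmt10wd n (tup n ω) * x) := by
        funext ω
        simp only [hM]
        rw [hwd n ω]
      rw [this]
      exact (Measurable.stronglyMeasurable
        ((stmt10aux_measF (fun v : Fin n → Y => h (stmt10wd n v * x))).comp htupm))
    have hmart : Martingale M ℱ P := by
      refine martingale_nat hadp hMint ?_
      intro n
      refine (ae_eq_condExp_of_forall_setIntegral_eq (ℱ.le n) (hMint (n+1))
        (fun s _ _ => (hMint n).integrableOn) ?_
        ((hadp n).aestronglyMeasurable))
      intro s hs _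
      have hs' := hs
      rw [hℱn, MeasurableSpace.measurableSet_comap] at hs'
      obtain ⟨B, hB, rfl⟩ := hs'
      have hind : ∀ (k : ℕ), ∫ ω in tup n ⁻¹' B, M k ω ∂P
          = ∫ ω, M k ω * Set.indicator B (fun _ => (1:ℝ)) (tup n ω) ∂P := by
        intro k
        rw [← integral_indicator ((htup_meas n) (stmt10aux_meas B))]
        congr 1
        funext ω
        by_cases hω : tup n ω ∈ B <;> simp [Set.indicator, hω]
      rw [hind n, hind (n+1)]
      have hGb : ∀ v : Fin n → Y, |Set.indicator B (fun _ => (1:ℝ)) v| ≤ 1 := by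
        intro v
        by_cases hv : v ∈ B <;> simp [Set.indicator, hv]
      exact (hMASTER x n (Set.indicator B (fun _ => (1:ℝ))) 1 hGb).symm
    have hbdd' : ∀ n, eLpNorm (M n) 1 P ≤ ENNReal.ofReal C := by
      intro n
      have := eLpNorm_le_of_ae_bound (f := M n) (p := 1) (μ := P) (C := C)
        (Filter.Eventually.of_forall fun ω => (Real.norm_eq_abs _) ▸ hMb n ω)
      simpa using this
    have hconv : ∀ᵐ ω ∂P, ∃ c, Filter.Tendsto (fun n => M n ω) Filter.atTop (nhds c) :=
      hmart.submartingale.exists_ae_tendsto_of_bdd hbdd'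
    -- the limit is a.s. constant, by the zero-one law
    have hlim : ∃ c : ℝ, ∀ᵐ ω ∂P, Filter.Tendsto (fun n => M n ω) Filter.atTop (nhds c) := by
      have hq : ∀ q : ℚ, ∃ b : Bool, ∀ᵐ ω ∂P, ∀ c : ℝ,
          Filter.Tendsto (fun n => M n ω) Filter.atTop (nhds c) →
          (if b then (q:ℝ) ≤ c else c ≤ (q:ℝ)) := by
        intro q
        set Λ : Set Y := {z | h (z * x) < (q:ℝ)} with hΛ
        have hAm : MeasurableSet {ω | {n : ℕ | S n ω ∈ Λ}.Infinite} := by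
          have : {ω | {n : ℕ | S n ω ∈ Λ}.Infinite}
              = ⋂ N : ℕ, ⋃ n : ℕ, ⋃ _ : N < n, S n ⁻¹' Λ := by
            ext ω
            simp only [Set.mem_setOf_eq, Set.infinite_iff_exists_gt, Set.mem_iInter,
              Set.mem_iUnion, Set.mem_preimage]
            constructor
            · intro H i
              obtain ⟨b, hb1, hb2⟩ := H i
              exact ⟨b, hb2, hb1⟩
            · intro H i
              obtain ⟨b, hb1, hb2⟩ := H i
              exact ⟨b, hb2, hb1⟩
          rw [this]
          exact MeasurableSet.iInter fun N => MeasurableSet.iUnion fun n =>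
            MeasurableSet.iUnion fun _ => (hSmeas n) ((Set.to_countable Λ).measurableSet)
        rcases hzeroone Λ with h0 | h1
        · refine ⟨true, ?_⟩
          have hae : ∀ᵐ ω ∂P, ¬ {n : ℕ | S n ω ∈ Λ}.Infinite := by
            rw [MeasureTheory.ae_iff]
            simpa using h0
          filter_upwards [hae] with ω hω c hc
          simp only [if_true]
          rw [Set.not_infinite] at hω
          have hev : ∀ᶠ n in Filter.atTop, (q:ℝ) ≤ M n ω := by
            have h2 := Set.Finite.eventually_cofinite_notMem hω
            rw [Nat.cofinite_eq_atTop] at h2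
            refine h2.mono fun n hn => ?_
            have : ¬ (M n ω < (q:ℝ)) := hn
            linarith [not_lt.mp this]
          exact ge_of_tendsto hc hev
        · refine ⟨false, ?_⟩
          have hae : ∀ᵐ ω ∂P, {n : ℕ | S n ω ∈ Λ}.Infinite := by
            have hcompl : P {ω | {n : ℕ | S n ω ∈ Λ}.Infinite}ᶜ = 0 := by
              rw [measure_compl hAm (measure_ne_top P _), h1]
              simp
            exact MeasureTheory.mem_ae_iff.mpr hcompl
          filter_upwards [hae] with ω hω c hc
          rw [if_neg (by simp)]
          by_contra hqc
          push_neg at hqc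
          have hev : ∀ᶠ n in Filter.atTop, (q:ℝ) < M n ω :=
            hc.eventually (eventually_gt_nhds hqc)
          have hfreq : ∃ᶠ n in Filter.atTop, M n ω < (q:ℝ) := by
            rw [← Nat.cofinite_eq_atTop]
            exact Filter.frequently_cofinite_iff_infinite.mpr hω
          obtain ⟨n, h1', h2'⟩ := (hfreq.and_eventually hev).exists
          linarith
      choose b hb using hq
      have hae2 : ∀ᵐ ω ∂P, (∃ c, Filter.Tendsto (fun n => M n ω) Filter.atTop (nhds c)) ∧
          ∀ q : ℚ, ∀ c : ℝ, Filter.Tendsto (fun n => M n ω) Filter.atTop (nhds c) →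
            (if b q then (q:ℝ) ≤ c else c ≤ (q:ℝ)) := by
        refine hconv.and ?_
        rw [MeasureTheory.ae_all_iff]
        exact hb
      have hmono : ∀ c c' : ℝ,
          (∀ q : ℚ, (if b q then (q:ℝ) ≤ c else c ≤ (q:ℝ))) →
          (∀ q : ℚ, (if b q then (q:ℝ) ≤ c' else c' ≤ (q:ℝ))) → c' ≤ c := by
        intro c c' h1 h2
        by_contra hlt
        push_neg at hlt
        obtain ⟨q, hq1, hq2⟩ := exists_rat_btwn hlt
        have e1 := h1 q
        have e2 := h2 q
        cases hbq : b q <;> rw [hbq] at e1 e2 <;> simp at e1 e2 <;> linarith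
      haveI : (MeasureTheory.ae P).NeBot :=
        MeasureTheory.ae_neBot.mpr (IsProbabilityMeasure.ne_zero P)
      obtain ⟨ω₀, hω₀⟩ := hae2.exists
      obtain ⟨c₀, hc₀⟩ := hω₀.1
      refine ⟨c₀, ?_⟩
      filter_upwards [hae2] with ω hω
      obtain ⟨c, hc⟩ := hω.1
      have e1 : ∀ q : ℚ, (if b q then (q:ℝ) ≤ c else c ≤ (q:ℝ)) := fun q => hω.2 q c hc
      have e0 : ∀ q : ℚ, (if b q then (q:ℝ) ≤ c₀ else c₀ ≤ (q:ℝ)) := fun q => hω₀.2 q c₀ hc₀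
      have : c = c₀ := le_antisymm (hmono c₀ c e0 e1) (hmono c c₀ e1 e0)
      rw [← this]
      exact hc
    obtain ⟨c₀, hc₀⟩ := hlim
    -- identify the constant
    have hval : c₀ = h x := by
      have ht1 : Filter.Tendsto (fun n => ∫ ω, M n ω ∂P) Filter.atTop
          (nhds (∫ _ω, c₀ ∂P)) := by
        refine MeasureTheory.tendsto_integral_of_dominated_convergence (fun _ => C)
          (fun n => (hMmeas n).aestronglyMeasurable) (integrable_const C)
          (fun n => Filter.Eventually.of_forall fun ω => (Real.norm_eq_abs _) ▸ hMb n ω) ?_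
        exact hc₀
      have h2 : (∫ _ω, c₀ ∂P) = c₀ := by simp
      rw [h2] at ht1
      have h3 : (fun n => ∫ ω, M n ω ∂P) = fun _ => h x := funext fun n => hEM n
      rw [h3] at ht1
      exact (tendsto_nhds_unique tendsto_const_nhds ht1).symm
    have hMtend : ∀ᵐ ω ∂P, Filter.Tendsto (fun n => M n ω) Filter.atTop (nhds (h x)) := by
      rw [← hval]
      exact hc₀
    -- second moment computation
    have hJ : ∀ n, 1 ≤ n → ∫ ω, M n ω * M 1 ω ∂P = ∫ ω, M 1 ω * M 1 ω ∂P := by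
      intro n hn
      induction n with
      | zero => omega
      | succ n ih =>
        rcases Nat.lt_or_ge n 1 with hn0 | hn1
        · interval_cases n
          rfl
        · have hpos : 0 < n := hn1
          set G : (Fin n → Y) → ℝ := fun v => h (v ⟨0, hpos⟩ * x) with hG
          have hGb : ∀ v, |G v| ≤ C := fun v => hC _
          have hM1 : ∀ ω, M 1 ω = G (tup n ω) := by
            intro ω
            simp only [hM, hG]
            rw [hSrec 0 ω, hS0 ω, mul_one]
          calc ∫ ω, M (n+1) ω * M 1 ω ∂P
              = ∫ ω, h (S (n+1) ω * x) * G (tup n ω) ∂P := by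
                congr 1
                funext ω
                rw [← hM1 ω]
            _ = ∫ ω, h (S n ω * x) * G (tup n ω) ∂P := hMASTER x n G C hGb
            _ = ∫ ω, M n ω * M 1 ω ∂P := by
                congr 1
                funext ω
                rw [← hM1 ω]
            _ = _ := ih hn1
    have hJ1 : ∫ ω, M 1 ω * M 1 ω ∂P = ∑' z, (μ z).toReal * (h (z * x) * h (z * x)) := by
      set F : (Fin 1 → Y) → ℝ := fun v => h (stmt10wd 1 v * x) * h (stmt10wd 1 v * x) with hF
      have hFb : ∀ v, |F v| ≤ C * C := by
        intro v
        rw [hF, abs_mul]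
        exact mul_le_mul (hC _) (hC _) (abs_nonneg _) hC0
      have hstep : ∀ ω, M 1 ω * M 1 ω = F (tup 1 ω) := by
        intro ω
        simp only [hM, hF]
        rw [hwd 1 ω]
      calc ∫ ω, M 1 ω * M 1 ω ∂P = ∫ ω, F (tup 1 ω) ∂P := by
            congr 1
            funext ω
            exact hstep ω
        _ = ∑' v, (P (tup 1 ⁻¹' {v})).toReal * F v := hL2 1 F (C*C) hFb
        _ = ∑' z, (μ z).toReal * (h (z * x) * h (z * x)) := by
            rw [← Equiv.tsum_eq (Equiv.funUnique (Fin 1) Y).symm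
              (fun v => (P (tup 1 ⁻¹' {v})).toReal * F v)]
            apply tsum_congr
            intro z
            have h1 : P (tup 1 ⁻¹' {(Equiv.funUnique (Fin 1) Y).symm z}) = μ z := by
              rw [hlaw' 1]
              simp [Equiv.funUnique]
            have h2 : stmt10wd 1 ((Equiv.funUnique (Fin 1) Y).symm z) = z := by
              simp [stmt10wd, Equiv.funUnique]
            simp only [hF, h1, h2]
    have hvar : ∑' z, (μ z).toReal * (h (z * x) * h (z * x)) = h x * h x := by
      have hseq : ∀ᶠ n in Filter.atTop,
          (∫ ω, M n ω * M 1 ω ∂P) = ∫ ω, M 1 ω * M 1 ω ∂P :=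
        Filter.eventually_atTop.mpr ⟨1, hJ⟩
      have htend2 : Filter.Tendsto (fun n => ∫ ω, M n ω * M 1 ω ∂P) Filter.atTop
          (nhds (∫ ω, h x * M 1 ω ∂P)) := by
        refine MeasureTheory.tendsto_integral_of_dominated_convergence (fun _ => C * C)
          (fun n => ((hMmeas n).mul (hMmeas 1)).aestronglyMeasurable) (integrable_const (C*C))
          ?_ ?_
        · intro n
          refine Filter.Eventually.of_forall fun ω => ?_
          rw [Real.norm_eq_abs, abs_mul]
          exact mul_le_mul (hMb n ω) (hMb 1 ω) (abs_nonneg _) hC0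
        · filter_upwards [hMtend] with ω hω
          exact hω.mul_const (M 1 ω)
      have h2 : (∫ ω, h x * M 1 ω ∂P) = h x * h x := by
        rw [integral_const_mul, hEM 1]
      have h3 : Filter.Tendsto (fun _ : ℕ => ∫ ω, M 1 ω * M 1 ω ∂P) Filter.atTop
          (nhds (∫ ω, h x * M 1 ω ∂P)) := htend2.congr' hseq
      have h4 := tendsto_nhds_unique h3 tendsto_const_nhds
      rw [← hJ1, ← h4, h2]
    -- conclude by positivity
    intro yy hyy
    set a : Y → ℝ := fun z => (μ z).toReal with ha
    have s0 : Summable a := ENNReal.summable_toReal (by rw [hμ1]; exact one_ne_top)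
    have s1 : Summable fun z => a z * h (z * x) := by
      refine Summable.of_norm_bounded (s0.mul_right C) ?_
      intro z
      rw [Real.norm_eq_abs, abs_mul, abs_of_nonneg ENNReal.toReal_nonneg]
      exact mul_le_mul_of_nonneg_left (hC _) ENNReal.toReal_nonneg
    have s2 : Summable fun z => a z * (h (z * x) * h (z * x)) := by
      refine Summable.of_norm_bounded (s0.mul_right (C*C)) ?_
      intro z
      rw [Real.norm_eq_abs, abs_mul, abs_of_nonneg ENNReal.toReal_nonneg, abs_mul]
      exact mul_le_mul_of_nonneg_left
        (mul_le_mul (hC _) (hC _) (abs_nonneg _) hC0) ENNReal.toReal_nonneg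
    have hsum_a : ∑' z, a z = 1 := by
      rw [ha, ← ENNReal.tsum_toReal_eq hμfin, hμ1]
      simp
    have hexp : ∀ z, a z * (h (z * x) - h x)^2
        = a z * (h (z * x) * h (z * x)) - (2 * h x) * (a z * h (z * x))
          + (h x * h x) * a z := by
      intro z
      ring
    have s3 : Summable fun z => a z * (h (z * x) - h x)^2 := by
      refine Summable.congr ?_ (fun z => (hexp z).symm)
      exact (s2.sub (s1.mul_left (2 * h x))).add (s0.mul_left (h x * h x))
    have hzero : ∑' z, a z * (h (z * x) - h x)^2 = 0 := by
      calc ∑' z, a z * (h (z * x) - h x)^2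
          = ∑' z, (a z * (h (z * x) * h (z * x)) - (2 * h x) * (a z * h (z * x))
            + (h x * h x) * a z) := tsum_congr hexp
        _ = (∑' z, (a z * (h (z * x) * h (z * x)) - (2 * h x) * (a z * h (z * x))))
            + ∑' z, (h x * h x) * a z :=
              Summable.tsum_add (s2.sub (s1.mul_left (2 * h x))) (s0.mul_left (h x * h x))
        _ = ((∑' z, a z * (h (z * x) * h (z * x))) - ∑' z, (2 * h x) * (a z * h (z * x)))
            + ∑' z, (h x * h x) * a z := by
              rw [Summable.tsum_sub s2 (s1.mul_left (2 * h x))]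
        _ = 0 := by
              rw [tsum_mul_left, tsum_mul_left, hvar, ← hharm x, hsum_a]
              ring
    have hterm : a yy * (h (yy * x) - h x)^2 ≤ 0 := by
      rw [← hzero]
      exact Summable.le_tsum s3 yy fun z _ => mul_nonneg ENNReal.toReal_nonneg (sq_nonneg _)
    have hterm0 : a yy * (h (yy * x) - h x)^2 = 0 :=
      le_antisymm hterm (mul_nonneg ENNReal.toReal_nonneg (sq_nonneg _))
    have hapos : 0 < a yy := ENNReal.toReal_pos hyy (hμfin yy)
    have hsq : (h (yy * x) - h x)^2 = 0 := by
      rcases mul_eq_zero.mp hterm0 with h' | h'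
      · exact absurd h' (ne_of_gt hapos)
      · exact h'
    have hzero2 := pow_eq_zero_iff (n := 2) (by norm_num) |>.mp hsq
    linarith [sub_eq_zero.mp hzero2]
  -- conclude : h is invariant under the subgroup generated by the support
  have key2 : ∀ g ∈ Subgroup.closure {z : Y | μ z ≠ 0}, ∀ w : Y, h (g * w) = h w := by
    intro g hg
    induction hg using Subgroup.closure_induction with
    | mem z hz => exact fun w => key w z hz
    | one => intro w; rw [one_mul]
    | mul g1 g2 _ _ h1 h2 =>
      intro w
      rw [mul_assoc, h1 (g2 * w), h2 w]
    | inv g1 _ h1 =>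
      intro w
      have := h1 (g1⁻¹ * w)
      rw [← mul_assoc, mul_inv_cancel, one_mul] at this
      exact this.symm
  intro x x'
  have hx' : x' * x⁻¹ ∈ Subgroup.closure {z : Y | μ z ≠ 0} := by
    rw [hgen]
    trivial
  have := key2 _ hx' x
  rw [inv_mul_cancel_right] at this
  exact this.symm
end

section
/- Let T be a finite rooted tree with edge retention probabilities p_e ∈ (0,1], and define the kernel F on the leaf boundary ∂T by F(x,y) = Π{p_e^{-1} : e ∈ Path(x) ∩ Path(y)} for x ≠ y, and F(x,x) = 2·Π{p_e^{-1} : e ∈ Path(x)}. Then Cap_F(∂T) ≤ P[some leaf survives the percolation] ≤ 2·Cap_F(∂T). -/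
open MeasureTheory ENNReal
open scoped Classical

/-- The set of edges on the path from the root `ρ` to `x` in a tree given by a
parent function `par`; the edge above a non-root vertex `v` is identified with `v`. -/
noncomputable def pathE {V : Type*} [Fintype V] (ρ : V) (par : V → V) (x : V) : Finset V :=
  (Set.toFinite {v : V | v ≠ ρ ∧ ∃ n : ℕ, par^[n] x = v}).toFinset

/-- `x` is a leaf: a vertex other than the root with no children. -/
def IsLeaf {V : Type*} (ρ : V) (par : V → V) (x : V) : Prop :=
  x ≠ ρ ∧ ∀ v, par v = x → v = x

set_option linter.unusedSectionVars false
set_option maxHeartbeats 2000000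

namespace L13
variable {V : Type*} [Fintype V] [DecidableEq V]

/-! ### Tree and path lemmas -/

lemma mem_pathE (ρ : V) (par : V → V) {x v : V} :
    v ∈ pathE ρ par x ↔ v ≠ ρ ∧ ∃ n : ℕ, par^[n] x = v := by
  simp [pathE]

variable {ρ : V} {par : V → V}

section
variable (hreach : ∀ v, ∃ n : ℕ, par^[n] v = ρ)

noncomputable def dep (x : V) : ℕ := Nat.find (hreach x)

lemma dep_spec (x : V) : par^[dep hreach x] x = ρ := Nat.find_spec (hreach x)

lemma dep_min {x : V} {n : ℕ} (h : par^[n] x = ρ) : dep hreach x ≤ n := Nat.find_min' _ h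

lemma iter_eq_rho (hroot : par ρ = ρ) {x : V} {m : ℕ} (h : dep hreach x ≤ m) : par^[m] x = ρ := by
  obtain ⟨k, rfl⟩ := Nat.exists_eq_add_of_le h
  rw [add_comm, Function.iterate_add_apply, dep_spec hreach, Function.iterate_fixed hroot]

lemma anc_le_dep (hroot : par ρ = ρ) {x v : V} (hv : v ≠ ρ) {n : ℕ} (h : par^[n] x = v) :
    n ≤ dep hreach x := by
  by_contra hn
  exact hv (h ▸ iter_eq_rho hreach hroot (le_of_lt (not_le.1 hn)))

lemma dep_anc {x u : V} {m : ℕ} (hm : m ≤ dep hreach x) (hu : par^[m] x = u) :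
    dep hreach u + m = dep hreach x := by
  have h1 : dep hreach u ≤ dep hreach x - m := by
    apply dep_min hreach
    rw [← hu, ← Function.iterate_add_apply, Nat.sub_add_cancel hm, dep_spec hreach]
  have h2 : dep hreach x ≤ dep hreach u + m := by
    apply dep_min hreach
    rw [Function.iterate_add_apply, hu, dep_spec hreach]
  omega

noncomputable def lp (x : V) : List V :=
  (List.range (dep hreach x + 1)).map (fun k => par^[dep hreach x - k] x)

lemma mem_lp {x v : V} : v ∈ lp hreach x ↔ ∃ k, k ≤ dep hreach x ∧ par^[k] x = v := by
  simp only [lp, List.mem_map, List.mem_range]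
  constructor
  · rintro ⟨j, hj, rfl⟩
    exact ⟨dep hreach x - j, Nat.sub_le _ _, rfl⟩
  · rintro ⟨k, hk, rfl⟩
    exact ⟨dep hreach x - k, by omega, by rw [Nat.sub_sub_self hk]⟩

lemma self_mem_lp (x : V) : x ∈ lp hreach x :=
  mem_lp hreach |>.2 ⟨0, Nat.zero_le _, rfl⟩

lemma lp_prefix {x u : V} {m : ℕ} (hm : m ≤ dep hreach x) (hu : par^[m] x = u) :
    lp hreach u <+: lp hreach x := by
  have hd : dep hreach u + m = dep hreach x := dep_anc hreach hm hu
  have h1 : lp hreach u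
      = (List.range (dep hreach u + 1)).map (fun k => par^[dep hreach x - k] x) := by
    apply List.map_congr_left
    intro k hk
    rw [List.mem_range] at hk
    have : dep hreach x - k = (dep hreach u - k) + m := by omega
    rw [this, Function.iterate_add_apply, hu]
  have h2 : dep hreach x + 1 = dep hreach u + 1 + (dep hreach x - dep hreach u) := by omega
  refine ⟨(List.map ((dep hreach u + 1) + ·) (List.range (dep hreach x - dep hreach u))).map
    (fun k => par^[dep hreach x - k] x), ?_⟩
  rw [h1, ← List.map_append, ← List.range_add, ← h2]
  rfl

lemma lp_inj {x y : V} (h : lp hreach x = lp hreach y) : x = y := by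
  have hx : x ∈ lp hreach y := h ▸ self_mem_lp hreach x
  have hy : y ∈ lp hreach x := h ▸ self_mem_lp hreach y
  rw [mem_lp] at hx hy
  obtain ⟨k, hk, hk2⟩ := hx
  obtain ⟨j, hj, hj2⟩ := hy
  have d1 : dep hreach x + k = dep hreach y := dep_anc hreach hk hk2
  have d2 : dep hreach y + j = dep hreach x := dep_anc hreach hj hj2
  have : k = 0 := by omega
  subst this; exact hk2.symm

end

lemma lex_between {α : Type*} [LinearOrder α] :
    ∀ (P l₁ l₂ l₃ : List α), P <+: l₁ → P <+: l₃ → l₁ < l₂ → l₂ ≤ l₃ → P <+: l₂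
  | [], _, _, _, _, _, _, _ => List.nil_prefix
  | (a :: P), l₁, l₂, l₃, h1, h3, h12, h23 => by
    obtain ⟨t₁, rfl⟩ := h1
    obtain ⟨t₃, rfl⟩ := h3
    match l₂ with
    | [] => exact absurd (h12 : List.Lex (· < ·) _ []) List.not_lex_nil
    | (b :: m) =>
      have h12' : a < b ∨ (a = b ∧ List.Lex (· < ·) (P ++ t₁) m) := by
        cases (h12 : List.Lex (· < ·) (a :: (P ++ t₁)) (b :: m)) with
        | cons h => exact Or.inr ⟨rfl, h⟩
        | rel h => exact Or.inl h
      have h23' : b < a ∨ (b = a ∧ (List.Lex (· < ·) m (P ++ t₃) ∨ m = P ++ t₃)) := by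
        rcases lt_or_eq_of_le h23 with h | h
        · cases (h : List.Lex (· < ·) (b :: m) (a :: (P ++ t₃))) with
          | cons h' => exact Or.inr ⟨rfl, Or.inl h'⟩
          | rel h' => exact Or.inl h'
        · injection h with hb hm
          exact Or.inr ⟨hb, Or.inr hm⟩
      rcases h12' with h | ⟨rfl, ht1⟩
      · rcases h23' with h' | ⟨rfl, _⟩
        · exact absurd (lt_trans h h') (lt_irrefl _)
        · exact absurd h (lt_irrefl _)
      · rcases h23' with h' | ⟨-, ht3⟩
        · exact absurd h' (lt_irrefl _)
        · have hm : P <+: m := by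
            rcases ht3 with h | rfl
            · exact lex_between P (P ++ t₁) m (P ++ t₃) (List.prefix_append _ _)
                (List.prefix_append _ _) ht1 (le_of_lt h)
            · exact List.prefix_append _ _
          obtain ⟨t, rfl⟩ := hm
          exact ⟨t, rfl⟩

lemma star [LinearOrder V] (hroot : par ρ = ρ) (hreach : ∀ v, ∃ n : ℕ, par^[n] v = ρ)
    {z x y v : V} (hzx : lp hreach z < lp hreach x) (hxy : lp hreach x ≤ lp hreach y)
    (hz : v ∈ pathE ρ par z) (hy : v ∈ pathE ρ par y) : v ∈ pathE ρ par x := by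
  rw [mem_pathE] at hz hy ⊢
  obtain ⟨hvρ, n, hn⟩ := hz
  obtain ⟨-, n', hn'⟩ := hy
  have hpz : lp hreach v <+: lp hreach z := lp_prefix hreach (anc_le_dep hreach hroot hvρ hn) hn
  have hpy : lp hreach v <+: lp hreach y := lp_prefix hreach (anc_le_dep hreach hroot hvρ hn') hn'
  have hpx : lp hreach v <+: lp hreach x := lex_between _ _ _ _ hpz hpy hzx hxy
  have : v ∈ lp hreach x := hpx.subset (self_mem_lp hreach v)
  rw [mem_lp] at this
  obtain ⟨k, -, hk⟩ := this
  exact ⟨hvρ, k, hk⟩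

/-! ### Elementary Cauchy-Schwarz in `ℝ≥0∞` -/

lemma two_mul_le (u v : ℝ≥0∞) : u * v + u * v ≤ u * u + v * v := by
  have main : ∀ a b : ℝ≥0∞, a ≤ b → a * b + a * b ≤ a * a + b * b := by
    intro a b hab
    obtain ⟨d, rfl⟩ : ∃ d, b = a + d := ⟨b - a, (add_tsub_cancel_of_le hab).symm⟩
    have h1 : a * (a + d) + a * (a + d) = (a * a + a * a) + (a * d + a * d) := by ring
    have h2 : a * a + (a + d) * (a + d) = ((a * a + a * a) + (a * d + a * d)) + d * d := by ring
    rw [h1, h2]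
    exact le_add_right le_rfl
  rcases le_total u v with h | h
  · exact main u v h
  · have := main v u h
    calc u * v + u * v = v * u + v * u := by ring
    _ ≤ v * v + u * u := this
    _ = u * u + v * v := by ring

lemma wCS {ι : Type*} (s : Finset ι) (g z : ι → ℝ≥0∞) :
    (∑ i ∈ s, g i * z i) * (∑ i ∈ s, g i * z i)
      ≤ (∑ i ∈ s, g i) * (∑ i ∈ s, g i * (z i * z i)) := by
  have key : ∀ i j : ι, (g i * z i) * (g j * z j) + (g i * z i) * (g j * z j)
      ≤ g i * (g j * (z j * z j)) + g j * (g i * (z i * z i)) := by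
    intro i j
    have h := mul_le_mul_right (two_mul_le (z i) (z j)) (g i * g j)
    calc (g i * z i) * (g j * z j) + (g i * z i) * (g j * z j)
        = (g i * g j) * (z i * z j + z i * z j) := by ring
    _ ≤ (g i * g j) * (z i * z i + z j * z j) := h
    _ = g i * (g j * (z j * z j)) + g j * (g i * (z i * z i)) := by ring
  have hLHS : (∑ i ∈ s, g i * z i) * (∑ i ∈ s, g i * z i)
      = ∑ i ∈ s, ∑ j ∈ s, (g i * z i) * (g j * z j) := Finset.sum_mul_sum s s _ _
  have hRa : (∑ i ∈ s, g i) * (∑ i ∈ s, g i * (z i * z i))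
      = ∑ i ∈ s, ∑ j ∈ s, g i * (g j * (z j * z j)) := Finset.sum_mul_sum s s _ _
  have hR2' : (∑ i ∈ s, ∑ j ∈ s, g i * (g j * (z j * z j)))
      = ∑ i ∈ s, ∑ j ∈ s, g j * (g i * (z i * z i)) := Finset.sum_comm
  have hdouble : (∑ i ∈ s, g i * z i) * (∑ i ∈ s, g i * z i)
      + (∑ i ∈ s, g i * z i) * (∑ i ∈ s, g i * z i)
      ≤ (∑ i ∈ s, g i) * (∑ i ∈ s, g i * (z i * z i))
      + (∑ i ∈ s, g i) * (∑ i ∈ s, g i * (z i * z i)) := by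
    rw [hLHS, hRa]
    nth_rewrite 2 [hR2']
    rw [← Finset.sum_add_distrib, ← Finset.sum_add_distrib]
    apply Finset.sum_le_sum
    intro i _
    rw [← Finset.sum_add_distrib, ← Finset.sum_add_distrib]
    apply Finset.sum_le_sum
    intro j _
    exact key i j
  have h2 : (2 : ℝ≥0∞) * ((∑ i ∈ s, g i * z i) * (∑ i ∈ s, g i * z i))
      ≤ 2 * ((∑ i ∈ s, g i) * (∑ i ∈ s, g i * (z i * z i))) := by
    rw [two_mul, two_mul]
    exact hdouble
  exact (ENNReal.mul_le_mul_iff_right two_ne_zero ofNat_ne_top).1 h2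

/-! ### The percolation measure as a weighted sum -/

section Prob
variable (p : V → ℝ≥0∞)

noncomputable def w (ω : V → Bool) : ℝ≥0∞ := ∏ e, (bif ω e then p e else 1 - p e)

noncomputable def Q (A : Set (V → Bool)) : ℝ≥0∞ :=
  ∑ ω ∈ Finset.univ.filter (· ∈ A), w p ω

lemma Q_mono {A B : Set (V → Bool)} (h : A ⊆ B) : Q p A ≤ Q p B := by
  apply Finset.sum_le_sum_of_subset
  intro ω hω
  simp only [Finset.mem_filter, Finset.mem_univ, true_and] at hω ⊢
  exact h hω

lemma Q_eq (A : Set (V → Bool)) [DecidablePred (· ∈ A)] :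
    Q p A = ∑ ω : V → Bool, if ω ∈ A then w p ω else 0 := by
  rw [Q, ← Finset.sum_filter (fun ω => ω ∈ A) (w p)]
  apply Finset.sum_congr _ (fun _ _ => rfl)
  ext ω
  simp

lemma Q_ind (A : Set (V → Bool)) [DecidablePred (· ∈ A)] :
    ∑ ω : V → Bool, w p ω * (if ω ∈ A then 1 else 0) = Q p A := by
  rw [Q_eq p A]
  refine Finset.sum_congr rfl fun ω _ => ?_
  by_cases h : ω ∈ A
  · rw [if_pos h, if_pos h, mul_one]
  · rw [if_neg h, if_neg h, mul_zero]

lemma sum_w (hp1 : ∀ e, p e ≤ 1) : ∑ ω : V → Bool, w p ω = 1 := by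
  have h0 : ∑ ω : V → Bool, w p ω
      = ∑ ω ∈ Fintype.piFinset (fun _ : V => (Finset.univ : Finset Bool)),
        ∏ e, (bif ω e then p e else 1 - p e) := by
    rw [Fintype.piFinset_univ]; rfl
  rw [h0, ← Finset.prod_univ_sum (fun _ : V => (Finset.univ : Finset Bool))
    (fun e b => bif b then p e else 1 - p e)]
  have h1 : ∀ e : V, ∑ b : Bool, (bif b then p e else 1 - p e) = 1 := by
    intro e
    rw [Fintype.sum_bool]
    exact add_tsub_cancel_of_le (hp1 e)
  simp only [h1, Finset.prod_const_one]

lemma Q_univ (hp1 : ∀ e, p e ≤ 1) : Q p (Set.univ) = 1 := by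
  rw [Q, ← sum_w p hp1]
  congr 1
  simp

lemma Q_single (hp1 : ∀ e, p e ≤ 1) (a : V) (E : Set (V → Bool))
    (hE : ∀ (ω : V → Bool) (b : Bool), ω ∈ E → Function.update ω a b ∈ E) :
    Q p (E ∩ {ω | ω a = true}) = p a * Q p E := by
  classical
  let r : (V → Bool) → ℝ≥0∞ := fun ω => ∏ e ∈ Finset.univ.erase a, (bif ω e then p e else 1 - p e)
  have hw : ∀ ω, w p ω = (bif ω a then p a else 1 - p a) * r ω := fun ω =>
    (Finset.mul_prod_erase Finset.univ (fun e => bif ω e then p e else 1 - p e)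
      (Finset.mem_univ a)).symm
  have hrupd : ∀ ω b, r (Function.update ω a b) = r ω := by
    intro ω b
    apply Finset.prod_congr rfl
    intro e he
    rw [Function.update_of_ne (Finset.ne_of_mem_erase he)]
  set s0 := Finset.univ.filter (fun ω : V → Bool => ω ∈ E) with hs0
  set tt := s0.filter (fun ω : V → Bool => ω a = true) with htt
  set tf := s0.filter (fun ω : V → Bool => ¬(ω a = true)) with htf
  have memtt : ∀ ω, ω ∈ tt ↔ (ω ∈ E ∧ ω a = true) := by
    intro ω; simp [htt, hs0]
  have memtf : ∀ ω, ω ∈ tf ↔ (ω ∈ E ∧ ω a = false) := by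
    intro ω; simp [htf, hs0]
  have hsplit : Q p E = ∑ ω ∈ tt, w p ω + ∑ ω ∈ tf, w p ω :=
    (Finset.sum_filter_add_sum_filter_not s0 (fun ω => ω a = true) (w p)).symm
  have hRt : ∑ ω ∈ tt, w p ω = p a * ∑ ω ∈ tt, r ω := by
    rw [Finset.mul_sum]
    apply Finset.sum_congr rfl
    intro ω hω
    rw [memtt] at hω
    rw [hw, hω.2]
    rfl
  have hRf : ∑ ω ∈ tf, w p ω = (1 - p a) * ∑ ω ∈ tf, r ω := by
    rw [Finset.mul_sum]
    apply Finset.sum_congr rfl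
    intro ω hω
    rw [memtf] at hω
    rw [hw, hω.2]
    rfl
  have hbij : ∑ ω ∈ tf, r ω = ∑ ω ∈ tt, r ω := by
    apply Finset.sum_nbij' (fun ω => Function.update ω a true) (fun ω => Function.update ω a false)
    · intro ω hω
      rw [memtf] at hω
      rw [memtt]
      exact ⟨hE ω true hω.1, Function.update_self _ _ _⟩
    · intro ω hω
      rw [memtt] at hω
      rw [memtf]
      exact ⟨hE ω false hω.1, Function.update_self _ _ _⟩
    · intro ω hω
      rw [memtf] at hω
      rw [Function.update_idem, ← hω.2, Function.update_eq_self]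
    · intro ω hω
      rw [memtt] at hω
      rw [Function.update_idem, ← hω.2, Function.update_eq_self]
    · intro ω hω
      exact (hrupd ω true).symm
  have hQE : Q p E = ∑ ω ∈ tt, r ω := by
    rw [hsplit, hRt, hRf, hbij, ← add_mul, add_tsub_cancel_of_le (hp1 a), one_mul]
  rw [Q, hQE, ← hRt]
  apply Finset.sum_congr _ (fun _ _ => rfl)
  ext ω
  rw [memtt]
  simp [Set.mem_inter_iff]

lemma Q_factor (hp1 : ∀ e, p e ≤ 1) (s : Finset V) (E : Set (V → Bool))
    (hE : ∀ ω ω' : V → Bool, (∀ e, e ∉ s → ω e = ω' e) → ω ∈ E → ω' ∈ E) :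
    Q p (E ∩ {ω | ∀ e ∈ s, ω e = true}) = Q p E * ∏ e ∈ s, p e := by
  classical
  induction s using Finset.induction_on generalizing E with
  | empty =>
    simp only [Finset.notMem_empty, false_implies, implies_true, Set.setOf_true,
      Set.inter_univ, Finset.prod_empty, mul_one]
  | @insert a s ha IH =>
    have hE' : ∀ (ω : V → Bool) (b : Bool), ω ∈ E → Function.update ω a b ∈ E := by
      intro ω b hω
      apply hE ω _ _ hω
      intro e he
      have hea : e ≠ a := fun h => he (by rw [h]; exact Finset.mem_insert_self a s)
      rw [Function.update_of_ne hea]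
    have hEs : ∀ ω ω' : V → Bool, (∀ e, e ∉ s → ω e = ω' e) →
        ω ∈ E ∩ {ω | ω a = true} → ω' ∈ E ∩ {ω | ω a = true} := by
      rintro ω ω' hagree ⟨h1, h2⟩
      refine ⟨hE ω ω' (fun e he => hagree e (fun h => he (Finset.mem_insert_of_mem h))) h1, ?_⟩
      have : ω a = ω' a := hagree a ha
      simp only [Set.mem_setOf_eq] at h2 ⊢
      rw [← this]; exact h2
    have hset : E ∩ {ω | ∀ e ∈ insert a s, ω e = true}
        = (E ∩ {ω | ω a = true}) ∩ {ω | ∀ e ∈ s, ω e = true} := by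
      ext ω
      simp only [Set.mem_inter_iff, Set.mem_setOf_eq, Finset.mem_insert]
      constructor
      · rintro ⟨h1, h2⟩
        exact ⟨⟨h1, h2 a (Or.inl rfl)⟩, fun e he => h2 e (Or.inr he)⟩
      · rintro ⟨⟨h1, h2⟩, h3⟩
        refine ⟨h1, ?_⟩
        rintro e (rfl | he)
        · exact h2
        · exact h3 e he
    rw [hset, IH _ hEs, Q_single p hp1 a E hE', Finset.prod_insert ha]
    ring

lemma Q_cyl (hp1 : ∀ e, p e ≤ 1) (s : Finset V) :
    Q p {ω | ∀ e ∈ s, ω e = true} = ∏ e ∈ s, p e := by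
  have := Q_factor p hp1 s Set.univ (fun _ _ _ _ => trivial)
  rw [Set.univ_inter, Q_univ p hp1] at this
  rw [this, one_mul]

lemma P_eq_Q (hp1 : ∀ e, p e ≤ 1) (A : Set (V → Bool)) :
    Measure.pi (fun e : V => (PMF.bernoulli (p e).toNNReal (by have h := hp1 e; rw [← ENNReal.coe_le_coe, ENNReal.coe_toNNReal (ne_top_of_le_ne_top ENNReal.one_ne_top h)]; simpa using h)).toMeasure) A = Q p A := by
  classical
  have hsingle : ∀ ω : V → Bool,
      Measure.pi (fun e : V => (PMF.bernoulli (p e).toNNReal (by have h := hp1 e; rw [← ENNReal.coe_le_coe, ENNReal.coe_toNNReal (ne_top_of_le_ne_top ENNReal.one_ne_top h)]; simpa using h)).toMeasure) {ω} = w p ω := by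
    intro ω
    rw [← Set.univ_pi_singleton ω, Measure.pi_pi]
    apply Finset.prod_congr rfl
    intro e _
    rw [PMF.toMeasure_apply_singleton _ _ (measurableSet_singleton _)]
    rw [PMF.bernoulli_apply]; have ht := ne_top_of_le_ne_top ENNReal.one_ne_top (hp1 e); cases ω e <;> simp [ENNReal.coe_sub, ENNReal.coe_toNNReal ht]
  have hA : A = ⋃ ω ∈ Finset.univ.filter (· ∈ A), ({ω} : Set (V → Bool)) := by
    ext ω
    simp
  conv_lhs => rw [hA]
  rw [measure_biUnion_finset]
  · exact Finset.sum_congr rfl (fun ω _ => hsingle ω)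
  · intro ω _ ω' _ hne
    simp [Function.onFun, Set.disjoint_singleton, hne]
  · intro ω _
    exact measurableSet_singleton ω

lemma Q_biUnion (hp1 : ∀ e, p e ≤ 1) {ι : Type*} (t : Finset ι) (f : ι → Set (V → Bool))
    (hdisj : (↑t : Set ι).PairwiseDisjoint f) :
    Q p (⋃ i ∈ t, f i) = ∑ i ∈ t, Q p (f i) := by
  have hms : ∀ A : Set (V → Bool), MeasurableSet A := fun A =>
    (Set.to_countable A).measurableSet
  rw [← P_eq_Q p hp1, measure_biUnion_finset hdisj (fun b _ => hms (f b))]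
  exact Finset.sum_congr rfl fun i _ => P_eq_Q p hp1 (f i)

end Prob
end L13

/-- Lyons' theorem: for independent percolation on a finite rooted tree with
retention probabilities `p_e ∈ (0,1]`, the probability that some leaf survives is
between `Cap_F(∂T)` and `2·Cap_F(∂T)` for the kernel
`F(x,y) = ∏_{e ∈ Path(x) ∩ Path(y)} p_e⁻¹` (`x ≠ y`), `F(x,x) = 2 ∏_{e ∈ Path(x)} p_e⁻¹`. -/
theorem stmt13
    (V : Type*) [Fintype V] [DecidableEq V]
    (ρ : V) (par : V → V) (hroot : par ρ = ρ)
    (hreach : ∀ v, ∃ n : ℕ, par^[n] v = ρ)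
    (p : V → ℝ≥0∞) (hp0 : ∀ e, 0 < p e) (hp1 : ∀ e, p e ≤ 1)
    (P : Measure (V → Bool))
    (hP : P = Measure.pi (fun e : V => (PMF.bernoulli (p e).toNNReal (by have h := hp1 e; rw [← ENNReal.coe_le_coe, ENNReal.coe_toNNReal (ne_top_of_le_ne_top ENNReal.one_ne_top h)]; simpa using h)).toMeasure))
    (F : V → V → ℝ≥0∞)
    (hF : ∀ x y, F x y = if x = y then 2 * ∏ e ∈ pathE ρ par x, (p e)⁻¹
      else ∏ e ∈ pathE ρ par x ∩ pathE ρ par y, (p e)⁻¹) :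
    capK F {x | IsLeaf ρ par x} ≤
        P {ω | ∃ x, IsLeaf ρ par x ∧ ∀ e ∈ pathE ρ par x, ω e = true} ∧
      P {ω | ∃ x, IsLeaf ρ par x ∧ ∀ e ∈ pathE ρ par x, ω e = true} ≤
        2 * capK F {x | IsLeaf ρ par x} := by
  classical
  letI : LinearOrder V := LinearOrder.lift' (Fintype.equivFin V) (Fintype.equivFin V).injective
  subst hP
  set S : Set (V → Bool) := {ω | ∃ x, IsLeaf ρ par x ∧ ∀ e ∈ pathE ρ par x, ω e = true}
    with hSdef
  rw [L13.P_eq_Q p hp1 S]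
  -- basic facts
  have hp0' : ∀ e, p e ≠ 0 := fun e => (hp0 e).ne'
  have hptop : ∀ e : V, p e ≠ ⊤ := fun e => ((hp1 e).trans_lt one_lt_top).ne
  set L : Finset V := Finset.univ.filter (fun x => IsLeaf ρ par x) with hL
  have memL : ∀ x, x ∈ L ↔ IsLeaf ρ par x := by intro x; simp [hL]
  have hπ0 : ∀ s : Finset V, (∏ e ∈ s, p e) ≠ 0 := by
    intro s
    rw [Finset.prod_ne_zero_iff]
    exact fun e _ => hp0' e
  have hπtop : ∀ s : Finset V, (∏ e ∈ s, p e) ≠ ⊤ := fun s =>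
    (prod_lt_top (fun e _ => (hp1 e).trans_lt one_lt_top)).ne
  have hprodinv : ∀ s : Finset V, (∏ e ∈ s, p e)⁻¹ = ∏ e ∈ s, (p e)⁻¹ := fun s =>
    ENNReal.prod_inv_distrib (fun i _ j _ _ => Or.inl (hp0' i))
  set A : V → Set (V → Bool) := fun x => {ω | ∀ e ∈ pathE ρ par x, ω e = true} with hAdef
  have hQA : ∀ x, L13.Q p (A x) = ∏ e ∈ pathE ρ par x, p e := fun x =>
    L13.Q_cyl p hp1 (pathE ρ par x)
  have hQS1 : L13.Q p S ≤ 1 := by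
    rw [← L13.Q_univ p hp1]
    exact L13.Q_mono p (Set.subset_univ S)
  have hQStop : L13.Q p S ≠ ⊤ := (hQS1.trans_lt one_lt_top).ne
  have hQAxy : ∀ x y, L13.Q p (A x ∩ A y) = ∏ e ∈ pathE ρ par x ∪ pathE ρ par y, p e := by
    intro x y
    have hxy : A x ∩ A y = {ω | ∀ e ∈ pathE ρ par x ∪ pathE ρ par y, ω e = true} := by
      ext ω
      simp only [hAdef, Set.mem_inter_iff, Set.mem_setOf_eq, Finset.mem_union]
      constructor
      · rintro ⟨h1, h2⟩ e (he | he)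
        · exact h1 e he
        · exact h2 e he
      · intro h
        exact ⟨fun e he => h e (Or.inl he), fun e he => h e (Or.inr he)⟩
    rw [hxy, L13.Q_cyl p hp1]
  have hkey : ∀ x y : V,
      (∏ e ∈ pathE ρ par x, p e)⁻¹ * (∏ e ∈ pathE ρ par y, p e)⁻¹
        * ∏ e ∈ pathE ρ par x ∪ pathE ρ par y, p e
      = (∏ e ∈ pathE ρ par x ∩ pathE ρ par y, p e)⁻¹ := by
    intro x y
    have hprod := Finset.prod_union_inter (s₁ := pathE ρ par x) (s₂ := pathE ρ par y) (f := p)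
    calc (∏ e ∈ pathE ρ par x, p e)⁻¹ * (∏ e ∈ pathE ρ par y, p e)⁻¹
          * ∏ e ∈ pathE ρ par x ∪ pathE ρ par y, p e
        = ((∏ e ∈ pathE ρ par x, p e) * (∏ e ∈ pathE ρ par y, p e))⁻¹
          * ∏ e ∈ pathE ρ par x ∪ pathE ρ par y, p e := by
          rw [ENNReal.mul_inv (Or.inl (hπ0 _)) (Or.inl (hπtop _))]
    _ = ((∏ e ∈ pathE ρ par x ∪ pathE ρ par y, p e)
          * (∏ e ∈ pathE ρ par x ∩ pathE ρ par y, p e))⁻¹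
          * ∏ e ∈ pathE ρ par x ∪ pathE ρ par y, p e := by rw [hprod]
    _ = ((∏ e ∈ pathE ρ par x ∪ pathE ρ par y, p e)⁻¹
          * (∏ e ∈ pathE ρ par x ∩ pathE ρ par y, p e)⁻¹)
          * ∏ e ∈ pathE ρ par x ∪ pathE ρ par y, p e := by
          rw [ENNReal.mul_inv (Or.inl (hπ0 _)) (Or.inl (hπtop _))]
    _ = (∏ e ∈ pathE ρ par x ∩ pathE ρ par y, p e)⁻¹
          * ((∏ e ∈ pathE ρ par x ∪ pathE ρ par y, p e)⁻¹
            * ∏ e ∈ pathE ρ par x ∪ pathE ρ par y, p e) := by ring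
    _ = (∏ e ∈ pathE ρ par x ∩ pathE ρ par y, p e)⁻¹ := by
          rw [ENNReal.inv_mul_cancel (hπ0 _) (hπtop _), mul_one]
  have hFge : ∀ x y : V, (∏ e ∈ pathE ρ par x ∩ pathE ρ par y, p e)⁻¹ ≤ F x y := by
    intro x y
    by_cases hxy : x = y
    · subst hxy
      rw [hF, if_pos rfl, ← hprodinv, Finset.inter_self]
      exact le_mul_of_one_le_left zero_le one_le_two
    · rw [hF, if_neg hxy, ← hprodinv]
  constructor
  · -- lower bound : capK ≤ Q p S
    rw [capK, inv_le_iff_inv_le]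
    refine le_iInf fun μ0 => ?_
    obtain ⟨μ, hsum, hsupp⟩ := μ0
    show (L13.Q p S)⁻¹ ≤ ∑' x, ∑' y, F x y * μ x * μ y
    simp only [tsum_fintype]
    set En := ∑ x : V, ∑ y : V, F x y * μ x * μ y with hEn
    have hμ0 : ∀ x, x ∉ L → μ x = 0 := by
      intro x hx
      apply hsupp
      intro hleaf
      exact hx ((memL x).2 hleaf)
    have hμL : ∑ x ∈ L, μ x = 1 := by
      rw [Finset.sum_subset (Finset.subset_univ L) (fun x _ hx => hμ0 x hx)]
      rw [← tsum_fintype (L := SummationFilter.unconditional _)]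
      exact hsum
    set c : V → ℝ≥0∞ := fun x => μ x * (∏ e ∈ pathE ρ par x, p e)⁻¹ with hc
    set Zf : (V → Bool) → ℝ≥0∞ :=
      fun ω => ∑ x ∈ L, c x * (if ω ∈ A x then 1 else 0) with hZf
    have hEZ : ∑ ω : V → Bool, L13.w p ω * Zf ω = 1 := by
      calc ∑ ω : V → Bool, L13.w p ω * Zf ω
          = ∑ ω : V → Bool, ∑ x ∈ L, c x * (L13.w p ω * (if ω ∈ A x then 1 else 0)) := by
            refine Finset.sum_congr rfl fun ω _ => ?_
            rw [hZf, Finset.mul_sum]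
            exact Finset.sum_congr rfl fun x _ => by ring
      _ = ∑ x ∈ L, ∑ ω : V → Bool, c x * (L13.w p ω * (if ω ∈ A x then 1 else 0)) :=
            Finset.sum_comm
      _ = ∑ x ∈ L, c x * L13.Q p (A x) := by
            refine Finset.sum_congr rfl fun x _ => ?_
            rw [← Finset.mul_sum, L13.Q_ind]
      _ = ∑ x ∈ L, μ x := by
            refine Finset.sum_congr rfl fun x _ => ?_
            rw [hQA, hc]
            rw [mul_assoc, ENNReal.inv_mul_cancel (hπ0 _) (hπtop _), mul_one]
      _ = 1 := hμL
    have hEZZ : ∑ ω : V → Bool, L13.w p ω * (Zf ω * Zf ω)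
        = ∑ x ∈ L, ∑ y ∈ L, (c x * c y) * L13.Q p (A x ∩ A y) := by
      have hii : ∀ x y (ω : V → Bool),
          (if ω ∈ A x then (1:ℝ≥0∞) else 0) * (if ω ∈ A y then 1 else 0)
          = if ω ∈ A x ∩ A y then 1 else 0 := by
        intro x y ω
        by_cases h1 : ω ∈ A x <;> by_cases h2 : ω ∈ A y <;>
          simp [h1, h2, Set.mem_inter_iff]
      calc ∑ ω : V → Bool, L13.w p ω * (Zf ω * Zf ω)
          = ∑ ω : V → Bool, ∑ x ∈ L, ∑ y ∈ L,
            (c x * c y) * (L13.w p ω * (if ω ∈ A x ∩ A y then 1 else 0)) := by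
            refine Finset.sum_congr rfl fun ω _ => ?_
            rw [hZf, Finset.sum_mul_sum, Finset.mul_sum]
            refine Finset.sum_congr rfl fun x _ => ?_
            rw [Finset.mul_sum]
            refine Finset.sum_congr rfl fun y _ => ?_
            rw [← hii x y ω]
            ring
      _ = ∑ x ∈ L, ∑ ω : V → Bool, ∑ y ∈ L,
            (c x * c y) * (L13.w p ω * (if ω ∈ A x ∩ A y then 1 else 0)) := Finset.sum_comm
      _ = ∑ x ∈ L, ∑ y ∈ L, ∑ ω : V → Bool,
            (c x * c y) * (L13.w p ω * (if ω ∈ A x ∩ A y then 1 else 0)) := by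
            exact Finset.sum_congr rfl fun x _ => Finset.sum_comm
      _ = ∑ x ∈ L, ∑ y ∈ L, (c x * c y) * L13.Q p (A x ∩ A y) := by
            refine Finset.sum_congr rfl fun x _ => Finset.sum_congr rfl fun y _ => ?_
            rw [← Finset.mul_sum, L13.Q_ind]
    have hEZZle : ∑ ω : V → Bool, L13.w p ω * (Zf ω * Zf ω) ≤ En := by
      rw [hEZZ, hEn]
      have hterm : ∀ x ∈ L, ∀ y ∈ L,
          (c x * c y) * L13.Q p (A x ∩ A y) ≤ F x y * μ x * μ y := by
        intro x _ y _
        rw [hQAxy, hc]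
        calc (μ x * (∏ e ∈ pathE ρ par x, p e)⁻¹) * (μ y * (∏ e ∈ pathE ρ par y, p e)⁻¹)
              * ∏ e ∈ pathE ρ par x ∪ pathE ρ par y, p e
            = (μ x * μ y) * ((∏ e ∈ pathE ρ par x, p e)⁻¹ * (∏ e ∈ pathE ρ par y, p e)⁻¹
              * ∏ e ∈ pathE ρ par x ∪ pathE ρ par y, p e) := by ring
        _ = (μ x * μ y) * (∏ e ∈ pathE ρ par x ∩ pathE ρ par y, p e)⁻¹ := by rw [hkey]
        _ ≤ (μ x * μ y) * F x y := mul_le_mul_right (hFge x y) _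
        _ = F x y * μ x * μ y := by ring
      calc ∑ x ∈ L, ∑ y ∈ L, (c x * c y) * L13.Q p (A x ∩ A y)
          ≤ ∑ x ∈ L, ∑ y ∈ L, F x y * μ x * μ y :=
            Finset.sum_le_sum fun x hx => Finset.sum_le_sum fun y hy => hterm x hx y hy
      _ ≤ ∑ x ∈ L, ∑ y : V, F x y * μ x * μ y :=
            Finset.sum_le_sum fun x _ => Finset.sum_le_sum_of_subset (Finset.subset_univ L)
      _ ≤ ∑ x : V, ∑ y : V, F x y * μ x * μ y :=
            Finset.sum_le_sum_of_subset (Finset.subset_univ L)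
    have hZS : ∀ ω, ω ∉ S → Zf ω = 0 := by
      intro ω hω
      rw [hZf]
      refine Finset.sum_eq_zero fun x hx => ?_
      have hnot : ω ∉ A x := by
        intro hωA
        exact hω ⟨x, (memL x).1 hx, hωA⟩
      rw [if_neg hnot, mul_zero]
    have hgZ : ∑ ω : V → Bool, (if ω ∈ S then L13.w p ω else 0) * Zf ω
        = ∑ ω : V → Bool, L13.w p ω * Zf ω := by
      refine Finset.sum_congr rfl fun ω _ => ?_
      by_cases h : ω ∈ S
      · rw [if_pos h]
      · rw [if_neg h, hZS ω h, mul_zero, mul_zero]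
    have hgZZ : ∑ ω : V → Bool, (if ω ∈ S then L13.w p ω else 0) * (Zf ω * Zf ω)
        ≤ ∑ ω : V → Bool, L13.w p ω * (Zf ω * Zf ω) := by
      refine Finset.sum_le_sum fun ω _ => ?_
      refine mul_le_mul_left ?_ _
      split
      · exact le_rfl
      · exact zero_le
    have hQSg : ∑ ω : V → Bool, (if ω ∈ S then L13.w p ω else 0) = L13.Q p S :=
      (L13.Q_eq p S).symm
    have h1le : 1 ≤ L13.Q p S * En := by
      have hCS := L13.wCS Finset.univ (fun ω => if ω ∈ S then L13.w p ω else 0) Zf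
      calc (1:ℝ≥0∞) = (∑ ω : V → Bool, L13.w p ω * Zf ω)
            * (∑ ω : V → Bool, L13.w p ω * Zf ω) := by rw [hEZ, one_mul]
      _ = (∑ ω : V → Bool, (if ω ∈ S then L13.w p ω else 0) * Zf ω)
            * (∑ ω : V → Bool, (if ω ∈ S then L13.w p ω else 0) * Zf ω) := by rw [hgZ]
      _ ≤ (∑ ω : V → Bool, (if ω ∈ S then L13.w p ω else 0))
            * (∑ ω : V → Bool, (if ω ∈ S then L13.w p ω else 0) * (Zf ω * Zf ω)) := hCS
      _ ≤ L13.Q p S * (∑ ω : V → Bool, L13.w p ω * (Zf ω * Zf ω)) := by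
            rw [hQSg]
            exact mul_le_mul_right hgZZ _
      _ ≤ L13.Q p S * En := mul_le_mul_right hEZZle _
    have hEn0 : En ≠ 0 := by
      intro h
      rw [h, mul_zero] at h1le
      exact (by norm_num : ¬((1:ℝ≥0∞) ≤ 0)) h1le
    rcases eq_or_ne En ⊤ with htop | htop
    · rw [htop]; exact le_top
    · rw [inv_le_iff_inv_le]
      calc En⁻¹ = En⁻¹ * 1 := (mul_one _).symm
      _ ≤ En⁻¹ * (L13.Q p S * En) := mul_le_mul_right h1le _
      _ = L13.Q p S * (En⁻¹ * En) := by ring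
      _ = L13.Q p S := by rw [ENNReal.inv_mul_cancel hEn0 htop, mul_one]
  · -- upper bound : Q p S ≤ 2 * capK
    by_cases hQS0 : L13.Q p S = 0
    · rw [hQS0]; exact zero_le
    have htrich : ∀ x y : V, x ≠ y →
        (L13.lp hreach x < L13.lp hreach y ∨ L13.lp hreach y < L13.lp hreach x) := by
      intro x y hxy
      rcases lt_trichotomy (L13.lp hreach x) (L13.lp hreach y) with h | h | h
      · exact Or.inl h
      · exact absurd (L13.lp_inj hreach h) hxy
      · exact Or.inr h
    set B : V → Set (V → Bool) := fun x => {ω | (∀ e ∈ pathE ρ par x, ω e = true) ∧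
        ∀ z, IsLeaf ρ par z → L13.lp hreach z < L13.lp hreach x →
          ¬(∀ e ∈ pathE ρ par z, ω e = true)} with hBdef
    have hBdisj : ∀ x ∈ L, ∀ y ∈ L, x ≠ y → Disjoint (B x) (B y) := by
      intro x hx y hy hxy
      rw [Set.disjoint_left]
      intro ω hωx hωy
      rcases htrich x y hxy with h | h
      · exact hωy.2 x ((memL x).1 hx) h hωx.1
      · exact hωx.2 y ((memL y).1 hy) h hωy.1
    have hSunion : S = ⋃ x ∈ L, B x := by
      ext ω
      constructor
      · rintro ⟨x₀, hx₀, hω⟩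
        set T : Finset V := L.filter (fun x => ∀ e ∈ pathE ρ par x, ω e = true) with hT
        have hTne : T.Nonempty := ⟨x₀, by
          rw [hT, Finset.mem_filter]
          exact ⟨(memL x₀).2 hx₀, hω⟩⟩
        obtain ⟨m, hmT, hmin⟩ := Finset.exists_min_image T (fun x => L13.lp hreach x) hTne
        rw [hT, Finset.mem_filter] at hmT
        refine Set.mem_biUnion hmT.1 ?_
        refine ⟨hmT.2, ?_⟩
        intro z hz hlt hzsur
        have hzT : z ∈ T := by
          rw [hT, Finset.mem_filter]
          exact ⟨(memL z).2 hz, hzsur⟩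
        exact absurd (hmin z hzT) (not_le.2 hlt)
      · intro hω
        obtain ⟨x, hx, hωB⟩ := Set.mem_iUnion₂.1 hω
        exact ⟨x, (memL x).1 hx, hωB.1⟩
    have hQSsum : ∑ x ∈ L, L13.Q p (B x) = L13.Q p S := by
      have := L13.Q_biUnion p hp1 L B (fun x hx y hy hxy => hBdisj x hx y hy hxy)
      rw [← hSunion] at this
      exact this.symm
    -- claim A
    have hclaimA : ∀ y ∈ L,
        ∑ x ∈ L.filter (fun x => L13.lp hreach x ≤ L13.lp hreach y),
          (∏ e ∈ pathE ρ par x ∩ pathE ρ par y, p e)⁻¹ * L13.Q p (B x) ≤ 1 := by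
      intro y hy
      set Lf := L.filter (fun x => L13.lp hreach x ≤ L13.lp hreach y) with hLf
      have hterm : ∀ x ∈ Lf,
          ((∏ e ∈ pathE ρ par x ∩ pathE ρ par y, p e)⁻¹ * L13.Q p (B x))
            * (∏ e ∈ pathE ρ par y, p e) = L13.Q p (B x ∩ A y) := by
        intro x hx
        rw [hLf, Finset.mem_filter] at hx
        obtain ⟨hxL, hxle⟩ := hx
        have hsplit : B x ∩ A y
            = B x ∩ {ω | ∀ e ∈ pathE ρ par y \ pathE ρ par x, ω e = true} := by
          ext ω
          simp only [Set.mem_inter_iff, hAdef, Set.mem_setOf_eq]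
          constructor
          · rintro ⟨hb, hay⟩
            exact ⟨hb, fun e he => hay e (Finset.mem_sdiff.1 he).1⟩
          · rintro ⟨hb, hsd⟩
            refine ⟨hb, fun e he => ?_⟩
            by_cases hex : e ∈ pathE ρ par x
            · exact hb.1 e hex
            · exact hsd e (Finset.mem_sdiff.2 ⟨he, hex⟩)
        have hfac : L13.Q p (B x ∩ {ω | ∀ e ∈ pathE ρ par y \ pathE ρ par x, ω e = true})
            = L13.Q p (B x) * ∏ e ∈ pathE ρ par y \ pathE ρ par x, p e := by
          apply L13.Q_factor p hp1 _ (B x)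
          intro ω ω' hagree hω
          constructor
          · intro e he
            have hens : e ∉ pathE ρ par y \ pathE ρ par x := fun hesd =>
              (Finset.mem_sdiff.1 hesd).2 he
            rw [← hagree e hens]
            exact hω.1 e he
          · intro z hz hlt hzsur
            apply hω.2 z hz hlt
            intro e he
            have hens : e ∉ pathE ρ par y \ pathE ρ par x := by
              intro hesd
              obtain ⟨hey, hex⟩ := Finset.mem_sdiff.1 hesd
              exact hex (L13.star hroot hreach hlt hxle he hey)
            rw [hagree e hens]
            exact hzsur e he
        have hπy : (∏ e ∈ pathE ρ par y, p e)
            = (∏ e ∈ pathE ρ par x ∩ pathE ρ par y, p e)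
              * ∏ e ∈ pathE ρ par y \ pathE ρ par x, p e := by
          rw [Finset.inter_comm]
          exact (Finset.prod_inter_mul_prod_diff (pathE ρ par y) (pathE ρ par x) p).symm
        calc ((∏ e ∈ pathE ρ par x ∩ pathE ρ par y, p e)⁻¹ * L13.Q p (B x))
              * (∏ e ∈ pathE ρ par y, p e)
            = ((∏ e ∈ pathE ρ par x ∩ pathE ρ par y, p e)⁻¹ * L13.Q p (B x))
              * ((∏ e ∈ pathE ρ par x ∩ pathE ρ par y, p e)
                * ∏ e ∈ pathE ρ par y \ pathE ρ par x, p e) := by rw [← hπy]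
        _ = (L13.Q p (B x) * ∏ e ∈ pathE ρ par y \ pathE ρ par x, p e)
              * ((∏ e ∈ pathE ρ par x ∩ pathE ρ par y, p e)⁻¹
                * (∏ e ∈ pathE ρ par x ∩ pathE ρ par y, p e)) := by ring
        _ = L13.Q p (B x) * ∏ e ∈ pathE ρ par y \ pathE ρ par x, p e := by
              rw [ENNReal.inv_mul_cancel (hπ0 _) (hπtop _), mul_one]
        _ = L13.Q p (B x ∩ A y) := by rw [hsplit, hfac]
      rw [← ENNReal.mul_le_mul_iff_left (hπ0 (pathE ρ par y)) (hπtop (pathE ρ par y)),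
        one_mul, Finset.sum_mul]
      calc ∑ x ∈ Lf, ((∏ e ∈ pathE ρ par x ∩ pathE ρ par y, p e)⁻¹ * L13.Q p (B x))
            * (∏ e ∈ pathE ρ par y, p e)
          = ∑ x ∈ Lf, L13.Q p (B x ∩ A y) := Finset.sum_congr rfl hterm
      _ = L13.Q p (⋃ x ∈ Lf, B x ∩ A y) := by
            refine (L13.Q_biUnion p hp1 Lf (fun x => B x ∩ A y) ?_).symm
            intro x hx x' hx' hne
            have hxL : x ∈ L := Finset.mem_of_mem_filter _ hx
            have hxL' : x' ∈ L := Finset.mem_of_mem_filter _ hx'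
            exact Disjoint.mono Set.inter_subset_left Set.inter_subset_left
              (hBdisj x hxL x' hxL' hne)
      _ ≤ L13.Q p (A y) := by
            apply L13.Q_mono
            exact Set.iUnion₂_subset fun x _ => Set.inter_subset_right
      _ = ∏ e ∈ pathE ρ par y, p e := hQA y
    -- the measure ν
    set ν : V → ℝ≥0∞ := fun x =>
      if IsLeaf ρ par x then L13.Q p (B x) * (L13.Q p S)⁻¹ else 0 with hν
    have hν_supp : ∀ x, ¬ IsLeaf ρ par x → ν x = 0 := fun x h => if_neg h
    have hνL : ∀ x ∈ L, ν x = L13.Q p (B x) * (L13.Q p S)⁻¹ := fun x hx =>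
      if_pos ((memL x).1 hx)
    have hν_sumL : ∑ x ∈ L, ν x = 1 := by
      rw [Finset.sum_congr rfl hνL, ← Finset.sum_mul, hQSsum,
        ENNReal.mul_inv_cancel hQS0 hQStop]
    have hν_sum : (∑' x, ν x) = 1 := by
      rw [tsum_fintype, ← Finset.sum_subset (Finset.subset_univ L)
        (fun x _ hx => hν_supp x (fun hleaf => hx ((memL x).2 hleaf)))]
      exact hν_sumL
    -- energy bound
    have hEn : ∑ x : V, ∑ y : V, F x y * ν x * ν y ≤ 2 * (L13.Q p S)⁻¹ := by
      have hrestrict : ∑ x : V, ∑ y : V, F x y * ν x * ν y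
          = ∑ x ∈ L, ∑ y ∈ L, F x y * ν x * ν y := by
        rw [← Finset.sum_subset (Finset.subset_univ L) (fun x _ hx =>
          Finset.sum_eq_zero fun y _ => by
            rw [hν_supp x (fun hleaf => hx ((memL x).2 hleaf)), mul_zero, zero_mul])]
        refine Finset.sum_congr rfl fun x _ => ?_
        exact (Finset.sum_subset (Finset.subset_univ L) (fun y _ hy => by
          rw [hν_supp y (fun hleaf => hy ((memL y).2 hleaf)), mul_zero])).symm
      set f1 : V → V → ℝ≥0∞ := fun x y => if L13.lp hreach x ≤ L13.lp hreach y then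
        (∏ e ∈ pathE ρ par x ∩ pathE ρ par y, p e)⁻¹ * ν x * ν y else 0 with hf1
      set f2 : V → V → ℝ≥0∞ := fun x y => if L13.lp hreach y ≤ L13.lp hreach x then
        (∏ e ∈ pathE ρ par x ∩ pathE ρ par y, p e)⁻¹ * ν x * ν y else 0 with hf2
      have hsplitpt : ∀ x ∈ L, ∀ y ∈ L, F x y * ν x * ν y = f1 x y + f2 x y := by
        intro x _ y _
        by_cases hxy : x = y
        · subst hxy
          rw [hf1, hf2]
          simp only [le_refl, if_pos]
          rw [hF, if_pos rfl, ← hprodinv, Finset.inter_self]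
          ring
        · rcases htrich x y hxy with h | h
          · rw [hf1, hf2]
            simp only
            rw [if_pos h.le, if_neg (not_le.2 h), add_zero, hF, if_neg hxy, ← hprodinv]
          · rw [hf1, hf2]
            simp only
            rw [if_neg (not_le.2 h), if_pos h.le, zero_add, hF, if_neg hxy, ← hprodinv]
      have hf2f1 : ∑ x ∈ L, ∑ y ∈ L, f2 x y = ∑ x ∈ L, ∑ y ∈ L, f1 x y := by
        rw [Finset.sum_comm]
        refine Finset.sum_congr rfl fun y _ => Finset.sum_congr rfl fun x _ => ?_
        rw [hf1, hf2]
        simp only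
        by_cases h : L13.lp hreach y ≤ L13.lp hreach x
        · rw [if_pos h, if_pos h, Finset.inter_comm]
          ring
        · rw [if_neg h, if_neg h]
      have hf1bound : ∑ x ∈ L, ∑ y ∈ L, f1 x y ≤ (L13.Q p S)⁻¹ := by
        rw [Finset.sum_comm]
        calc ∑ y ∈ L, ∑ x ∈ L, f1 x y ≤ ∑ y ∈ L, ν y * (L13.Q p S)⁻¹ := by
              refine Finset.sum_le_sum fun y hy => ?_
              have hinner : ∑ x ∈ L, f1 x y
                  = ∑ x ∈ L.filter (fun x => L13.lp hreach x ≤ L13.lp hreach y),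
                    (∏ e ∈ pathE ρ par x ∩ pathE ρ par y, p e)⁻¹ * ν x * ν y :=
                (Finset.sum_filter (fun x => L13.lp hreach x ≤ L13.lp hreach y)
                  (fun x => (∏ e ∈ pathE ρ par x ∩ pathE ρ par y, p e)⁻¹ * ν x * ν y)).symm
              rw [hinner]
              calc ∑ x ∈ L.filter (fun x => L13.lp hreach x ≤ L13.lp hreach y),
                    (∏ e ∈ pathE ρ par x ∩ pathE ρ par y, p e)⁻¹ * ν x * ν y
                  = (∑ x ∈ L.filter (fun x => L13.lp hreach x ≤ L13.lp hreach y),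
                    ((∏ e ∈ pathE ρ par x ∩ pathE ρ par y, p e)⁻¹ * L13.Q p (B x)))
                      * ((L13.Q p S)⁻¹ * ν y) := by
                    rw [Finset.sum_mul]
                    refine Finset.sum_congr rfl fun x hx => ?_
                    rw [hνL x (Finset.mem_of_mem_filter _ hx)]
                    ring
              _ ≤ 1 * ((L13.Q p S)⁻¹ * ν y) := mul_le_mul_left (hclaimA y hy) _
              _ = ν y * (L13.Q p S)⁻¹ := by ring
        _ = (∑ y ∈ L, ν y) * (L13.Q p S)⁻¹ := (Finset.sum_mul _ _ _).symm
        _ = (L13.Q p S)⁻¹ := by rw [hν_sumL, one_mul]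
      calc ∑ x : V, ∑ y : V, F x y * ν x * ν y
          = ∑ x ∈ L, ∑ y ∈ L, (f1 x y + f2 x y) := by
            rw [hrestrict]
            exact Finset.sum_congr rfl fun x hx => Finset.sum_congr rfl fun y hy =>
              hsplitpt x hx y hy
      _ = (∑ x ∈ L, ∑ y ∈ L, f1 x y) + (∑ x ∈ L, ∑ y ∈ L, f2 x y) := by
            rw [← Finset.sum_add_distrib]
            exact Finset.sum_congr rfl fun x _ => Finset.sum_add_distrib
      _ = (∑ x ∈ L, ∑ y ∈ L, f1 x y) + (∑ x ∈ L, ∑ y ∈ L, f1 x y) := by rw [hf2f1]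
      _ = 2 * (∑ x ∈ L, ∑ y ∈ L, f1 x y) := (two_mul _).symm
      _ ≤ 2 * (L13.Q p S)⁻¹ := mul_le_mul_right hf1bound _
    -- conclude
    have hcap : (2 * (L13.Q p S)⁻¹)⁻¹ ≤ capK F {x | IsLeaf ρ par x} := by
      rw [capK]
      apply ENNReal.inv_le_inv.2
      refine iInf_le_of_le ⟨ν, hν_sum, fun y hy => hν_supp y hy⟩ ?_
      simp only [tsum_fintype]
      exact hEn
    calc L13.Q p S = 2 * (2⁻¹ * L13.Q p S) := by
          rw [← mul_assoc, ENNReal.mul_inv_cancel two_ne_zero ofNat_ne_top, one_mul]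
    _ = 2 * (2 * (L13.Q p S)⁻¹)⁻¹ := by
          rw [ENNReal.mul_inv (Or.inl two_ne_zero) (Or.inl ofNat_ne_top), inv_inv]
    _ ≤ 2 * capK F {x | IsLeaf ρ par x} := mul_le_mul_right hcap _
end
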